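/- arXiv:1511.01025 — 8 statements merged into one kernel-verified Lean document; each statement's English description precedes it below -/
import Mathlib

section
/- A finite simple graph G is a color-line graph if and only if there exists a family Q of cliques of G such that: (a) every vertex of G belongs to at most three members of Q, and every edge of G has both endpoints contained in at least one and in at most two members of Q; and (b) letting F be the set of edges of G whose endpoints are contained in exactly two members of Q and W the set of vertices of G belonging to exactly three members of Q, there exist maps e ↦ Q_e from F to Q and v ↦ Q_v from W to Q such that (b1) for every edge e ∈ F both endpoints of e lie in Q_e, and every v ∈ W satisfies v ∈ Q_v, and (b2) for all x, y ∈ F ∪ W: if x is contained in Q_y (for an edge x this means both endpoints of x lie in Q_y) then Q_x = Q_y, and otherwise Q_x ∩ Q_y = ∅. -/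
open SimpleGraph

/-- The color-line graph `CL(H)` of an edge-colored graph `(H, φ)`: vertices are the edges
of `H`, and two distinct edges are adjacent iff they share an endpoint or have equal colors. -/
def colorLineGraph {V C : Type*} (H : SimpleGraph V) (φ : H.edgeSet → C) :
    SimpleGraph H.edgeSet where
  Adj e f := e ≠ f ∧
    ((∃ v, v ∈ (e : Sym2 V) ∧ v ∈ (f : Sym2 V)) ∨ φ e = φ f)
  symm := by
    constructor
    rintro e f ⟨hne, h⟩
    refine ⟨hne.symm, ?_⟩
    rcases h with ⟨v, hv1, hv2⟩ | h
    · exact Or.inl ⟨v, hv2, hv1⟩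
    · exact Or.inr h.symm
  loopless := by constructor; rintro e ⟨hne, -⟩; exact hne rfl

/-- An edge coloring is proper if distinct edges sharing an endpoint get distinct colors. -/
def IsProperEdgeColoring {V C : Type*} (H : SimpleGraph V) (φ : H.edgeSet → C) : Prop :=
  ∀ e f : H.edgeSet, e ≠ f → (∃ v, v ∈ (e : Sym2 V) ∧ v ∈ (f : Sym2 V)) → φ e ≠ φ f

/-- `G` is a color-line graph: `G ≅ CL(H)` for some finite edge-colored graph `H`. -/
def IsColorLineGraph {α : Type*} (G : SimpleGraph α) : Prop :=
  ∃ (V C : Type) (_ : Fintype V) (H : SimpleGraph V) (φ : H.edgeSet → C),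
    Nonempty (G ≃g colorLineGraph H φ)

/-- `G` is a proper color-line graph: `G ≅ CL(H)` for some finite properly
edge-colored graph `H`. -/
def IsProperColorLineGraph {α : Type*} (G : SimpleGraph α) : Prop :=
  ∃ (V C : Type) (_ : Fintype V) (H : SimpleGraph V) (φ : H.edgeSet → C),
    IsProperEdgeColoring H φ ∧ Nonempty (G ≃g colorLineGraph H φ)

/-- `G` is a `k`-color-line graph: `G ≅ CL(H)` for some finite graph `H`
edge-colored with at most `k` colors. -/
def IsKColorLineGraph (k : ℕ) {α : Type*} (G : SimpleGraph α) : Prop :=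
  ∃ (V : Type) (_ : Fintype V) (H : SimpleGraph V) (φ : H.edgeSet → Fin k),
    Nonempty (G ≃g colorLineGraph H φ)

/-- `G` is a proper `k`-color-line graph: `G ≅ CL(H)` for some finite graph `H`
properly edge-colored with at most `k` colors. -/
def IsProperKColorLineGraph (k : ℕ) {α : Type*} (G : SimpleGraph α) : Prop :=
  ∃ (V : Type) (_ : Fintype V) (H : SimpleGraph V) (φ : H.edgeSet → Fin k),
    IsProperEdgeColoring H φ ∧ Nonempty (G ≃g colorLineGraph H φ)

/-- `G` is a line graph: `G ≅ L(H)` for some finite graph `H`. -/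
def IsLineGraph {α : Type*} (G : SimpleGraph α) : Prop :=
  ∃ (V : Type) (_ : Fintype V) (H : SimpleGraph V), Nonempty (G ≃g H.lineGraph)

variable {α : Type} [Fintype α] [DecidableEq α]

/-- The members of the family `𝒬` containing both endpoints of the edge `e`. -/
def edgeMembers (𝒬 : Finset (Finset α)) (e : Sym2 α) : Finset (Finset α) :=
  𝒬.filter (fun Q => ∀ x ∈ e, x ∈ Q)

/-- The members of the family `𝒬` containing the vertex `v`. -/
def vertMembers (𝒬 : Finset (Finset α)) (v : α) : Finset (Finset α) :=
  𝒬.filter (fun Q => v ∈ Q)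

set_option linter.unusedSectionVars false
set_option linter.unusedVariables false

lemma mem_edgeMembers {𝒬 : Finset (Finset α)} {e : Sym2 α} {Q : Finset α} :
    Q ∈ edgeMembers 𝒬 e ↔ Q ∈ 𝒬 ∧ ∀ x ∈ e, x ∈ Q := Finset.mem_filter

lemma mem_vertMembers {𝒬 : Finset (Finset α)} {v : α} {Q : Finset α} :
    Q ∈ vertMembers 𝒬 v ↔ Q ∈ 𝒬 ∧ v ∈ Q := Finset.mem_filter

section Forward
variable {V C : Type}
variable (H : SimpleGraph V) (φ : H.edgeSet → C) (g : α → H.edgeSet)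

open Classical in
noncomputable def Sstar (u : V) : Finset α :=
  Finset.univ.filter (fun b => u ∈ ((g b : Sym2 V)))

open Classical in
noncomputable def Scl (a : α) : Finset α :=
  Finset.univ.filter (fun b => φ (g b) = φ (g a))

open Classical in
noncomputable def fam : Finset (Finset α) :=
  Finset.univ.biUnion (fun a =>
    {Sstar H g ((g a : Sym2 V)).out.1, Sstar H g ((g a : Sym2 V)).out.2, Scl H φ g a})

variable {H φ g}

lemma mem_Sstar {u : V} {b : α} : b ∈ Sstar H g u ↔ u ∈ ((g b : Sym2 V)) := by
  classical simp [Sstar]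

lemma mem_Scl {a b : α} : b ∈ Scl H φ g a ↔ φ (g b) = φ (g a) := by
  classical simp [Scl]

lemma Scl_eq_of_mem {a b : α} (h : b ∈ Scl H φ g a) : Scl H φ g b = Scl H φ g a := by
  classical
  rw [mem_Scl] at h
  unfold Scl
  ext c
  simp [h]

lemma sym2_out_cases {β : Type*} {e : Sym2 β} {u : β} (h : u ∈ e) :
    u = e.out.1 ∨ u = e.out.2 := by
  rw [show e = s(e.out.1, e.out.2) by conv_lhs => rw [← e.out_eq]] at h
  exact Sym2.mem_iff.mp h

lemma Sstar_mem_fam {u : V} {b : α} (hub : u ∈ ((g b : Sym2 V))) :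
    Sstar H g u ∈ fam H φ g := by
  classical
  rcases sym2_out_cases hub with h | h <;>
  · subst h
    simp [fam]
    exact ⟨b, by tauto⟩

lemma Scl_mem_fam (a : α) : Scl H φ g a ∈ fam H φ g := by
  classical
  simp [fam]
  exact ⟨a, by tauto⟩

lemma mem_fam {Q : Finset α} (h : Q ∈ fam H φ g) :
    (∃ u b, u ∈ ((g b : Sym2 V)) ∧ Q = Sstar H g u) ∨ ∃ a, Q = Scl H φ g a := by
  classical
  simp only [fam, Finset.mem_biUnion, Finset.mem_univ, true_and, Finset.mem_insert,
    Finset.mem_singleton] at h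
  obtain ⟨a, h | h | h⟩ := h
  · exact Or.inl ⟨_, a, Sym2.out_fst_mem _, h⟩
  · exact Or.inl ⟨_, a, Sym2.out_snd_mem _, h⟩
  · exact Or.inr ⟨a, h⟩

variable {G : SimpleGraph α} (hinj : Function.Injective g)
variable (hadj : ∀ a b : α, G.Adj a b ↔ (g a ≠ g b ∧
    ((∃ v, v ∈ ((g a : Sym2 V)) ∧ v ∈ ((g b : Sym2 V))) ∨ φ (g a) = φ (g b))))

include hinj hadj

lemma fam_clique {Q : Finset α} (hQ : Q ∈ fam H φ g) : G.IsClique (Q : Set α) := by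
  intro a ha b hb hne
  simp only [Finset.mem_coe] at ha hb
  rcases mem_fam hQ with ⟨u, c, _, rfl⟩ | ⟨c, rfl⟩
  · rw [mem_Sstar] at ha hb
    exact (hadj a b).mpr ⟨fun h => hne (hinj h), Or.inl ⟨u, ha, hb⟩⟩
  · rw [mem_Scl] at ha hb
    exact (hadj a b).mpr ⟨fun h => hne (hinj h), Or.inr (ha.trans hb.symm)⟩

lemma vertMembers_sub (a : α) :
    vertMembers (fam H φ g) a ⊆
      {Sstar H g ((g a : Sym2 V)).out.1, Sstar H g ((g a : Sym2 V)).out.2, Scl H φ g a} := by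
  intro Q hQ
  rw [mem_vertMembers] at hQ
  obtain ⟨hQf, haQ⟩ := hQ
  simp only [Finset.mem_insert, Finset.mem_singleton]
  rcases mem_fam hQf with ⟨u, c, _, rfl⟩ | ⟨c, rfl⟩
  · rw [mem_Sstar] at haQ
    rcases sym2_out_cases haQ with h | h <;> subst h
    · tauto
    · tauto
  · exact Or.inr (Or.inr (Scl_eq_of_mem haQ).symm)

lemma vertMembers_card_le (a : α) : (vertMembers (fam H φ g) a).card ≤ 3 :=
  le_trans (Finset.card_le_card (vertMembers_sub hinj hadj a)) (Finset.card_le_three)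

lemma edgeMembers_cases {a b : α} (hab : G.Adj a b) {Q : Finset α}
    (hQ : Q ∈ edgeMembers (fam H φ g) s(a, b)) :
    (∃ u, u ∈ ((g a : Sym2 V)) ∧ u ∈ ((g b : Sym2 V)) ∧ Q = Sstar H g u) ∨ Q = Scl H φ g a := by
  rw [mem_edgeMembers] at hQ
  obtain ⟨hQf, hall⟩ := hQ
  rw [Sym2.ball] at hall
  obtain ⟨haQ, hbQ⟩ := hall
  rcases mem_fam hQf with ⟨u, c, _, rfl⟩ | ⟨c, rfl⟩
  · rw [mem_Sstar] at haQ hbQ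
    exact Or.inl ⟨u, haQ, hbQ, rfl⟩
  · exact Or.inr (Scl_eq_of_mem haQ).symm

lemma star_vertex_unique {a b : α} (hab : G.Adj a b) {u u' : V}
    (h1 : u ∈ ((g a : Sym2 V))) (h2 : u ∈ ((g b : Sym2 V)))
    (h3 : u' ∈ ((g a : Sym2 V))) (h4 : u' ∈ ((g b : Sym2 V))) : u = u' := by
  by_contra hne
  exact hab.ne (hinj (Subtype.ext (Sym2.eq_of_ne_mem hne h1 h3 h2 h4)))

lemma edgeMembers_card_le_two {a b : α} (hab : G.Adj a b) :
    (edgeMembers (fam H φ g) s(a, b)).card ≤ 2 := by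
  by_cases hex : ∃ u, u ∈ ((g a : Sym2 V)) ∧ u ∈ ((g b : Sym2 V))
  · obtain ⟨u, hu1, hu2⟩ := hex
    refine le_trans (Finset.card_le_card (fun Q hQ => ?_))
      (Finset.card_le_two (a := Sstar H g u) (b := Scl H φ g a))
    rcases edgeMembers_cases hinj hadj hab hQ with ⟨u', h1, h2, rfl⟩ | rfl
    · rw [star_vertex_unique hinj hadj hab h1 h2 hu1 hu2]; simp
    · simp
  · refine le_trans (Finset.card_le_card (fun Q hQ => ?_))
      (Finset.card_le_two (a := Scl H φ g a) (b := Scl H φ g a))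
    rcases edgeMembers_cases hinj hadj hab hQ with ⟨u', h1, h2, rfl⟩ | rfl
    · exact absurd ⟨u', h1, h2⟩ hex
    · simp

lemma edgeMembers_card_pos {a b : α} (hab : G.Adj a b) :
    1 ≤ (edgeMembers (fam H φ g) s(a, b)).card := by
  rw [Nat.one_le_iff_ne_zero, ← Nat.pos_iff_ne_zero, Finset.card_pos]
  obtain ⟨-, ⟨u, hu1, hu2⟩ | hcol⟩ := (hadj a b).mp hab
  · exact ⟨Sstar H g u, mem_edgeMembers.mpr ⟨Sstar_mem_fam hu1,
      by rw [Sym2.ball, mem_Sstar, mem_Sstar]; exact ⟨hu1, hu2⟩⟩⟩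
  · exact ⟨Scl H φ g a, mem_edgeMembers.mpr ⟨Scl_mem_fam a,
      by rw [Sym2.ball, mem_Scl, mem_Scl]; exact ⟨rfl, hcol.symm⟩⟩⟩

lemma colors_eq_of_card_two {a b : α} (hab : G.Adj a b)
    (h2 : (edgeMembers (fam H φ g) s(a, b)).card = 2) : φ (g a) = φ (g b) := by
  by_contra hne
  have hsub : ∀ Q ∈ edgeMembers (fam H φ g) s(a, b),
      ∃ u, u ∈ ((g a : Sym2 V)) ∧ u ∈ ((g b : Sym2 V)) ∧ Q = Sstar H g u := by
    intro Q hQ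
    rcases edgeMembers_cases hinj hadj hab hQ with h | rfl
    · exact h
    · exfalso
      rw [mem_edgeMembers, Sym2.ball, mem_Scl, mem_Scl] at hQ
      exact hne (hQ.2.2.symm)
  have hle : (edgeMembers (fam H φ g) s(a, b)).card ≤ 1 := by
    by_cases hex : ∃ u, u ∈ ((g a : Sym2 V)) ∧ u ∈ ((g b : Sym2 V))
    · obtain ⟨u, hu1, hu2⟩ := hex
      refine le_trans (Finset.card_le_card (fun Q hQ => ?_)) (by simp : ({Sstar H g u} : Finset (Finset α)).card ≤ 1)
      obtain ⟨u', h1, h2', rfl⟩ := hsub Q hQ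
      rw [star_vertex_unique hinj hadj hab h1 h2' hu1 hu2]; simp
    · refine le_trans (Finset.card_le_card (fun Q hQ => ?_)) (by simp : (∅ : Finset (Finset α)).card ≤ 1)
      obtain ⟨u', h1, h2', rfl⟩ := hsub Q hQ
      exact absurd ⟨u', h1, h2'⟩ hex
  omega

omit hinj hadj in
lemma Scl_out_eq {a b : α} (hcol : φ (g a) = φ (g b)) :
    Scl H φ g (s(a, b) : Sym2 α).out.1 = Scl H φ g a := by
  rcases Sym2.mem_iff.mp (Sym2.out_fst_mem s(a, b)) with h | h
  · rw [h]
  · rw [h]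
    exact Scl_eq_of_mem (mem_Scl.mpr hcol.symm)

lemma endpoints_mem_QE {a b : α} (hab : G.Adj a b)
    (h2 : (edgeMembers (fam H φ g) s(a, b)).card = 2) :
    ∀ x ∈ s(a, b), x ∈ Scl H φ g (s(a, b) : Sym2 α).out.1 := by
  have hcol := colors_eq_of_card_two hinj hadj hab h2
  rw [Sym2.ball, Scl_out_eq (φ := φ) (g := g) hcol, mem_Scl, mem_Scl]
  exact ⟨rfl, hcol.symm⟩

end Forward

section Fwd2
variable {V C : Type}
variable {H : SimpleGraph V} {φ : H.edgeSet → C} {g : α → H.edgeSet}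
variable {G : SimpleGraph α} (hinj : Function.Injective g)
variable (hadj : ∀ a b : α, G.Adj a b ↔ (g a ≠ g b ∧
    ((∃ v, v ∈ ((g a : Sym2 V)) ∧ v ∈ ((g b : Sym2 V))) ∨ φ (g a) = φ (g b))))

lemma Scl_eq_of_not_disjoint {a b : α} (h : ¬ Disjoint (Scl H φ g a) (Scl H φ g b)) :
    Scl H φ g a = Scl H φ g b := by
  obtain ⟨c, hc1, hc2⟩ := Finset.not_disjoint_iff.mp h
  rw [← Scl_eq_of_mem hc1, ← Scl_eq_of_mem hc2]

include hinj hadj in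
theorem forward_dir :
      ∃ 𝒬 : Finset (Finset α),
        (∀ Q ∈ 𝒬, G.IsClique (Q : Set α)) ∧
        (∀ v : α, (vertMembers 𝒬 v).card ≤ 3) ∧
        (∀ e ∈ G.edgeSet,
          1 ≤ (edgeMembers 𝒬 e).card ∧ (edgeMembers 𝒬 e).card ≤ 2) ∧
        ∃ (QE : Sym2 α → Finset α) (QW : α → Finset α),
          (∀ e ∈ G.edgeSet, (edgeMembers 𝒬 e).card = 2 →
            QE e ∈ 𝒬 ∧ ∀ x ∈ e, x ∈ QE e) ∧
          (∀ v : α, (vertMembers 𝒬 v).card = 3 →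
            QW v ∈ 𝒬 ∧ v ∈ QW v) ∧
          (∀ e ∈ G.edgeSet, (edgeMembers 𝒬 e).card = 2 →
            ∀ f ∈ G.edgeSet, (edgeMembers 𝒬 f).card = 2 →
              ((∀ x ∈ e, x ∈ QE f) → QE e = QE f) ∧
              (¬ (∀ x ∈ e, x ∈ QE f) → Disjoint (QE e) (QE f))) ∧
          (∀ e ∈ G.edgeSet, (edgeMembers 𝒬 e).card = 2 →
            ∀ v : α, (vertMembers 𝒬 v).card = 3 →
              ((∀ x ∈ e, x ∈ QW v) → QE e = QW v) ∧
              (¬ (∀ x ∈ e, x ∈ QW v) → Disjoint (QE e) (QW v))) ∧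
          (∀ v : α, (vertMembers 𝒬 v).card = 3 →
            ∀ e ∈ G.edgeSet, (edgeMembers 𝒬 e).card = 2 →
              ((v ∈ QE e) → QW v = QE e) ∧
              ((v ∉ QE e) → Disjoint (QW v) (QE e))) ∧
          (∀ u : α, (vertMembers 𝒬 u).card = 3 →
            ∀ v : α, (vertMembers 𝒬 v).card = 3 →
              ((u ∈ QW v) → QW u = QW v) ∧
              ((u ∉ QW v) → Disjoint (QW u) (QW v))) := by
  refine ⟨fam H φ g, fun Q hQ => fam_clique hinj hadj hQ, vertMembers_card_le hinj hadj, ?_, ?_⟩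
  · intro e he
    induction e using Sym2.ind with
    | _ a b =>
      have hab : G.Adj a b := (SimpleGraph.mem_edgeSet _).mp he
      exact ⟨edgeMembers_card_pos hinj hadj hab, edgeMembers_card_le_two hinj hadj hab⟩
  refine ⟨fun e => Scl H φ g e.out.1, fun v => Scl H φ g v, ?_, ?_, ?_, ?_, ?_, ?_⟩
  · intro e he h2
    induction e using Sym2.ind with
    | _ a b =>
      exact ⟨Scl_mem_fam _, endpoints_mem_QE hinj hadj ((SimpleGraph.mem_edgeSet _).mp he) h2⟩
  · intro v _
    exact ⟨Scl_mem_fam v, mem_Scl.mpr rfl⟩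
  · intro e he h2 f hf hf2
    constructor
    · intro h
      exact Scl_eq_of_mem (h _ (Sym2.out_fst_mem e))
    · intro h
      by_contra hd
      refine h ?_
      induction e using Sym2.ind with
      | _ a b =>
        intro x hx
        show x ∈ Scl H φ g (Quot.out f).1
        exact (Scl_eq_of_not_disjoint hd) ▸
          endpoints_mem_QE hinj hadj ((SimpleGraph.mem_edgeSet _).mp he) h2 x hx
  · intro e he h2 v _
    constructor
    · intro h
      exact Scl_eq_of_mem (h _ (Sym2.out_fst_mem e))
    · intro h
      by_contra hd
      refine h ?_
      induction e using Sym2.ind with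
      | _ a b =>
        intro x hx
        show x ∈ Scl H φ g v
        exact (Scl_eq_of_not_disjoint hd) ▸
          endpoints_mem_QE hinj hadj ((SimpleGraph.mem_edgeSet _).mp he) h2 x hx
  · intro v _ e he h2
    constructor
    · intro h
      exact Scl_eq_of_mem h
    · intro h
      by_contra hd
      refine h ?_
      show v ∈ Scl H φ g (Quot.out e).1
      exact (Scl_eq_of_not_disjoint hd) ▸ mem_Scl.mpr rfl
  · intro u _ v _
    constructor
    · intro h
      exact Scl_eq_of_mem h
    · intro h
      by_contra hd
      refine h ?_
      show u ∈ Scl H φ g v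
      exact (Scl_eq_of_not_disjoint hd) ▸ mem_Scl.mpr rfl

end Fwd2

section Backward

variable (G : SimpleGraph α) (𝒬 : Finset (Finset α))
variable (QE : Sym2 α → Finset α) (QW : α → Finset α)

def PP (Q : Finset α) : Prop :=
  (∃ v, (vertMembers 𝒬 v).card = 3 ∧ QW v = Q) ∨
  (∃ e ∈ G.edgeSet, (edgeMembers 𝒬 e).card = 2 ∧ QE e = Q)

open Classical in
noncomputable def Dset (a : α) : Finset (Finset α) :=
  (vertMembers 𝒬 a).filter (PP G 𝒬 QE QW)

noncomputable def Sset (a : α) : Finset (Finset α) :=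
  vertMembers 𝒬 a \ Dset G 𝒬 QE QW a

noncomputable def hedge (a : α) : Sym2 (Finset α ⊕ α × Bool) :=
  match (Sset G 𝒬 QE QW a).toList with
  | [Q1, Q2] => s(Sum.inl Q1, Sum.inl Q2)
  | [Q] => s(Sum.inl Q, Sum.inr (a, false))
  | _ => s(Sum.inr (a, false), Sum.inr (a, true))

noncomputable def colf (a : α) : Finset α ⊕ α :=
  if h : (Dset G 𝒬 QE QW a).Nonempty then Sum.inl h.choose else Sum.inr a

variable {G 𝒬 QE QW}

lemma mem_Dset {a : α} {Q : Finset α} :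
    Q ∈ Dset G 𝒬 QE QW a ↔ (Q ∈ 𝒬 ∧ a ∈ Q) ∧ PP G 𝒬 QE QW Q := by
  classical
  rw [Dset, Finset.mem_filter, mem_vertMembers]

lemma mem_Sset {a : α} {Q : Finset α} :
    Q ∈ Sset G 𝒬 QE QW a ↔ (Q ∈ 𝒬 ∧ a ∈ Q) ∧ Q ∉ Dset G 𝒬 QE QW a := by
  rw [Sset, Finset.mem_sdiff, mem_vertMembers]

lemma Dset_mono {a b : α} {Q : Finset α} (h : Q ∈ Dset G 𝒬 QE QW a) (hb : b ∈ Q) :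
    Q ∈ Dset G 𝒬 QE QW b := by
  rw [mem_Dset] at h ⊢
  exact ⟨⟨h.1.1, hb⟩, h.2⟩

section Hyps
variable (hcl : ∀ Q ∈ 𝒬, G.IsClique (Q : Set α))
  (hv3 : ∀ v : α, (vertMembers 𝒬 v).card ≤ 3)
  (he12 : ∀ e ∈ G.edgeSet, 1 ≤ (edgeMembers 𝒬 e).card ∧ (edgeMembers 𝒬 e).card ≤ 2)
  (hQE : ∀ e ∈ G.edgeSet, (edgeMembers 𝒬 e).card = 2 → QE e ∈ 𝒬 ∧ ∀ x ∈ e, x ∈ QE e)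
  (hQW : ∀ v : α, (vertMembers 𝒬 v).card = 3 → QW v ∈ 𝒬 ∧ v ∈ QW v)
  (hEE : ∀ e ∈ G.edgeSet, (edgeMembers 𝒬 e).card = 2 →
            ∀ f ∈ G.edgeSet, (edgeMembers 𝒬 f).card = 2 →
              ((∀ x ∈ e, x ∈ QE f) → QE e = QE f) ∧
              (¬ (∀ x ∈ e, x ∈ QE f) → Disjoint (QE e) (QE f)))
  (hEW : ∀ e ∈ G.edgeSet, (edgeMembers 𝒬 e).card = 2 →
            ∀ v : α, (vertMembers 𝒬 v).card = 3 →
              ((∀ x ∈ e, x ∈ QW v) → QE e = QW v) ∧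
              (¬ (∀ x ∈ e, x ∈ QW v) → Disjoint (QE e) (QW v)))
  (hWE : ∀ v : α, (vertMembers 𝒬 v).card = 3 →
            ∀ e ∈ G.edgeSet, (edgeMembers 𝒬 e).card = 2 →
              ((v ∈ QE e) → QW v = QE e) ∧
              ((v ∉ QE e) → Disjoint (QW v) (QE e)))
  (hWW : ∀ u : α, (vertMembers 𝒬 u).card = 3 →
            ∀ v : α, (vertMembers 𝒬 v).card = 3 →
              ((u ∈ QW v) → QW u = QW v) ∧
              ((u ∉ QW v) → Disjoint (QW u) (QW v)))

include hEE hEW hWE hWW in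
lemma PP_unique {a : α} {Q Q' : Finset α} (hP : PP G 𝒬 QE QW Q) (hP' : PP G 𝒬 QE QW Q')
    (ha : a ∈ Q) (ha' : a ∈ Q') : Q = Q' := by
  rcases hP with ⟨v, hv, rfl⟩ | ⟨e, he, hee2, rfl⟩ <;>
    rcases hP' with ⟨u, hu, rfl⟩ | ⟨f, hf, hf2, rfl⟩
  · by_cases h : v ∈ QW u
    · exact ((hWW v hv u hu).1 h)
    · exact absurd (Finset.disjoint_left.mp ((hWW v hv u hu).2 h) ha) (fun hh => hh ha')
  · by_cases h : v ∈ QE f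
    · exact ((hWE v hv f hf hf2).1 h)
    · exact absurd ha' (Finset.disjoint_left.mp ((hWE v hv f hf hf2).2 h) ha)
  · by_cases h : u ∈ QE e
    · exact ((hWE u hu e he hee2).1 h).symm
    · exact absurd ha (Finset.disjoint_left.mp ((hWE u hu e he hee2).2 h) ha')
  · by_cases h : ∀ x ∈ e, x ∈ QE f
    · exact (hEE e he hee2 f hf hf2).1 h
    · exact absurd ha' (Finset.disjoint_left.mp ((hEE e he hee2 f hf hf2).2 h) ha)

include hEE hEW hWE hWW in
lemma Dset_unique {a : α} {Q Q' : Finset α}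
    (h : Q ∈ Dset G 𝒬 QE QW a) (h' : Q' ∈ Dset G 𝒬 QE QW a) : Q = Q' := by
  rw [mem_Dset] at h h'
  exact PP_unique hEE hEW hWE hWW h.2 h'.2 h.1.2 h'.1.2

include hv3 hQW in
lemma Sset_card_le (a : α) : (Sset G 𝒬 QE QW a).card ≤ 2 := by
  by_cases h3 : (vertMembers 𝒬 a).card = 3
  · have hmem : QW a ∈ Dset G 𝒬 QE QW a :=
      mem_Dset.mpr ⟨⟨(hQW a h3).1, (hQW a h3).2⟩, Or.inl ⟨a, h3, rfl⟩⟩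
    have hsub : Dset G 𝒬 QE QW a ⊆ vertMembers 𝒬 a := fun Q hQ =>
      mem_vertMembers.mpr ⟨(mem_Dset.mp hQ).1.1, (mem_Dset.mp hQ).1.2⟩
    rw [Sset, Finset.card_sdiff_of_subset hsub, h3]
    have : 1 ≤ (Dset G 𝒬 QE QW a).card := Finset.card_pos.mpr ⟨_, hmem⟩
    omega
  · have : (Sset G 𝒬 QE QW a).card ≤ (vertMembers 𝒬 a).card :=
      Finset.card_le_card (Finset.sdiff_subset)
    have := hv3 a
    omega


lemma hedge_spec (a : α) :
    (∃ Q1 Q2, Q1 ≠ Q2 ∧ Sset G 𝒬 QE QW a = {Q1, Q2} ∧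
      hedge G 𝒬 QE QW a = s(Sum.inl Q1, Sum.inl Q2)) ∨
    (∃ Q, Sset G 𝒬 QE QW a = {Q} ∧
      hedge G 𝒬 QE QW a = s(Sum.inl Q, Sum.inr (a, false))) ∨
    (hedge G 𝒬 QE QW a = s(Sum.inr (a, false), Sum.inr (a, true)) ∧
      (Sset G 𝒬 QE QW a = ∅ ∨ 3 ≤ (Sset G 𝒬 QE QW a).card)) := by
  have hnd := (Sset G 𝒬 QE QW a).nodup_toList
  have hlen := (Sset G 𝒬 QE QW a).length_toList
  have hset := (Sset G 𝒬 QE QW a).toList_toFinset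
  rcases hl : (Sset G 𝒬 QE QW a).toList with _ | ⟨Q1, _ | ⟨Q2, _ | ⟨Q3, t⟩⟩⟩
  · refine Or.inr (Or.inr ⟨?_, Or.inl ?_⟩)
    · unfold hedge; rw [hl]
    · rw [hl] at hset; simpa using hset.symm
  · refine Or.inr (Or.inl ⟨Q1, ?_, ?_⟩)
    · rw [hl] at hset; simpa using hset.symm
    · unfold hedge; rw [hl]
  · refine Or.inl ⟨Q1, Q2, ?_, ?_, ?_⟩
    · rw [hl] at hnd; simp at hnd; exact hnd
    · rw [hl] at hset; simpa using hset.symm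
    · unfold hedge; rw [hl]
  · refine Or.inr (Or.inr ⟨?_, Or.inr ?_⟩)
    · unfold hedge; rw [hl]
    · rw [hl] at hlen; simp at hlen; omega

lemma inr_mem_hedge {a x : α} {i : Bool} (h : Sum.inr (x, i) ∈ hedge G 𝒬 QE QW a) : x = a := by
  rcases hedge_spec (G := G) (𝒬 := 𝒬) (QE := QE) (QW := QW) a with
    ⟨Q1, Q2, _, _, he⟩ | ⟨Q, _, he⟩ | ⟨he, _⟩ <;> rw [he] at h <;> simp at h <;> tauto

lemma mem_inl_hedge {a : α} {Q : Finset α} (hcard : (Sset G 𝒬 QE QW a).card ≤ 2) :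
    Sum.inl Q ∈ hedge G 𝒬 QE QW a ↔ Q ∈ Sset G 𝒬 QE QW a := by
  rcases hedge_spec (G := G) (𝒬 := 𝒬) (QE := QE) (QW := QW) a with
    ⟨Q1, Q2, hne, hs, he⟩ | ⟨Q1, hs, he⟩ | ⟨he, hz⟩
  · rw [he, hs]; simp
  · rw [he, hs]; simp
  · rcases hz with hz | hz
    · rw [he, hz]; simp
    · omega

lemma hedge_not_diag (a : α) : ¬ (hedge G 𝒬 QE QW a).IsDiag := by
  rcases hedge_spec (G := G) (𝒬 := 𝒬) (QE := QE) (QW := QW) a with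
    ⟨Q1, Q2, hne, hs, he⟩ | ⟨Q, hs, he⟩ | ⟨he, hz⟩
  · rw [he]; simp [hne]
  · rw [he]; simp
  · rw [he]; simp


include hcl hv3 he12 hQE in
lemma hedge_inj : Function.Injective (hedge G 𝒬 QE QW) := by
  intro a b h
  by_contra hab
  rcases hedge_spec (G := G) (𝒬 := 𝒬) (QE := QE) (QW := QW) b with
    ⟨R1, R2, hRne, hRs, hRe⟩ | ⟨R, hRs, hRe⟩ | ⟨hRe, hRz⟩
  · rcases hedge_spec (G := G) (𝒬 := 𝒬) (QE := QE) (QW := QW) a with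
      ⟨Q1, Q2, hQne, hQs, hQe⟩ | ⟨Q, hQs, hQe⟩ | ⟨hQe, hQz⟩
    · -- both have two inl endpoints
      rw [hQe, hRe] at h
      have hset : Sset G 𝒬 QE QW a = Sset G 𝒬 QE QW b := by
        rw [hQs, hRs]
        rcases Sym2.eq_iff.mp h with ⟨h1, h2⟩ | ⟨h1, h2⟩
        · rw [Sum.inl.inj h1, Sum.inl.inj h2]
        · rw [Sum.inl.inj h1, Sum.inl.inj h2, Finset.pair_comm]
      have hQ1a : Q1 ∈ Sset G 𝒬 QE QW a := by rw [hQs]; simp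
      have hQ2a : Q2 ∈ Sset G 𝒬 QE QW a := by rw [hQs]; simp
      have hQ1b : Q1 ∈ Sset G 𝒬 QE QW b := hset ▸ hQ1a
      have hQ2b : Q2 ∈ Sset G 𝒬 QE QW b := hset ▸ hQ2a
      obtain ⟨⟨hQ1Q, haQ1⟩, hQ1nD⟩ := mem_Sset.mp hQ1a
      obtain ⟨⟨hQ2Q, haQ2⟩, hQ2nD⟩ := mem_Sset.mp hQ2a
      obtain ⟨⟨-, hbQ1⟩, -⟩ := mem_Sset.mp hQ1b
      obtain ⟨⟨-, hbQ2⟩, -⟩ := mem_Sset.mp hQ2b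
      have hadjab : G.Adj a b := hcl Q1 hQ1Q (Finset.mem_coe.mpr haQ1) (Finset.mem_coe.mpr hbQ1) hab
      have hEdge : s(a, b) ∈ G.edgeSet := (SimpleGraph.mem_edgeSet _).mpr hadjab
      have hsub : ({Q1, Q2} : Finset (Finset α)) ⊆ edgeMembers 𝒬 s(a, b) := by
        intro Q hQ
        rcases Finset.mem_insert.mp hQ with rfl | hQ
        · exact mem_edgeMembers.mpr ⟨hQ1Q, fun x hx => by
            rcases Sym2.mem_iff.mp hx with rfl | rfl <;> assumption⟩
        · rw [Finset.mem_singleton] at hQ; subst hQ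
          exact mem_edgeMembers.mpr ⟨hQ2Q, fun x hx => by
            rcases Sym2.mem_iff.mp hx with rfl | rfl <;> assumption⟩
      have hpair : ({Q1, Q2} : Finset (Finset α)).card = 2 := Finset.card_pair hQne
      have hc2 : (edgeMembers 𝒬 s(a, b)).card = 2 := by
        have h1 := Finset.card_le_card hsub
        have h2 := (he12 _ hEdge).2
        omega
      have heq : ({Q1, Q2} : Finset (Finset α)) = edgeMembers 𝒬 s(a, b) :=
        Finset.eq_of_subset_of_card_le hsub (by omega)
      obtain ⟨hQEQ, hQEx⟩ := hQE _ hEdge hc2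
      have hQED : QE s(a, b) ∈ Dset G 𝒬 QE QW a :=
        mem_Dset.mpr ⟨⟨hQEQ, hQEx a (Sym2.mem_mk_left a b)⟩, Or.inr ⟨s(a, b), hEdge, hc2, rfl⟩⟩
      have : QE s(a, b) ∈ ({Q1, Q2} : Finset (Finset α)) := by
        rw [heq]
        exact mem_edgeMembers.mpr ⟨hQEQ, hQEx⟩
      rcases Finset.mem_insert.mp this with h' | h'
      · exact hQ1nD (h' ▸ hQED)
      · rw [Finset.mem_singleton] at h'
        exact hQ2nD (h' ▸ hQED)
    · -- a has a pendant endpoint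
      have : Sum.inr (a, false) ∈ hedge G 𝒬 QE QW b := by
        rw [← h, hQe]; exact Sym2.mem_mk_right _ _
      exact hab (inr_mem_hedge this)
    · have : Sum.inr (a, false) ∈ hedge G 𝒬 QE QW b := by
        rw [← h, hQe]; exact Sym2.mem_mk_left _ _
      exact hab (inr_mem_hedge this)
  · have : Sum.inr (b, false) ∈ hedge G 𝒬 QE QW a := by
      rw [h, hRe]; exact Sym2.mem_mk_right _ _
    exact hab ((inr_mem_hedge this).symm)
  · have : Sum.inr (b, false) ∈ hedge G 𝒬 QE QW a := by
      rw [h, hRe]; exact Sym2.mem_mk_left _ _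
    exact hab ((inr_mem_hedge this).symm)

include hEE hEW hWE hWW in
lemma colf_eq_iff {a b : α} :
    colf G 𝒬 QE QW a = colf G 𝒬 QE QW b ↔
      (a = b ∨ ∃ Q, Q ∈ Dset G 𝒬 QE QW a ∧ Q ∈ Dset G 𝒬 QE QW b) := by
  unfold colf
  by_cases h1 : (Dset G 𝒬 QE QW a).Nonempty <;> by_cases h2 : (Dset G 𝒬 QE QW b).Nonempty
  · rw [dif_pos h1, dif_pos h2]
    constructor
    · intro h
      exact Or.inr ⟨h1.choose, h1.choose_spec, Sum.inl.inj h ▸ h2.choose_spec⟩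
    · rintro (rfl | ⟨Q, hQa, hQb⟩)
      · rfl
      · rw [Dset_unique hEE hEW hWE hWW h1.choose_spec hQa,
          Dset_unique hEE hEW hWE hWW h2.choose_spec hQb]
  · rw [dif_pos h1, dif_neg h2]
    simp only [reduceCtorEq, false_iff]
    rintro (rfl | ⟨Q, hQa, hQb⟩)
    · exact h2 h1
    · exact h2 ⟨Q, hQb⟩
  · rw [dif_neg h1, dif_pos h2]
    simp only [reduceCtorEq, false_iff]
    rintro (rfl | ⟨Q, hQa, hQb⟩)
    · exact h1 h2
    · exact h1 ⟨Q, hQa⟩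
  · rw [dif_neg h1, dif_neg h2]
    constructor
    · intro h
      exact Or.inl (Sum.inr.inj h)
    · rintro (rfl | ⟨Q, hQa, hQb⟩)
      · rfl
      · exact absurd ⟨Q, hQa⟩ h1

include he12 hQE in
lemma adj_analysis {a b : α} (hab : G.Adj a b) :
    (∃ Q, Q ∈ Dset G 𝒬 QE QW a ∧ Q ∈ Dset G 𝒬 QE QW b) ∨
    (∃ Q, Q ∈ Sset G 𝒬 QE QW a ∧ Q ∈ Sset G 𝒬 QE QW b) := by
  have hEdge : s(a, b) ∈ G.edgeSet := (SimpleGraph.mem_edgeSet _).mpr hab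
  obtain ⟨hc1, hc2⟩ := he12 _ hEdge
  rcases (by omega : (edgeMembers 𝒬 s(a, b)).card = 1 ∨ (edgeMembers 𝒬 s(a, b)).card = 2)
    with hc | hc
  · obtain ⟨Q, hQ⟩ := Finset.card_eq_one.mp hc
    have hQm : Q ∈ edgeMembers 𝒬 s(a, b) := hQ ▸ Finset.mem_singleton_self Q
    obtain ⟨hQQ, hQx⟩ := mem_edgeMembers.mp hQm
    have haQ : a ∈ Q := hQx a (Sym2.mem_mk_left a b)
    have hbQ : b ∈ Q := hQx b (Sym2.mem_mk_right a b)
    by_cases hD : Q ∈ Dset G 𝒬 QE QW a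
    · exact Or.inl ⟨Q, hD, Dset_mono hD hbQ⟩
    · have hDb : Q ∉ Dset G 𝒬 QE QW b := fun hDb => hD (Dset_mono hDb haQ)
      exact Or.inr ⟨Q, mem_Sset.mpr ⟨⟨hQQ, haQ⟩, hD⟩, mem_Sset.mpr ⟨⟨hQQ, hbQ⟩, hDb⟩⟩
  · obtain ⟨hQEQ, hQEx⟩ := hQE _ hEdge hc
    refine Or.inl ⟨QE s(a, b), ?_, ?_⟩
    · exact mem_Dset.mpr ⟨⟨hQEQ, hQEx a (Sym2.mem_mk_left a b)⟩, Or.inr ⟨_, hEdge, hc, rfl⟩⟩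
    · exact mem_Dset.mpr ⟨⟨hQEQ, hQEx b (Sym2.mem_mk_right a b)⟩, Or.inr ⟨_, hEdge, hc, rfl⟩⟩

include hcl hv3 he12 hQE hQW hEE hEW hWE hWW in
theorem backward_dir : IsColorLineGraph G := by
  classical
  set H : SimpleGraph (Finset α ⊕ α × Bool) :=
    SimpleGraph.fromEdgeSet (Set.range (hedge G 𝒬 QE QW)) with hH
  have hmemE : ∀ e, e ∈ H.edgeSet ↔ ∃ a, hedge G 𝒬 QE QW a = e := by
    intro e
    rw [hH, SimpleGraph.edgeSet_fromEdgeSet]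
    constructor
    · rintro ⟨⟨a, rfl⟩, -⟩
      exact ⟨a, rfl⟩
    · rintro ⟨a, rfl⟩
      exact ⟨⟨a, rfl⟩, hedge_not_diag a⟩
  set f : α → H.edgeSet := fun a => ⟨hedge G 𝒬 QE QW a, (hmemE _).mpr ⟨a, rfl⟩⟩ with hf
  have hbij : Function.Bijective f := by
    constructor
    · intro a b h
      exact hedge_inj hcl hv3 he12 hQE (congrArg Subtype.val h)
    · intro e
      obtain ⟨a, ha⟩ := (hmemE e).mp e.2
      exact ⟨a, Subtype.ext ha⟩
  set eqv : α ≃ H.edgeSet := Equiv.ofBijective f hbij with heqv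
  set φ : H.edgeSet → (Finset α ⊕ α) := fun e => colf G 𝒬 QE QW (eqv.symm e) with hφdef
  have hφ : ∀ a, φ (f a) = colf G 𝒬 QE QW a := by
    intro a
    rw [hφdef]
    exact congrArg _ (eqv.symm_apply_apply a)
  refine ⟨Finset α ⊕ α × Bool, Finset α ⊕ α, inferInstance, H, φ, ⟨⟨eqv, ?_⟩⟩⟩
  intro a b
  show (colorLineGraph H φ).Adj (f a) (f b) ↔ G.Adj a b
  constructor
  · rintro ⟨hne, hshare | hcol⟩
    · have hab : a ≠ b := fun h => hne (congrArg f h)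
      obtain ⟨v, hv1, hv2⟩ := hshare
      have hv1' : v ∈ hedge G 𝒬 QE QW a := hv1
      have hv2' : v ∈ hedge G 𝒬 QE QW b := hv2
      match v with
      | Sum.inr (x, i) =>
        exact absurd ((inr_mem_hedge hv1').symm.trans (inr_mem_hedge hv2')) hab
      | Sum.inl Q =>
        have h1 := (mem_inl_hedge (Sset_card_le hv3 hQW a)).mp hv1'
        have h2 := (mem_inl_hedge (Sset_card_le hv3 hQW b)).mp hv2'
        obtain ⟨⟨hQQ, haQ⟩, -⟩ := mem_Sset.mp h1
        obtain ⟨⟨-, hbQ⟩, -⟩ := mem_Sset.mp h2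
        exact hcl Q hQQ (Finset.mem_coe.mpr haQ) (Finset.mem_coe.mpr hbQ) hab
    · have hab : a ≠ b := fun h => hne (congrArg f h)
      rw [hφ, hφ] at hcol
      rcases (colf_eq_iff hEE hEW hWE hWW).mp hcol with rfl | ⟨Q, hQa, hQb⟩
      · exact absurd rfl hab
      · obtain ⟨⟨hQQ, haQ⟩, -⟩ := mem_Dset.mp hQa
        obtain ⟨⟨-, hbQ⟩, -⟩ := mem_Dset.mp hQb
        exact hcl Q hQQ (Finset.mem_coe.mpr haQ) (Finset.mem_coe.mpr hbQ) hab
  · intro hab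
    refine ⟨fun h => hab.ne (hbij.1 h), ?_⟩
    rcases adj_analysis he12 hQE hab with ⟨Q, h1, h2⟩ | ⟨Q, h1, h2⟩
    · right
      rw [hφ, hφ]
      exact (colf_eq_iff hEE hEW hWE hWW).mpr (Or.inr ⟨Q, h1, h2⟩)
    · left
      exact ⟨Sum.inl Q, (mem_inl_hedge (Sset_card_le hv3 hQW a)).mpr h1,
        (mem_inl_hedge (Sset_card_le hv3 hQW b)).mpr h2⟩

end Hyps
end Backward

/-- Krausz-type characterization for color-line graphs. -/
theorem krausz_colorLine (G : SimpleGraph α) :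
    IsColorLineGraph G ↔
      ∃ 𝒬 : Finset (Finset α),
        -- every member of 𝒬 is a clique of G
        (∀ Q ∈ 𝒬, G.IsClique (Q : Set α)) ∧
        -- (a) every vertex in at most three members, every edge in at least one
        -- and at most two members
        (∀ v : α, (vertMembers 𝒬 v).card ≤ 3) ∧
        (∀ e ∈ G.edgeSet,
          1 ≤ (edgeMembers 𝒬 e).card ∧ (edgeMembers 𝒬 e).card ≤ 2) ∧
        -- (b) the maps e ↦ QE e (on F = edges in exactly two members) and
        -- v ↦ QW v (on W = vertices in exactly three members)
        ∃ (QE : Sym2 α → Finset α) (QW : α → Finset α),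
          (∀ e ∈ G.edgeSet, (edgeMembers 𝒬 e).card = 2 →
            QE e ∈ 𝒬 ∧ ∀ x ∈ e, x ∈ QE e) ∧
          (∀ v : α, (vertMembers 𝒬 v).card = 3 →
            QW v ∈ 𝒬 ∧ v ∈ QW v) ∧
          -- (b2) for x, y ∈ F ∪ W
          (∀ e ∈ G.edgeSet, (edgeMembers 𝒬 e).card = 2 →
            ∀ f ∈ G.edgeSet, (edgeMembers 𝒬 f).card = 2 →
              ((∀ x ∈ e, x ∈ QE f) → QE e = QE f) ∧
              (¬ (∀ x ∈ e, x ∈ QE f) → Disjoint (QE e) (QE f))) ∧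
          (∀ e ∈ G.edgeSet, (edgeMembers 𝒬 e).card = 2 →
            ∀ v : α, (vertMembers 𝒬 v).card = 3 →
              ((∀ x ∈ e, x ∈ QW v) → QE e = QW v) ∧
              (¬ (∀ x ∈ e, x ∈ QW v) → Disjoint (QE e) (QW v))) ∧
          (∀ v : α, (vertMembers 𝒬 v).card = 3 →
            ∀ e ∈ G.edgeSet, (edgeMembers 𝒬 e).card = 2 →
              ((v ∈ QE e) → QW v = QE e) ∧
              ((v ∉ QE e) → Disjoint (QW v) (QE e))) ∧
          (∀ u : α, (vertMembers 𝒬 u).card = 3 →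
            ∀ v : α, (vertMembers 𝒬 v).card = 3 →
              ((u ∈ QW v) → QW u = QW v) ∧
              ((u ∉ QW v) → Disjoint (QW u) (QW v))) := by
  constructor
  · rintro ⟨V, C, hV, H, φ, ⟨iso⟩⟩
    exact forward_dir (g := fun a => iso a) iso.toEquiv.injective
      (fun a b => (iso.map_adj_iff).symm)
  · rintro ⟨𝒬, hcl, hv3, he12, QE, QW, hQE, hQW, hEE, hEW, hWE, hWW⟩
    exact backward_dir hcl hv3 he12 hQE hQW hEE hEW hWE hWW
end

section
/- A finite simple graph G is a proper color-line graph if and only if there exists a family Q of cliques of G such that: (a) every vertex of G belongs to at most three members of Q, and every edge of G has both endpoints contained in exactly one member of Q; and (b) letting W be the set of vertices of G belonging to exactly three members of Q, there exists a map v ↦ Q_v from W to Q such that (b1) v ∈ Q_v for every v ∈ W, and (b2) for all u, v ∈ W: if u ∈ Q_v then Q_u = Q_v, and if u ∉ Q_v then Q_u ∩ Q_v = ∅. -/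
open SimpleGraph

variable {α : Type} [Fintype α] [DecidableEq α]

section Backward
variable {α : Type} [Fintype α] [DecidableEq α]
variable (𝒬 : Finset (Finset α)) (QW : α → Finset α)

/-- designated cliques -/
def desig : Finset (Finset α) :=
  (Finset.univ.filter (fun u => (vertMembers 𝒬 u).card = 3)).image QW

noncomputable def Dsg (v : α) : Option (Finset α) :=
  if h : ∃ Q ∈ desig 𝒬 QW, v ∈ Q then some h.choose else none

noncomputable def Ends (v : α) : Finset (Finset α) :=
  (vertMembers 𝒬 v).filter (fun Q => Dsg 𝒬 QW v ≠ some Q)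

variable {𝒬 QW}

lemma mem_desig {Q : Finset α} :
    Q ∈ desig 𝒬 QW ↔ ∃ u, (vertMembers 𝒬 u).card = 3 ∧ QW u = Q := by
  simp [desig, Finset.mem_image, Finset.mem_filter]

variable (hQW2 : ∀ u : α, (vertMembers 𝒬 u).card = 3 →
    ∀ v : α, (vertMembers 𝒬 v).card = 3 →
      ((u ∈ QW v) → QW u = QW v) ∧ ((u ∉ QW v) → Disjoint (QW u) (QW v)))

include hQW2 in
lemma desig_disjoint {Q Q' : Finset α} (hQ : Q ∈ desig 𝒬 QW) (hQ' : Q' ∈ desig 𝒬 QW)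
    {v : α} (hv : v ∈ Q) (hv' : v ∈ Q') : Q = Q' := by
  obtain ⟨u, hu3, rfl⟩ := mem_desig.1 hQ
  obtain ⟨u', hu'3, rfl⟩ := mem_desig.1 hQ'
  by_cases h : u ∈ QW u'
  · exact (hQW2 u hu3 u' hu'3).1 h
  · exact absurd hv' (Finset.disjoint_left.1 ((hQW2 u hu3 u' hu'3).2 h) hv)

lemma Dsg_spec {v : α} {Q : Finset α} (h : Dsg 𝒬 QW v = some Q) :
    Q ∈ desig 𝒬 QW ∧ v ∈ Q := by
  unfold Dsg at h
  by_cases h' : ∃ Q ∈ desig 𝒬 QW, v ∈ Q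
  · rw [dif_pos h'] at h
    obtain ⟨h1, h2⟩ := h'.choose_spec
    cases h; exact ⟨h1, h2⟩
  · rw [dif_neg h'] at h; cases h

include hQW2 in
lemma Dsg_eq {v : α} {Q : Finset α} (hQ : Q ∈ desig 𝒬 QW) (hv : v ∈ Q) :
    Dsg 𝒬 QW v = some Q := by
  have hex : ∃ Q ∈ desig 𝒬 QW, v ∈ Q := ⟨Q, hQ, hv⟩
  unfold Dsg
  rw [dif_pos hex]
  obtain ⟨h1, h2⟩ := hex.choose_spec
  exact congrArg some (desig_disjoint hQW2 h1 hQ h2 hv)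

variable (hQW1 : ∀ v : α, (vertMembers 𝒬 v).card = 3 → QW v ∈ 𝒬 ∧ v ∈ QW v)

include hQW1 hQW2 in
lemma Dsg_of_W {v : α} (hv : (vertMembers 𝒬 v).card = 3) :
    Dsg 𝒬 QW v = some (QW v) :=
  Dsg_eq hQW2 (mem_desig.2 ⟨v, hv, rfl⟩) (hQW1 v hv).2

lemma mem_Ends {v : α} {Q : Finset α} :
    Q ∈ Ends 𝒬 QW v ↔ Q ∈ 𝒬 ∧ v ∈ Q ∧ Dsg 𝒬 QW v ≠ some Q := by
  simp [Ends, vertMembers, Finset.mem_filter, and_assoc]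

include hQW1 hQW2 in
lemma Ends_card (hv3 : ∀ v : α, (vertMembers 𝒬 v).card ≤ 3) (v : α) :
    (Ends 𝒬 QW v).card ≤ 2 := by
  by_cases h : (vertMembers 𝒬 v).card = 3
  · have hD := Dsg_of_W hQW2 hQW1 h
    have : Ends 𝒬 QW v = (vertMembers 𝒬 v).erase (QW v) := by
      ext Q
      simp only [Ends, Finset.mem_filter, Finset.mem_erase, hD]
      constructor
      · rintro ⟨h1, h2⟩; exact ⟨fun he => h2 (by rw [he]), h1⟩
      · rintro ⟨h1, h2⟩; exact ⟨h2, fun he => h1 (Option.some_inj.1 he).symm⟩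
    rw [this]
    have := Finset.card_erase_le (s := vertMembers 𝒬 v) (a := QW v)
    have hmem : QW v ∈ vertMembers 𝒬 v := by
      simp [vertMembers, Finset.mem_filter, (hQW1 v h).1, (hQW1 v h).2]
    rw [Finset.card_erase_of_mem hmem, h]
  · have h3 := hv3 v
    have h4 : (Ends 𝒬 QW v).card ≤ (vertMembers 𝒬 v).card :=
      Finset.card_le_card (Finset.filter_subset _ _)
    omega
end Backward

section Backward2
variable {α : Type} [Fintype α] [DecidableEq α]
variable (𝒬 : Finset (Finset α)) (QW : α → Finset α)

noncomputable def endA (v : α) : Finset α ⊕ α × Bool :=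
  match (Ends 𝒬 QW v).toList with
  | [] => Sum.inr (v, false)
  | A :: _ => Sum.inl A

noncomputable def endB (v : α) : Finset α ⊕ α × Bool :=
  match (Ends 𝒬 QW v).toList with
  | [] | [_] => Sum.inr (v, true)
  | _ :: B :: _ => Sum.inl B

variable {𝒬 QW}

lemma ends_cases (hc : ∀ v : α, (Ends 𝒬 QW v).card ≤ 2) (v : α) :
    ((Ends 𝒬 QW v).toList = [] ∧ endA 𝒬 QW v = Sum.inr (v, false) ∧
      endB 𝒬 QW v = Sum.inr (v, true)) ∨
    (∃ A, (Ends 𝒬 QW v).toList = [A] ∧ endA 𝒬 QW v = Sum.inl A ∧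
      endB 𝒬 QW v = Sum.inr (v, true)) ∨
    (∃ A B, A ≠ B ∧ (Ends 𝒬 QW v).toList = [A, B] ∧ endA 𝒬 QW v = Sum.inl A ∧
      endB 𝒬 QW v = Sum.inl B) := by
  have hlen : (Ends 𝒬 QW v).toList.length ≤ 2 := by
    rw [Finset.length_toList]; exact hc v
  have hnd := (Ends 𝒬 QW v).nodup_toList
  rcases hl : (Ends 𝒬 QW v).toList with _ | ⟨A, _ | ⟨B, l⟩⟩
  · exact Or.inl ⟨rfl, by simp [endA, hl], by simp [endB, hl]⟩
  · exact Or.inr (Or.inl ⟨A, rfl, by simp [endA, hl], by simp [endB, hl]⟩)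
  · have hl0 : l = [] := by
      rw [hl] at hlen; simp only [List.length_cons] at hlen
      exact List.eq_nil_of_length_eq_zero (by omega)
    subst hl0
    rw [hl] at hnd
    refine Or.inr (Or.inr ⟨A, B, ?_, rfl, by simp [endA, hl], by simp [endB, hl]⟩)
    simp at hnd
    exact hnd

lemma inl_mem_pair (hc : ∀ v : α, (Ends 𝒬 QW v).card ≤ 2) {v : α} {Q : Finset α} :
    (Sum.inl Q = endA 𝒬 QW v ∨ Sum.inl Q = endB 𝒬 QW v) ↔ Q ∈ Ends 𝒬 QW v := by
  have hmem : ∀ x, x ∈ Ends 𝒬 QW v ↔ x ∈ (Ends 𝒬 QW v).toList :=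
    fun x => (Finset.mem_toList).symm
  rcases ends_cases hc v with ⟨hl, hA, hB⟩ | ⟨A, hl, hA, hB⟩ | ⟨A, B, hne, hl, hA, hB⟩ <;>
    rw [hA, hB] <;> simp [hmem, hl]

lemma inr_mem_pair {v w : α} {b : Bool}
    (h : Sum.inr (w, b) = endA 𝒬 QW v ∨ Sum.inr (w, b) = endB 𝒬 QW v) : w = v := by
  unfold endA endB at h
  rcases hl : (Ends 𝒬 QW v).toList with _ | ⟨A, _ | ⟨B, l⟩⟩ <;>
    rw [hl] at h <;> simp at h <;> tauto

lemma endA_ne_endB (hc : ∀ v : α, (Ends 𝒬 QW v).card ≤ 2) (v : α) :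
    endA 𝒬 QW v ≠ endB 𝒬 QW v := by
  rcases ends_cases hc v with ⟨hl, hA, hB⟩ | ⟨A, hl, hA, hB⟩ | ⟨A, B, hne, hl, hA, hB⟩
  · rw [hA, hB]; simp
  · rw [hA, hB]; simp
  · rw [hA, hB]; simp [hne]

end Backward2

section Backward3
variable {α : Type} [Fintype α] [DecidableEq α]

theorem backward_main (G : SimpleGraph α) (𝒬 : Finset (Finset α))
    (hclique : ∀ Q ∈ 𝒬, G.IsClique (Q : Set α))
    (hv3 : ∀ v : α, (vertMembers 𝒬 v).card ≤ 3)
    (he1 : ∀ e ∈ G.edgeSet, (edgeMembers 𝒬 e).card = 1)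
    (QW : α → Finset α)
    (hQW1 : ∀ v : α, (vertMembers 𝒬 v).card = 3 → QW v ∈ 𝒬 ∧ v ∈ QW v)
    (hQW2 : ∀ u : α, (vertMembers 𝒬 u).card = 3 →
        ∀ v : α, (vertMembers 𝒬 v).card = 3 →
          ((u ∈ QW v) → QW u = QW v) ∧ ((u ∉ QW v) → Disjoint (QW u) (QW v))) :
    IsProperColorLineGraph G := by
  classical
  have hc : ∀ v : α, (Ends 𝒬 QW v).card ≤ 2 := Ends_card hQW2 hQW1 hv3
  -- unique clique containing an edge
  have hUC : ∀ {u v : α}, G.Adj u v → ∃ A, A ∈ 𝒬 ∧ u ∈ A ∧ v ∈ A ∧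
      ∀ B ∈ 𝒬, u ∈ B → v ∈ B → B = A := by
    intro u v huv
    have h1 := he1 s(u, v) huv
    obtain ⟨A, hA⟩ := Finset.card_eq_one.1 h1
    have hmem : ∀ B, B ∈ edgeMembers 𝒬 s(u, v) ↔ (B ∈ 𝒬 ∧ u ∈ B ∧ v ∈ B) := by
      intro B
      simp [edgeMembers, Finset.mem_filter, Sym2.mem_iff]
    have hAmem : A ∈ edgeMembers 𝒬 s(u, v) := by rw [hA]; exact Finset.mem_singleton_self A
    rw [hmem] at hAmem
    refine ⟨A, hAmem.1, hAmem.2.1, hAmem.2.2, fun B hB hu hv => ?_⟩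
    have : B ∈ edgeMembers 𝒬 s(u, v) := (hmem B).2 ⟨hB, hu, hv⟩
    rw [hA] at this
    exact Finset.mem_singleton.1 this
  have hdesig𝒬 : ∀ Q ∈ desig 𝒬 QW, Q ∈ 𝒬 := by
    intro Q hQ
    obtain ⟨u, hu3, rfl⟩ := mem_desig.1 hQ
    exact (hQW1 u hu3).1
  -- adjacency from common clique
  have hadj_of_clique : ∀ {u v : α} {A : Finset α}, A ∈ 𝒬 → u ∈ A → v ∈ A → u ≠ v →
      G.Adj u v := fun {u v A} hA hu hv hne => hclique A hA hu hv hne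
  -- shape lemma
  have hshape : ∀ {u v : α} (x : Finset α ⊕ α × Bool), u ≠ v →
      (x = endA 𝒬 QW u ∨ x = endB 𝒬 QW u) → (x = endA 𝒬 QW v ∨ x = endB 𝒬 QW v) →
      ∃ A, x = Sum.inl A ∧ A ∈ Ends 𝒬 QW u ∧ A ∈ Ends 𝒬 QW v := by
    rintro u v (A | ⟨w, b⟩) hne h1 h2
    · exact ⟨A, rfl, (inl_mem_pair hc).1 h1, (inl_mem_pair hc).1 h2⟩
    · exact absurd ((inr_mem_pair h1).symm.trans (inr_mem_pair h2)) hne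
  -- the host graph
  set H : SimpleGraph (Finset α ⊕ α × Bool) :=
    { Adj := fun x y => x ≠ y ∧ ∃ v, (x = endA 𝒬 QW v ∧ y = endB 𝒬 QW v) ∨
        (x = endB 𝒬 QW v ∧ y = endA 𝒬 QW v)
      symm := by
        constructor
        rintro x y ⟨hne, v, ⟨h1, h2⟩ | ⟨h1, h2⟩⟩
        · exact ⟨hne.symm, v, Or.inr ⟨h2, h1⟩⟩
        · exact ⟨hne.symm, v, Or.inl ⟨h2, h1⟩⟩
      loopless := by constructor; rintro x ⟨hne, -⟩; exact hne rfl } with hH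
  have hεadj : ∀ v : α, H.Adj (endA 𝒬 QW v) (endB 𝒬 QW v) :=
    fun v => ⟨endA_ne_endB hc v, v, Or.inl ⟨rfl, rfl⟩⟩
  set ε : α → H.edgeSet := fun v => ⟨s(endA 𝒬 QW v, endB 𝒬 QW v), hεadj v⟩ with hε
  -- endpoints of ε v
  have hεmem : ∀ (v : α) (x : Finset α ⊕ α × Bool),
      x ∈ (ε v : Sym2 (Finset α ⊕ α × Bool)) ↔
        (x = endA 𝒬 QW v ∨ x = endB 𝒬 QW v) := by
    intro v x; exact Sym2.mem_iff
  -- injectivity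
  have hinj : Function.Injective ε := by
    intro u v huv
    by_contra hne
    have hq : s(endA 𝒬 QW u, endB 𝒬 QW u) = s(endA 𝒬 QW v, endB 𝒬 QW v) :=
      congrArg Subtype.val huv
    have hmA : endA 𝒬 QW u ∈ (ε v : Sym2 (Finset α ⊕ α × Bool)) := by
      show endA 𝒬 QW u ∈ s(endA 𝒬 QW v, endB 𝒬 QW v)
      rw [← hq]; exact Sym2.mem_mk_left _ _
    have hmB : endB 𝒬 QW u ∈ (ε v : Sym2 (Finset α ⊕ α × Bool)) := by
      show endB 𝒬 QW u ∈ s(endA 𝒬 QW v, endB 𝒬 QW v)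
      rw [← hq]; exact Sym2.mem_mk_right _ _
    obtain ⟨A, hxA, hAu, hAv⟩ := hshape (endA 𝒬 QW u) hne (Or.inl rfl) ((hεmem v _).1 hmA)
    obtain ⟨B, hxB, hBu, hBv⟩ := hshape (endB 𝒬 QW u) hne (Or.inr rfl) ((hεmem v _).1 hmB)
    have hAB : A ≠ B := by
      intro h; exact endA_ne_endB hc u (by rw [hxA, hxB, h])
    have hAu' := mem_Ends.1 hAu
    have hAv' := mem_Ends.1 hAv
    have hBu' := mem_Ends.1 hBu
    have hBv' := mem_Ends.1 hBv
    have hadj : G.Adj u v := hadj_of_clique hAu'.1 hAu'.2.1 hAv'.2.1 hne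
    obtain ⟨S, hS𝒬, hSu, hSv, hSuniq⟩ := hUC hadj
    have h1 := hSuniq A hAu'.1 hAu'.2.1 hAv'.2.1
    have h2 := hSuniq B hBu'.1 hBu'.2.1 hBv'.2.1
    exact hAB (h1.trans h2.symm)
  -- surjectivity
  have hsurj : Function.Surjective ε := by
    rintro ⟨q, hq⟩
    obtain ⟨⟨x, y⟩, rfl⟩ := Quot.exists_rep q
    obtain ⟨hne, v, h⟩ := hq
    refine ⟨v, Subtype.ext ?_⟩
    show s(endA 𝒬 QW v, endB 𝒬 QW v) = Quot.mk _ (x, y)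
    have hx : x = endA 𝒬 QW v ∨ x = endB 𝒬 QW v := by tauto
    have hy : y = endB 𝒬 QW v ∨ y = endA 𝒬 QW v := by tauto
    rcases h with ⟨h1, h2⟩ | ⟨h1, h2⟩
    · have hx' : x = endA 𝒬 QW v := h1
      have hy' : y = endB 𝒬 QW v := h2
      rw [hx', hy']
    · have hx' : x = endB 𝒬 QW v := h1
      have hy' : y = endA 𝒬 QW v := h2
      rw [hx', hy']; exact Sym2.eq_swap
  set eqv : α ≃ H.edgeSet := Equiv.ofBijective ε ⟨hinj, hsurj⟩ with heqv
  -- the coloring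
  set φv : α → Finset α ⊕ α := fun v => (Dsg 𝒬 QW v).elim (Sum.inr v) Sum.inl with hφv
  set φ : H.edgeSet → Finset α ⊕ α := fun e => φv (eqv.symm e) with hφ
  have hφε : ∀ v : α, φ (ε v) = φv v := by
    intro v
    have h0 : eqv (eqv.symm (ε v)) = eqv v := by
      rw [Equiv.apply_symm_apply]; rfl
    have h1 : eqv.symm (ε v) = v := eqv.injective h0
    show φv (eqv.symm (ε v)) = φv v
    rw [h1]
  -- equal colors analysis
  have hφeq : ∀ {u v : α}, u ≠ v → φv u = φv v →
      ∃ Q, Dsg 𝒬 QW u = some Q ∧ Dsg 𝒬 QW v = some Q := by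
    intro u v hne h
    have h' : (Dsg 𝒬 QW u).elim (Sum.inr u : Finset α ⊕ α) Sum.inl =
        (Dsg 𝒬 QW v).elim (Sum.inr v) Sum.inl := h
    clear h
    cases hu : Dsg 𝒬 QW u with
    | none => cases hv : Dsg 𝒬 QW v with
      | none => rw [hu, hv] at h'; simp at h'; exact absurd h' hne
      | some Q => rw [hu, hv] at h'; simp at h'
    | some Q => cases hv : Dsg 𝒬 QW v with
      | none => rw [hu, hv] at h'; simp at h'
      | some Q' => rw [hu, hv] at h'; simp at h'; exact ⟨Q, rfl, by rw [h']⟩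
  -- key adjacency characterization
  have hmain : ∀ u v : α, G.Adj u v ↔ (ε u ≠ ε v ∧
      ((∃ x, x ∈ (ε u : Sym2 (Finset α ⊕ α × Bool)) ∧
        x ∈ (ε v : Sym2 (Finset α ⊕ α × Bool))) ∨ φv u = φv v)) := by
    intro u v
    constructor
    · intro hadj
      have hne : u ≠ v := G.ne_of_adj hadj
      refine ⟨fun h => hne (hinj h), ?_⟩
      obtain ⟨A, hA𝒬, huA, hvA, huniq⟩ := hUC hadj
      by_cases hD : Dsg 𝒬 QW u = some A
      · have hs := Dsg_spec hD
        have hDv : Dsg 𝒬 QW v = some A := Dsg_eq hQW2 hs.1 hvA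
        refine Or.inr ?_
        show (Dsg 𝒬 QW u).elim (Sum.inr u : Finset α ⊕ α) Sum.inl =
          (Dsg 𝒬 QW v).elim (Sum.inr v) Sum.inl
        rw [hD, hDv]
        rfl
      · have hDv : Dsg 𝒬 QW v ≠ some A := by
          intro h
          exact hD (Dsg_eq hQW2 (Dsg_spec h).1 huA)
        have hAu : A ∈ Ends 𝒬 QW u := mem_Ends.2 ⟨hA𝒬, huA, hD⟩
        have hAv : A ∈ Ends 𝒬 QW v := mem_Ends.2 ⟨hA𝒬, hvA, hDv⟩
        exact Or.inl ⟨Sum.inl A, (hεmem u _).2 ((inl_mem_pair hc).2 hAu),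
          (hεmem v _).2 ((inl_mem_pair hc).2 hAv)⟩
    · rintro ⟨hεne, h⟩
      have hne : u ≠ v := fun h' => hεne (by rw [h'])
      rcases h with ⟨x, hx1, hx2⟩ | h
      · obtain ⟨A, -, hAu, hAv⟩ := hshape x hne ((hεmem u _).1 hx1) ((hεmem v _).1 hx2)
        have h1 := mem_Ends.1 hAu
        have h2 := mem_Ends.1 hAv
        exact hadj_of_clique h1.1 h1.2.1 h2.2.1 hne
      · obtain ⟨Q, hQu, hQv⟩ := hφeq hne h
        have s1 := Dsg_spec hQu
        have s2 := Dsg_spec hQv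
        exact hadj_of_clique (hdesig𝒬 Q s1.1) s1.2 s2.2 hne
  -- properness
  have hproper : IsProperEdgeColoring H φ := by
    rintro e f hef ⟨x, hx1, hx2⟩ hcol
    obtain ⟨u, rfl⟩ := hsurj e
    obtain ⟨v, rfl⟩ := hsurj f
    have hne : u ≠ v := fun h => hef (by rw [h])
    rw [hφε, hφε] at hcol
    obtain ⟨Q, hQu, hQv⟩ := hφeq hne hcol
    obtain ⟨A, hxA, hAu, hAv⟩ := hshape x hne ((hεmem u _).1 hx1) ((hεmem v _).1 hx2)
    have h1 := mem_Ends.1 hAu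
    have h2 := mem_Ends.1 hAv
    have hadj : G.Adj u v := hadj_of_clique h1.1 h1.2.1 h2.2.1 hne
    obtain ⟨S, hS𝒬, hSu, hSv, hSuniq⟩ := hUC hadj
    have e1 := hSuniq A h1.1 h1.2.1 h2.2.1
    have e2 := hSuniq Q (hdesig𝒬 Q (Dsg_spec hQu).1) (Dsg_spec hQu).2 (Dsg_spec hQv).2
    exact h1.2.2 (by rw [e1.trans e2.symm]; exact hQu)
  -- assemble
  refine ⟨Finset α ⊕ α × Bool, Finset α ⊕ α, inferInstance, H, φ, hproper,
    ⟨⟨eqv, fun {u v} => ?_⟩⟩⟩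
  show (colorLineGraph H φ).Adj (eqv u) (eqv v) ↔ G.Adj u v
  have he : ∀ w, eqv w = ε w := fun w => rfl
  rw [he, he]
  constructor
  · rintro ⟨hne, h⟩
    refine (hmain u v).2 ⟨hne, ?_⟩
    rcases h with h | h
    · exact Or.inl h
    · rw [hφε, hφε] at h; exact Or.inr h
  · intro hadj
    obtain ⟨hne, h⟩ := (hmain u v).1 hadj
    refine ⟨hne, ?_⟩
    rcases h with h | h
    · exact Or.inl h
    · rw [hφε, hφε]; exact Or.inr h

end Backward3

section Forward
variable {α : Type} [Fintype α] [DecidableEq α]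

theorem forward_main (G : SimpleGraph α) (h : IsProperColorLineGraph G) :
    ∃ 𝒬 : Finset (Finset α),
        (∀ Q ∈ 𝒬, G.IsClique (Q : Set α)) ∧
        (∀ v : α, (vertMembers 𝒬 v).card ≤ 3) ∧
        (∀ e ∈ G.edgeSet, (edgeMembers 𝒬 e).card = 1) ∧
        ∃ QW : α → Finset α,
          (∀ v : α, (vertMembers 𝒬 v).card = 3 →
            QW v ∈ 𝒬 ∧ v ∈ QW v) ∧
          (∀ u : α, (vertMembers 𝒬 u).card = 3 →
            ∀ v : α, (vertMembers 𝒬 v).card = 3 →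
              ((u ∈ QW v) → QW u = QW v) ∧
              ((u ∉ QW v) → Disjoint (QW u) (QW v))) := by
  classical
  obtain ⟨V, C, hF, H, φ, hproper, ⟨ι⟩⟩ := h
  haveI := hF
  set Qv : V → Finset α := fun v => Finset.univ.filter (fun x : α => v ∈ (ι x : Sym2 V))
    with hQvdef
  set Qc : C → Finset α := fun c => Finset.univ.filter (fun x : α => φ (ι x) = c) with hQcdef
  set 𝒬 : Finset (Finset α) :=
    (Finset.univ.image Qv) ∪ (Finset.univ.image fun x : α => Qc (φ (ι x))) with h𝒬def
  have hmemQv : ∀ (v : V) (x : α), x ∈ Qv v ↔ v ∈ (ι x : Sym2 V) := by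
    intro v x; rw [hQvdef]; simp
  have hmemQc : ∀ (c : C) (x : α), x ∈ Qc c ↔ φ (ι x) = c := by
    intro c x; rw [hQcdef]; simp
  have hmem𝒬 : ∀ S, S ∈ 𝒬 ↔ (∃ v, S = Qv v) ∨ (∃ x : α, S = Qc (φ (ι x))) := by
    intro S; rw [h𝒬def]; simp [eq_comm]
  have hιinj : Function.Injective ι := ι.toEquiv.injective
  have hCL : ∀ x y : α, G.Adj x y ↔ ((ι x ≠ ι y) ∧
      ((∃ v, v ∈ (ι x : Sym2 V) ∧ v ∈ (ι y : Sym2 V)) ∨ φ (ι x) = φ (ι y))) := by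
    intro x y
    rw [← ι.map_adj_iff]
    exact Iff.rfl
  have hsym2 : ∀ {x y : α} {v w : V}, v ≠ w → v ∈ (ι x : Sym2 V) → w ∈ (ι x : Sym2 V) →
      v ∈ (ι y : Sym2 V) → w ∈ (ι y : Sym2 V) → x = y := by
    intro x y v w hvw h1 h2 h3 h4
    have e1 : (ι x : Sym2 V) = s(v, w) := (Sym2.mem_and_mem_iff hvw).1 ⟨h1, h2⟩
    have e2 : (ι y : Sym2 V) = s(v, w) := (Sym2.mem_and_mem_iff hvw).1 ⟨h3, h4⟩
    exact hιinj (Subtype.ext (e1.trans e2.symm))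
  refine ⟨𝒬, ?_, ?_, ?_, fun x => Qc (φ (ι x)), ?_, ?_⟩
  · -- cliques
    intro Q hQ
    rcases (hmem𝒬 Q).1 hQ with ⟨v, rfl⟩ | ⟨z, rfl⟩
    · intro x hx y hy hne
      have hx' := (hmemQv v x).1 (Finset.mem_coe.1 hx)
      have hy' := (hmemQv v y).1 (Finset.mem_coe.1 hy)
      exact (hCL x y).2 ⟨fun h => hne (hιinj h), Or.inl ⟨v, hx', hy'⟩⟩
    · intro x hx y hy hne
      have hx' := (hmemQc _ x).1 (Finset.mem_coe.1 hx)
      have hy' := (hmemQc _ y).1 (Finset.mem_coe.1 hy)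
      exact (hCL x y).2 ⟨fun h => hne (hιinj h), Or.inr (hx'.trans hy'.symm)⟩
  · -- vertex in at most 3
    intro x
    obtain ⟨⟨a, b⟩, hab⟩ := Quot.exists_rep (ι x : Sym2 V)
    have hsub : vertMembers 𝒬 x ⊆ {Qv a, Qv b, Qc (φ (ι x))} := by
      intro S hS
      have hS' : S ∈ 𝒬 ∧ x ∈ S := by
        simpa [vertMembers, Finset.mem_filter] using hS
      rcases (hmem𝒬 S).1 hS'.1 with ⟨v, rfl⟩ | ⟨z, rfl⟩
      · have hv : v ∈ (ι x : Sym2 V) := (hmemQv v x).1 hS'.2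
        rw [← hab] at hv
        rcases Sym2.mem_iff.1 hv with rfl | rfl
        · simp
        · simp
      · have hz : φ (ι x) = φ (ι z) := (hmemQc _ x).1 hS'.2
        rw [← hz]
        simp
    refine (Finset.card_le_card hsub).trans ?_
    refine le_trans (Finset.card_insert_le _ _) (Nat.succ_le_succ ?_)
    refine le_trans (Finset.card_insert_le _ _) (Nat.succ_le_succ ?_)
    simp
  · -- each edge in exactly one
    intro e he
    obtain ⟨⟨x, y⟩, rfl⟩ := Quot.exists_rep e
    have hadj : G.Adj x y := (SimpleGraph.mem_edgeSet G).1 he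
    have hxy : x ≠ y := hadj.ne
    have hmemE : ∀ S, S ∈ edgeMembers 𝒬 (Quot.mk _ (x, y)) ↔ (S ∈ 𝒬 ∧ x ∈ S ∧ y ∈ S) := by
      intro S
      show S ∈ edgeMembers 𝒬 s(x, y) ↔ _
      simp [edgeMembers, Finset.mem_filter, Sym2.mem_iff, and_assoc]
    rw [Finset.card_eq_one]
    obtain ⟨hne, hor⟩ := (hCL x y).1 hadj
    have hex : ∃ S, S ∈ 𝒬 ∧ x ∈ S ∧ y ∈ S := by
      rcases hor with ⟨v, hv1, hv2⟩ | hc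
      · exact ⟨Qv v, (hmem𝒬 _).2 (Or.inl ⟨v, rfl⟩),
          (hmemQv v x).2 hv1, (hmemQv v y).2 hv2⟩
      · exact ⟨Qc (φ (ι x)), (hmem𝒬 _).2 (Or.inr ⟨x, rfl⟩),
          (hmemQc _ x).2 rfl, (hmemQc _ y).2 hc.symm⟩
    have huniq : ∀ S1 S2, (S1 ∈ 𝒬 ∧ x ∈ S1 ∧ y ∈ S1) → (S2 ∈ 𝒬 ∧ x ∈ S2 ∧ y ∈ S2) →
        S1 = S2 := by
      rintro S1 S2 ⟨h1Q, h1x, h1y⟩ ⟨h2Q, h2x, h2y⟩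
      have key : ∀ S, (S ∈ 𝒬 ∧ x ∈ S ∧ y ∈ S) → (∃ v, S = Qv v ∧
          v ∈ (ι x : Sym2 V) ∧ v ∈ (ι y : Sym2 V)) ∨ S = Qc (φ (ι x)) := by
        rintro S ⟨hQ, hx, hy⟩
        rcases (hmem𝒬 S).1 hQ with ⟨v, rfl⟩ | ⟨z, rfl⟩
        · exact Or.inl ⟨v, rfl, (hmemQv v x).1 hx, (hmemQv v y).1 hy⟩
        · have := (hmemQc _ x).1 hx
          rw [← this]
          exact Or.inr rfl
      rcases key S1 ⟨h1Q, h1x, h1y⟩ with ⟨v, rfl, hv1, hv2⟩ | rfl <;>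
        rcases key S2 ⟨h2Q, h2x, h2y⟩ with ⟨w, rfl, hw1, hw2⟩ | rfl
      · by_cases hvw : v = w
        · rw [hvw]
        · exact absurd (hsym2 hvw hv1 hw1 hv2 hw2) hxy
      · -- Qv v = Qc: properness contradiction
        have hc : φ (ι x) = φ (ι y) := ((hmemQc _ y).1 h2y).symm
        exact absurd hc (hproper (ι x) (ι y) hne ⟨v, hv1, hv2⟩)
      · have hc : φ (ι x) = φ (ι y) := ((hmemQc _ y).1 h1y).symm
        exact absurd hc (hproper (ι x) (ι y) hne ⟨w, hw1, hw2⟩)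
      · rfl
    obtain ⟨S, hS⟩ := hex
    refine ⟨S, Finset.eq_singleton_iff_unique_mem.2 ⟨(hmemE S).2 hS, fun T hT =>
      huniq T S ((hmemE T).1 hT) hS⟩⟩
  · -- b1
    intro v _
    exact ⟨(hmem𝒬 _).2 (Or.inr ⟨v, rfl⟩), (hmemQc _ v).2 rfl⟩
  · -- b2
    intro u _ v _
    constructor
    · intro h
      have h2 : φ (ι u) = φ (ι v) := (hmemQc _ u).1 h
      show Qc (φ (ι u)) = Qc (φ (ι v))
      rw [h2]
    · intro h
      rw [Finset.disjoint_left]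
      intro z hz1 hz2
      have e1 := (hmemQc _ z).1 hz1
      have e2 := (hmemQc _ z).1 hz2
      exact h ((hmemQc _ u).2 (e1.symm.trans e2))
end Forward

/-- Krausz-type characterization for proper color-line graphs. -/
theorem krausz_properColorLine (G : SimpleGraph α) :
    IsProperColorLineGraph G ↔
      ∃ 𝒬 : Finset (Finset α),
        -- every member of 𝒬 is a clique of G
        (∀ Q ∈ 𝒬, G.IsClique (Q : Set α)) ∧
        -- (a) every vertex in at most three members, every edge in exactly one member
        (∀ v : α, (vertMembers 𝒬 v).card ≤ 3) ∧
        (∀ e ∈ G.edgeSet, (edgeMembers 𝒬 e).card = 1) ∧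
        -- (b) the map v ↦ QW v on W = vertices in exactly three members
        ∃ QW : α → Finset α,
          (∀ v : α, (vertMembers 𝒬 v).card = 3 →
            QW v ∈ 𝒬 ∧ v ∈ QW v) ∧
          (∀ u : α, (vertMembers 𝒬 u).card = 3 →
            ∀ v : α, (vertMembers 𝒬 v).card = 3 →
              ((u ∈ QW v) → QW u = QW v) ∧
              ((u ∉ QW v) → Disjoint (QW u) (QW v))) := by
  constructor
  · intro h
    exact forward_main G h
  · rintro ⟨𝒬, hclique, hv3, he1, QW, hQW1, hQW2⟩
    exact backward_main G 𝒬 hclique hv3 he1 QW hQW1 hQW2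
end

section
/- The graph K7 − e, obtained from the complete graph on 7 vertices by deleting one edge, is not a proper color-line graph. -/
open SimpleGraph

open Finset in
section

namespace K7Aux
variable {V : Type*} {C : Type*}

def Meets (e f : Sym2 V) : Prop := ∃ t, t ∈ e ∧ t ∈ f

lemma meets_comm {e f : Sym2 V} (h : Meets e f) : Meets f e :=
  ⟨h.choose, h.choose_spec.2, h.choose_spec.1⟩

lemma M3 {e f g h : Sym2 V} (hf : Meets e f) (hg : Meets e g) (hh : Meets e h)
    (hfg : ¬ Meets f g) (hfh : ¬ Meets f h) (hgh : ¬ Meets g h) : False := by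
  induction e using Sym2.ind with
  | _ p q =>
    obtain ⟨t1, ht1, hf1⟩ := hf
    obtain ⟨t2, ht2, hg1⟩ := hg
    obtain ⟨t3, ht3, hh1⟩ := hh
    rw [Sym2.mem_iff] at ht1 ht2 ht3
    rcases ht1 with rfl | rfl <;> rcases ht2 with rfl | rfl <;> rcases ht3 with rfl | rfl <;>
      first
        | exact hfg ⟨_, hf1, hg1⟩
        | exact hfh ⟨_, hf1, hh1⟩
        | exact hgh ⟨_, hg1, hh1⟩

lemma card4 {α : Type*} [DecidableEq α] (a b c d : α) : ({a, b, c, d} : Finset α).card ≤ 4 :=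
  (Finset.card_insert_le _ _).trans <| Nat.succ_le_succ <|
    (Finset.card_insert_le _ _).trans <| Nat.succ_le_succ <|
      (Finset.card_insert_le _ _).trans <| by simp

lemma card2 {α : Type*} [DecidableEq α] (a b : α) : ({a, b} : Finset α).card ≤ 2 :=
  (Finset.card_insert_le _ _).trans <| by simp

variable (E : Fin 7 → Sym2 V) (col : Fin 7 → C)

/-- There cannot be two distinct further edges with the same color as `E o`. -/
lemma stepA {o z : Fin 7} (hoz : o ≠ z)
    (hA : ∀ i j, i ≠ j → ¬(i = o ∧ j = z) → ¬(i = z ∧ j = o) →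
      Meets (E i) (E j) ∨ col i = col j)
    (hP : ∀ i j, i ≠ j → Meets (E i) (E j) → col i ≠ col j)
    (hC : col o ≠ col z)
    {i j : Fin 7} (hio : i ≠ o) (hiz : i ≠ z) (hjo : j ≠ o) (hjz : j ≠ z)
    (hij : i ≠ j) (hci : col i = col o) (hcj : col j = col o) : False := by
  classical
  have hdisj : ∀ a b : Fin 7, a ≠ b → col a = col b → ¬ Meets (E a) (E b) :=
    fun a b hab hcol hm => hP a b hab hm hcol
  obtain ⟨k, hko, hkz, hki, hkj⟩ : ∃ k : Fin 7, k ≠ o ∧ k ≠ z ∧ k ≠ i ∧ k ≠ j := by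
    by_contra hcon
    push_neg at hcon
    have hsub : (Finset.univ : Finset (Fin 7)) ⊆ {o, z, i, j} := by
      intro k _
      simp only [Finset.mem_insert, Finset.mem_singleton]
      by_contra hk
      push_neg at hk
      exact hk.2.2.2 (hcon k hk.1 hk.2.1 hk.2.2.1)
    have h7 : (7 : ℕ) ≤ ({o, z, i, j} : Finset (Fin 7)).card := by
      have := Finset.card_le_card hsub
      simpa using this
    have := card4 o z i j
    omega
  by_cases hck : col k = col o
  · -- E i, E j, E k pairwise disjoint; E z meets all three
    have m1 : Meets (E z) (E i) :=
      (hA z i (Ne.symm hiz) (fun h => hoz h.1.symm) (fun h => hio h.2)).resolve_right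
        (fun h => hC (h.trans hci).symm)
    have m2 : Meets (E z) (E j) :=
      (hA z j (Ne.symm hjz) (fun h => hoz h.1.symm) (fun h => hjo h.2)).resolve_right
        (fun h => hC (h.trans hcj).symm)
    have m3 : Meets (E z) (E k) :=
      (hA z k (Ne.symm hkz) (fun h => hoz h.1.symm) (fun h => hko h.2)).resolve_right
        (fun h => hC (h.trans hck).symm)
    exact M3 m1 m2 m3 (hdisj i j hij (hci.trans hcj.symm))
      (hdisj i k (Ne.symm hki) (hci.trans hck.symm))
      (hdisj j k (Ne.symm hkj) (hcj.trans hck.symm))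
  · -- E k meets E o, E i, E j which are pairwise disjoint
    have m1 : Meets (E k) (E o) :=
      (hA k o hko (fun h => hko h.1) (fun h => hkz h.1)).resolve_right hck
    have m2 : Meets (E k) (E i) :=
      (hA k i hki (fun h => hko h.1) (fun h => hkz h.1)).resolve_right
        (fun h => hck (h.trans hci))
    have m3 : Meets (E k) (E j) :=
      (hA k j hkj (fun h => hko h.1) (fun h => hkz h.1)).resolve_right
        (fun h => hck (h.trans hcj))
    exact M3 m1 m2 m3 (hdisj o i (Ne.symm hio) hci.symm)
      (hdisj o j (Ne.symm hjo) hcj.symm)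
      (hdisj i j hij (hci.trans hcj.symm))

lemma sym2_exists_rep (e : Sym2 V) : ∃ x y, e = s(x, y) :=
  Sym2.inductionOn e fun x y => ⟨x, y, rfl⟩

/-- If some further edge has the same color as `E o`, contradiction. -/
lemma caseAa {o z : Fin 7} (hoz : o ≠ z)
    (inj : Function.Injective E)
    (hA : ∀ i j, i ≠ j → ¬(i = o ∧ j = z) → ¬(i = z ∧ j = o) →
      Meets (E i) (E j) ∨ col i = col j)
    (hP : ∀ i j, i ≠ j → Meets (E i) (E j) → col i ≠ col j)
    (hN : ¬ Meets (E o) (E z)) (hC : col o ≠ col z)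
    (nd : ∀ i, ¬ (E i).IsDiag)
    {p : Fin 7} (hpo : p ≠ o) (hpz : p ≠ z) (hcp : col p = col o) : False := by
  classical
  obtain ⟨x, y, ho⟩ := sym2_exists_rep (E o)
  obtain ⟨u, v, hz⟩ := sym2_exists_rep (E z)
  have hxy : x ≠ y := by have := nd o; rw [ho] at this; simpa using this
  have huv : u ≠ v := by have := nd z; rw [hz] at this; simpa using this
  have hxo : x ∈ E o := by rw [ho]; exact Sym2.mem_mk_left _ _
  have hyo : y ∈ E o := by rw [ho]; exact Sym2.mem_mk_right _ _
  set S : Finset (Fin 7) := Finset.univ.filter (fun q => q ≠ o ∧ q ≠ z) with hSdef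
  have hSmem : ∀ q, q ∈ S ↔ (q ≠ o ∧ q ≠ z) := by
    intro q; simp [hSdef]
  have hScard : 5 ≤ S.card := by
    have h2 : ({o, z} : Finset (Fin 7)).card = 2 := by
      rw [Finset.card_insert_of_notMem (by simp [hoz]), Finset.card_singleton]
    have hSeq : S = Finset.univ \ {o, z} := by
      ext q; simp [hSdef, not_or]
    rw [hSeq, Finset.card_sdiff_of_subset (Finset.subset_univ _), h2]
    simp
  set N : Finset (Fin 7) := S.filter (fun q => ¬(col q ≠ col o ∧ col q ≠ col z)) with hNdef
  have hN2 : N.card ≤ 2 := by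
    have hsub : N ⊆ insert p (S.filter fun q => col q = col z) := by
      intro q hq
      rw [hNdef, Finset.mem_filter] at hq
      have hqoz := (hSmem q).mp hq.1
      rcases not_and_or.mp hq.2 with h | h
      · have hco : col q = col o := not_not.mp h
        have : q = p := by
          by_contra hqp
          exact stepA E col hoz hA hP hC hqoz.1 hqoz.2 hpo hpz hqp hco hcp
        simp [this]
      · exact Finset.mem_insert_of_mem (Finset.mem_filter.mpr ⟨hq.1, not_not.mp h⟩)
    have h1 : (S.filter fun q => col q = col z).card ≤ 1 := by
      apply Finset.card_le_one.mpr
      intro a ha b hb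
      rw [Finset.mem_filter] at ha hb
      have haoz := (hSmem a).mp ha.1
      have hboz := (hSmem b).mp hb.1
      by_contra hab
      exact stepA E col hoz.symm (fun i j hij h1 h2 => hA i j hij h2 h1) hP hC.symm
        haoz.2 haoz.1 hboz.2 hboz.1 hab ha.2 hb.2
    calc N.card ≤ _ := Finset.card_le_card hsub
      _ ≤ (S.filter fun q => col q = col z).card + 1 := Finset.card_insert_le _ _
      _ ≤ 2 := by omega
  set T : Finset (Fin 7) := S \ N with hTdef
  have hNS : N ⊆ S := by rw [hNdef]; exact Finset.filter_subset _ _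
  have hTcard : 3 ≤ T.card := by
    rw [hTdef, Finset.card_sdiff_of_subset hNS]
    omega
  have hTprop : ∀ q ∈ T, (q ≠ o ∧ q ≠ z) ∧ (col q ≠ col o ∧ col q ≠ col z) := by
    intro q hq
    rw [hTdef, Finset.mem_sdiff] at hq
    refine ⟨(hSmem q).mp hq.1, ?_⟩
    have := hq.2
    rw [hNdef, Finset.mem_filter] at this
    push_neg at this
    exact this hq.1
  have hT4 : ∀ q ∈ T, E q = s(x,u) ∨ E q = s(x,v) ∨ E q = s(y,u) ∨ E q = s(y,v) := by
    intro q hq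
    obtain ⟨⟨hqo, hqz⟩, hco, hcz⟩ := hTprop q hq
    have m1 : Meets (E q) (E o) :=
      (hA q o hqo (fun h => hqo h.1) (fun h => hqz h.1)).resolve_right hco
    have m2 : Meets (E q) (E z) :=
      (hA q z hqz (fun h => hqo h.1) (fun h => hqz h.1)).resolve_right hcz
    obtain ⟨t1, ht1q, ht1o⟩ := m1
    obtain ⟨t2, ht2q, ht2z⟩ := m2
    have hne : t1 ≠ t2 := fun h => hN ⟨t1, ht1o, h ▸ ht2z⟩
    have he : E q = s(t1, t2) := (Sym2.mem_and_mem_iff hne).mp ⟨ht1q, ht2q⟩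
    rw [ho, Sym2.mem_iff] at ht1o
    rw [hz, Sym2.mem_iff] at ht2z
    rcases ht1o with rfl | rfl <;> rcases ht2z with rfl | rfl
    · exact Or.inl he
    · exact Or.inr (Or.inl he)
    · exact Or.inr (Or.inr (Or.inl he))
    · exact Or.inr (Or.inr (Or.inr he))
  have hmeet : ∀ q ∈ T, ∃ t, t ∈ E p ∧ t ∈ E q ∧ (t = u ∨ t = v) := by
    intro q hq
    obtain ⟨⟨hqo, hqz⟩, hco, hcz⟩ := hTprop q hq
    have hpq : p ≠ q := fun h => hco (h ▸ hcp)
    have m : Meets (E p) (E q) :=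
      (hA p q hpq (fun h => hpo h.1) (fun h => hpz h.1)).resolve_right
        (fun h => hco (h.symm.trans hcp))
    obtain ⟨t, htp, htq⟩ := m
    have hdpo : ¬ Meets (E p) (E o) := fun hm => hP p o hpo hm hcp
    have htx : t ≠ x := fun h => hdpo ⟨t, htp, h ▸ hxo⟩
    have hty : t ≠ y := fun h => hdpo ⟨t, htp, h ▸ hyo⟩
    have htq' := htq
    rcases hT4 q hq with h4 | h4 | h4 | h4 <;> rw [h4, Sym2.mem_iff] at htq <;>
      rcases htq with h5 | h5 <;>
      first
        | exact absurd h5 htx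
        | exact absurd h5 hty
        | exact ⟨t, htp, htq', Or.inl h5⟩
        | exact ⟨t, htp, htq', Or.inr h5⟩
  have hvT : ∃ q ∈ T, v ∈ E q := by
    by_contra hcon
    push_neg at hcon
    have himg : ∀ q ∈ T, E q ∈ ({s(x,u), s(y,u)} : Finset (Sym2 V)) := by
      intro q hq
      rcases hT4 q hq with h | h | h | h
      · simp [h]
      · exact absurd (by rw [h]; exact Sym2.mem_mk_right _ _) (hcon q hq)
      · simp [h]
      · exact absurd (by rw [h]; exact Sym2.mem_mk_right _ _) (hcon q hq)
    have hle := Finset.card_le_card_of_injOn E himg (fun a _ b _ h => inj h)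
    have := card2 (s(x,u)) (s(y,u))
    omega
  have huT : ∃ q ∈ T, u ∈ E q := by
    by_contra hcon
    push_neg at hcon
    have himg : ∀ q ∈ T, E q ∈ ({s(x,v), s(y,v)} : Finset (Sym2 V)) := by
      intro q hq
      rcases hT4 q hq with h | h | h | h
      · exact absurd (by rw [h]; exact Sym2.mem_mk_right _ _) (hcon q hq)
      · simp [h]
      · exact absurd (by rw [h]; exact Sym2.mem_mk_right _ _) (hcon q hq)
      · simp [h]
    have hle := Finset.card_le_card_of_injOn E himg (fun a _ b _ h => inj h)
    have := card2 (s(x,v)) (s(y,v))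
    omega
  have hvp : v ∈ E p := by
    obtain ⟨qv, hqvT, hqvv⟩ := hvT
    obtain ⟨t, htp, htq, htuv⟩ := hmeet qv hqvT
    rcases htuv with h | h
    · have heq : E qv = s(u, v) := (Sym2.mem_and_mem_iff huv).mp ⟨h ▸ htq, hqvv⟩
      exact ((hTprop qv hqvT).1.2 (inj (heq.trans hz.symm))).elim
    · exact h ▸ htp
  have hup : u ∈ E p := by
    obtain ⟨qu, hquT, hquu⟩ := huT
    obtain ⟨t, htp, htq, htuv⟩ := hmeet qu hquT
    rcases htuv with h | h
    · exact h ▸ htp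
    · have heq : E qu = s(u, v) := (Sym2.mem_and_mem_iff huv).mp ⟨hquu, h ▸ htq⟩
      exact ((hTprop qu hquT).1.2 (inj (heq.trans hz.symm))).elim
  exact hpz (inj (((Sym2.mem_and_mem_iff huv).mp ⟨hup, hvp⟩).trans hz.symm))

lemma mainAbs {o z : Fin 7} (hoz : o ≠ z)
    (inj : Function.Injective E)
    (hA : ∀ i j, i ≠ j → ¬(i = o ∧ j = z) → ¬(i = z ∧ j = o) →
      Meets (E i) (E j) ∨ col i = col j)
    (hP : ∀ i j, i ≠ j → Meets (E i) (E j) → col i ≠ col j)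
    (hN : ¬ Meets (E o) (E z)) (hC : col o ≠ col z)
    (nd : ∀ i, ¬ (E i).IsDiag) : False := by
  classical
  by_cases h0 : ∃ p, p ≠ o ∧ p ≠ z ∧ col p = col o
  · obtain ⟨p, ha, hb, hc⟩ := h0
    exact caseAa E col hoz inj hA hP hN hC nd ha hb hc
  by_cases h1 : ∃ p, p ≠ o ∧ p ≠ z ∧ col p = col z
  · obtain ⟨p, ha, hb, hc⟩ := h1
    exact caseAa E col hoz.symm inj (fun i j hij hx hy => hA i j hij hy hx) hP
      (fun hm => hN (meets_comm hm)) hC.symm nd hb ha hc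
  · push_neg at h0 h1
    obtain ⟨x, y, ho⟩ := sym2_exists_rep (E o)
    obtain ⟨u, v, hz⟩ := sym2_exists_rep (E z)
    set S : Finset (Fin 7) := Finset.univ.filter (fun q => q ≠ o ∧ q ≠ z) with hSdef
    have hScard : 5 ≤ S.card := by
      have h2 : ({o, z} : Finset (Fin 7)).card = 2 := by
        rw [Finset.card_insert_of_notMem (by simp [hoz]), Finset.card_singleton]
      have hSeq : S = Finset.univ \ {o, z} := by
        ext q; simp [hSdef, not_or]
      rw [hSeq, Finset.card_sdiff_of_subset (Finset.subset_univ _), h2]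
      simp
    have himg : ∀ q ∈ S, E q ∈ ({s(x,u), s(x,v), s(y,u), s(y,v)} : Finset (Sym2 V)) := by
      intro q hq
      rw [hSdef, Finset.mem_filter] at hq
      obtain ⟨-, hqo, hqz⟩ := hq
      have m1 : Meets (E q) (E o) :=
        (hA q o hqo (fun h => hqo h.1) (fun h => hqz h.1)).resolve_right (h0 q hqo hqz)
      have m2 : Meets (E q) (E z) :=
        (hA q z hqz (fun h => hqo h.1) (fun h => hqz h.1)).resolve_right (h1 q hqo hqz)
      obtain ⟨t1, ht1q, ht1o⟩ := m1
      obtain ⟨t2, ht2q, ht2z⟩ := m2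
      have hne : t1 ≠ t2 := fun h => hN ⟨t1, ht1o, h ▸ ht2z⟩
      have he : E q = s(t1, t2) := (Sym2.mem_and_mem_iff hne).mp ⟨ht1q, ht2q⟩
      rw [ho, Sym2.mem_iff] at ht1o
      rw [hz, Sym2.mem_iff] at ht2z
      rcases ht1o with rfl | rfl <;> rcases ht2z with rfl | rfl <;> simp [he]
    have hle := Finset.card_le_card_of_injOn E himg (fun a _ b _ h => inj h)
    have := card4 (s(x,u)) (s(x,v)) (s(y,u)) (s(y,v))
    omega

end K7Aux

end

/-- `K₇ − e` is not a proper color-line graph. -/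
theorem K7_minus_e_not_properColorLine :
    ¬ IsProperColorLineGraph
        ((⊤ : SimpleGraph (Fin 7)).deleteEdges {s(0, 1)}) := by
  rintro ⟨V, C, instF, H, φ, hproper, ⟨ψ⟩⟩
  classical
  set G := (⊤ : SimpleGraph (Fin 7)).deleteEdges {s(0, 1)} with hG
  let E : Fin 7 → Sym2 V := fun i => ((ψ i : H.edgeSet) : Sym2 V)
  let col : Fin 7 → C := fun i => φ (ψ i)
  have injψ : Function.Injective (fun i : Fin 7 => (ψ i : H.edgeSet)) :=
    fun i j h => ψ.toEquiv.injective h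
  have injE : Function.Injective E := fun i j h => injψ (Subtype.ext h)
  have hCLdef : ∀ e f : H.edgeSet, (colorLineGraph H φ).Adj e f ↔
      (e ≠ f ∧ ((∃ w, w ∈ (e : Sym2 V) ∧ w ∈ (f : Sym2 V)) ∨ φ e = φ f)) :=
    fun e f => Iff.rfl
  have hA : ∀ i j : Fin 7, i ≠ j → ¬(i = 0 ∧ j = 1) → ¬(i = 1 ∧ j = 0) →
      K7Aux.Meets (E i) (E j) ∨ col i = col j := by
    intro i j hij h1 h2
    have hs : s(i, j) ∉ ({s(0, 1)} : Set (Sym2 (Fin 7))) := by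
      rw [Set.mem_singleton_iff, Sym2.eq_iff]
      rintro (⟨a, b⟩ | ⟨a, b⟩)
      · exact h1 ⟨a, b⟩
      · exact h2 ⟨a, b⟩
    have hadj : G.Adj i j := by
      rw [hG, SimpleGraph.deleteEdges_adj]
      exact ⟨by simpa using hij, hs⟩
    have := (ψ.map_adj_iff).mpr hadj
    exact ((hCLdef (ψ i) (ψ j)).mp this).2
  have hP : ∀ i j : Fin 7, i ≠ j → K7Aux.Meets (E i) (E j) → col i ≠ col j :=
    fun i j hij hm => hproper (ψ i) (ψ j) (fun h => hij (ψ.toEquiv.injective h)) hm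
  have hnadj : ¬ G.Adj 0 1 := by
    rw [hG, SimpleGraph.deleteEdges_adj]
    simp
  have hncl : ¬ (colorLineGraph H φ).Adj (ψ 0) (ψ 1) :=
    fun h => hnadj ((ψ.map_adj_iff).mp h)
  have hne01 : (ψ (0 : Fin 7) : H.edgeSet) ≠ ψ 1 :=
    fun h => absurd (ψ.toEquiv.injective h) (by decide)
  have hN : ¬ K7Aux.Meets (E 0) (E 1) :=
    fun hm => hncl ((hCLdef (ψ 0) (ψ 1)).mpr ⟨hne01, Or.inl hm⟩)
  have hC : col 0 ≠ col 1 :=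
    fun hc => hncl ((hCLdef (ψ 0) (ψ 1)).mpr ⟨hne01, Or.inr hc⟩)
  have nd : ∀ i, ¬ (E i).IsDiag :=
    fun i => H.not_isDiag_of_mem_edgeSet (ψ i).2
  exact K7Aux.mainAbs E col (by decide) injE hA hP hN hC nd
end

section
/- The star K_{1,4} (the complete bipartite graph with parts of sizes 1 and 4) is not a color-line graph; consequently, no color-line graph contains an induced subgraph isomorphic to K_{1,4}. -/
open SimpleGraph

lemma no_four_claw {V C : Type*} (H : SimpleGraph V) (φ : H.edgeSet → C)
    (c : H.edgeSet) (f : Fin 4 → H.edgeSet) (hinj : Function.Injective f)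
    (hadj : ∀ i, (colorLineGraph H φ).Adj c (f i))
    (hnon : ∀ i j, i ≠ j → ¬ (colorLineGraph H φ).Adj (f i) (f j)) : False := by
  classical
  obtain ⟨⟨x, y⟩, hxy⟩ := Quot.exists_rep (c : Sym2 V)
  have key : ∀ i, φ (f i) = φ c ∨ x ∈ (f i : Sym2 V) ∨ y ∈ (f i : Sym2 V) := by
    intro i
    obtain ⟨-, ⟨v, hvc, hvf⟩ | hcol⟩ := hadj i
    · rw [← hxy] at hvc
      rcases Sym2.mem_iff.1 hvc with rfl | rfl
      · exact Or.inr (Or.inl hvf)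
      · exact Or.inr (Or.inr hvf)
    · exact Or.inl hcol.symm
  set g : Fin 4 → Fin 3 := fun i =>
    if φ (f i) = φ c then 0 else if x ∈ (f i : Sym2 V) then 1 else 2 with hg_def
  obtain ⟨i, j, hij, hg⟩ := Fintype.exists_ne_map_eq_of_card_lt g (by simp)
  refine hnon i j hij ⟨fun h => hij (hinj h), ?_⟩
  simp only [hg_def] at hg
  split_ifs at hg
  all_goals first
    | exact absurd hg (by decide)
    | exact Or.inr ((‹φ (f i) = φ c›).trans (‹φ (f j) = φ c›).symm)
    | exact Or.inl ⟨x, ‹x ∈ ((f i : Sym2 V))›, ‹x ∈ ((f j : Sym2 V))›⟩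
    | exact Or.inl ⟨y,
        ((key i).resolve_left ‹¬ φ (f i) = φ c›).resolve_left ‹¬ x ∈ ((f i : Sym2 V))›,
        ((key j).resolve_left ‹¬ φ (f j) = φ c›).resolve_left ‹¬ x ∈ ((f j : Sym2 V))›⟩

lemma no_K14_embed {V C : Type*} (H : SimpleGraph V) (φ : H.edgeSet → C)
    (m : Fin 1 ⊕ Fin 4 → H.edgeSet) (hinj : Function.Injective m)
    (hiff : ∀ a b, (colorLineGraph H φ).Adj (m a) (m b) ↔
        (completeBipartiteGraph (Fin 1) (Fin 4)).Adj a b) : False := by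
  refine no_four_claw H φ (m (Sum.inl 0)) (fun i => m (Sum.inr i))
    (fun i j h => Sum.inr_injective (hinj h)) (fun i => (hiff _ _).mpr (by simp))
    (fun i j hij hadj => ?_)
  have := (hiff _ _).mp hadj
  simp at this

/-- The star `K_{1,4}` is not a color-line graph; consequently no color-line graph
contains an induced subgraph isomorphic to `K_{1,4}`. -/
theorem K14_not_colorLine :
    ¬ IsColorLineGraph (completeBipartiteGraph (Fin 1) (Fin 4)) ∧
    ∀ {α : Type} (G : SimpleGraph α), IsColorLineGraph G →
      ¬ ∃ s : Set α,
          Nonempty ((G.induce s) ≃g completeBipartiteGraph (Fin 1) (Fin 4)) := by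
  constructor
  · rintro ⟨V, C, _, H, φ, ⟨iso⟩⟩
    exact no_K14_embed H φ (fun a => iso a) iso.injective fun a b => iso.map_adj_iff
  · rintro α G ⟨V, C, _, H, φ, ⟨iso⟩⟩ ⟨s, ⟨iso2⟩⟩
    refine no_K14_embed H φ (fun a => iso (iso2.symm a).val)
      (fun a b h => iso2.symm.injective (Subtype.val_injective (iso.injective h)))
      (fun a b => ?_)
    rw [iso.map_adj_iff]
    exact iso2.symm.map_adj_iff
end

section
/- The complement of 6K2 (i.e., the complement of a perfect matching on 12 vertices, equivalently the graph on 12 vertices v_1,…,v_6,w_1,…,w_6 in which every pair of distinct vertices is adjacent except the pairs {v_i, w_i}) is not a color-line graph. -/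
open SimpleGraph

/-- The perfect matching `6K₂` on 12 vertices `v₁,…,v₆,w₁,…,w₆`,
with edges `vᵢwᵢ`. -/
def sixK2 : SimpleGraph (Fin 6 ⊕ Fin 6) where
  Adj u v := ∃ i : Fin 6,
    (u = Sum.inl i ∧ v = Sum.inr i) ∨ (u = Sum.inr i ∧ v = Sum.inl i)
  symm := by
    constructor
    rintro u v ⟨i, h | h⟩
    · exact ⟨i, Or.inr ⟨h.2, h.1⟩⟩
    · exact ⟨i, Or.inl ⟨h.2, h.1⟩⟩
  loopless := by
    constructor
    rintro u ⟨i, ⟨h1, h2⟩ | ⟨h1, h2⟩⟩ <;> rw [h1] at h2 <;> simp at h2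


section AuxiliaryCLProof
abbrev I12 := Fin 6 ⊕ Fin 6
def sw : I12 → I12 := Sum.elim Sum.inr Sum.inl
lemma sw_sw (u : I12) : sw (sw u) = u := by cases u <;> rfl
lemma sw_ne (u : I12) : sw u ≠ u := by cases u <;> simp [sw]
def pr : I12 → Fin 6 := Sum.elim id id
lemma pr_sw (u : I12) : pr (sw u) = pr u := by cases u <;> rfl
lemma pr_eq {u v : I12} (h : pr u = pr v) : u = v ∨ v = sw u := by
  rcases u with i | i <;> rcases v with j | j <;> simp [pr, sw] at h ⊢ <;> omega
lemma pr_inl (i : Fin 6) : pr (Sum.inl i) = i := rfl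
lemma pr_inr (i : Fin 6) : pr (Sum.inr i) = i := rfl
lemma card_I12 : Fintype.card I12 = 12 := by simp
section
variable {V C : Type*} (a b : I12 → V)
/-- `w` is an endpoint of edge `u`. -/
def mm (w : V) (u : I12) : Prop := w = a u ∨ w = b u
lemma two_mem (hab : ∀ u, a u ≠ b u)
    (hinj : ∀ u v, (a u = a v ∧ b u = b v) ∨ (a u = b v ∧ b u = a v) → u = v)
    {u v : I12} {w w' : V} (hne : w ≠ w')
    (h1 : mm a b w u) (h2 : mm a b w' u) (h3 : mm a b w v) (h4 : mm a b w' v) : u = v := by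
  rcases h1 with h1 | h1 <;> rcases h2 with h2 | h2 <;> rcases h3 with h3 | h3 <;>
    rcases h4 with h4 | h4 <;> subst_vars <;>
    first
      | exact absurd rfl hne
      | (first | exact absurd (h3.trans h4.symm) hne | exact absurd (h4.trans h3.symm) hne)
      | exact hinj u v (Or.inl ⟨h3, h4⟩)
      | exact hinj u v (Or.inr ⟨h3, h4⟩)
      | exact hinj u v (Or.inl ⟨h4, h3⟩)
      | exact hinj u v (Or.inr ⟨h4, h3⟩)
lemma mm_resolve {u : I12} {w w' t : V} (hne : w ≠ w')
    (h1 : mm a b w u) (h2 : mm a b w' u) (h3 : mm a b t u) : t = w ∨ t = w' := by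
  rcases h1 with h1 | h1 <;> rcases h2 with h2 | h2 <;> rcases h3 with h3 | h3 <;>
    subst_vars <;> tauto
end

section
variable {V C : Type*} (a b : I12 → V) (c : I12 → C)

open Classical in
noncomputable def vstar (w : V) : Finset I12 := Finset.univ.filter (fun u => mm a b w u)
open Classical in
noncomputable def cls (γ : C) : Finset I12 := Finset.univ.filter (fun u => c u = γ)

lemma mem_vstar {w : V} {u : I12} : u ∈ vstar a b w ↔ mm a b w u := by
  unfold vstar; simp
lemma mem_cls {γ : C} {u : I12} : u ∈ cls c γ ↔ c u = γ := by
  unfold cls; simp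

lemma transversal_card {S : Finset I12} (h : ∀ u ∈ S, sw u ∉ S) : S.card ≤ 6 := by
  have h2 := Finset.card_le_card_of_injOn pr (fun x _ => Finset.mem_univ (pr x))
    (s := S) (t := Finset.univ) ?_
  · simpa using h2
  · intro u hu v hv hpr
    rcases pr_eq hpr with h' | h'
    · exact h'
    · exact absurd (h' ▸ hv) (h u hu)

lemma star_le6 (hdisj : ∀ u w, mm a b w u → mm a b w (sw u) → False) (w : V) :
    (vstar a b w).card ≤ 6 := by
  refine transversal_card (fun u hu hsu => ?_)
  exact hdisj u w ((mem_vstar a b).1 hu) ((mem_vstar a b).1 hsu)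

lemma cls_le6 (hcol : ∀ u, c u ≠ c (sw u)) (γ : C) : (cls c γ).card ≤ 6 := by
  refine transversal_card (fun u hu hsu => ?_)
  exact hcol u (((mem_cls c).1 hu).trans ((mem_cls c).1 hsu).symm)
end

section
variable {V C : Type*} (a b : I12 → V) (c : I12 → C)

lemma edge_deg
    (hdisj : ∀ u w, mm a b w u → mm a b w (sw u) → False)
    (hadj : ∀ u v, u ≠ v → v ≠ sw u →
      (∃ w, mm a b w u ∧ mm a b w v) ∨ c u = c v) (u : I12) :
    13 ≤ (vstar a b (a u)).card + (vstar a b (b u)).card + (cls c (c u)).card := by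
  classical
  set N := (Finset.univ.erase u).erase (sw u) with hN
  have hNcard : N.card = 10 := by
    rw [hN, Finset.card_erase_of_mem, Finset.card_erase_of_mem (Finset.mem_univ u)]
    · simp
    · exact Finset.mem_erase.2 ⟨sw_ne u, Finset.mem_univ _⟩
  have hsub : N ⊆ ((vstar a b (a u)).erase u ∪ (vstar a b (b u)).erase u) ∪
      (cls c (c u)).erase u := by
    intro v hv
    obtain ⟨hvs, hvu, -⟩ : v ≠ sw u ∧ v ≠ u ∧ v ∈ Finset.univ := by
      simpa [hN, Finset.mem_erase] using hv
    rcases hadj u v (Ne.symm hvu) hvs with ⟨w, hwu, hwv⟩ | hc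
    · rcases hwu with rfl | rfl
      · exact Finset.mem_union_left _ <| Finset.mem_union_left _ <|
          Finset.mem_erase.2 ⟨hvu, (mem_vstar a b).2 hwv⟩
      · exact Finset.mem_union_left _ <| Finset.mem_union_right _ <|
          Finset.mem_erase.2 ⟨hvu, (mem_vstar a b).2 hwv⟩
    · exact Finset.mem_union_right _ <| Finset.mem_erase.2 ⟨hvu, (mem_cls c).2 hc.symm⟩
  have h1 : u ∈ vstar a b (a u) := (mem_vstar a b).2 (Or.inl rfl)
  have h2 : u ∈ vstar a b (b u) := (mem_vstar a b).2 (Or.inr rfl)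
  have h3 : u ∈ cls c (c u) := (mem_cls c).2 rfl
  have hcard := (Finset.card_le_card hsub).trans <|
    (Finset.card_union_le _ _).trans <| Nat.add_le_add_right (Finset.card_union_le _ _) _
  rw [hNcard, Finset.card_erase_of_mem h1, Finset.card_erase_of_mem h2,
    Finset.card_erase_of_mem h3] at hcard
  have c1 : 1 ≤ (vstar a b (a u)).card := Finset.card_pos.2 ⟨u, h1⟩
  have c2 : 1 ≤ (vstar a b (b u)).card := Finset.card_pos.2 ⟨u, h2⟩
  have c3 : 1 ≤ (cls c (c u)).card := Finset.card_pos.2 ⟨u, h3⟩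
  omega
end

section
variable {V C : Type*} (a b : I12 → V)

open Classical in
/-- signature function for the cross structure w.r.t. disjoint edges r, r'. -/
noncomputable def sig (r r' q : I12) : V × V :=
  ((if mm a b (a r) q then a r else b r), (if mm a b (a r') q then a r' else b r'))

lemma sig_spec {r r' : I12} {Q0 : Finset I12}
    (hcross : ∀ q ∈ Q0, (mm a b (a r) q ∨ mm a b (b r) q) ∧
      (mm a b (a r') q ∨ mm a b (b r') q)) {q : I12} (hq : q ∈ Q0) :
    (mm a b (sig a b r r' q).1 q ∧ ((sig a b r r' q).1 = a r ∨ (sig a b r r' q).1 = b r)) ∧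
    (mm a b (sig a b r r' q).2 q ∧ ((sig a b r r' q).2 = a r' ∨ (sig a b r r' q).2 = b r')) := by
  classical
  obtain ⟨hc1, hc2⟩ := hcross q hq
  constructor
  · by_cases h1 : mm a b (a r) q
    · have e : (sig a b r r' q).1 = a r := by simp [sig, h1]
      rw [e]; exact ⟨h1, Or.inl rfl⟩
    · have e : (sig a b r r' q).1 = b r := by simp [sig, h1]
      rw [e]; exact ⟨hc1.resolve_left h1, Or.inr rfl⟩
  · by_cases h2 : mm a b (a r') q
    · have e : (sig a b r r' q).2 = a r' := by simp [sig, h2]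
      rw [e]; exact ⟨h2, Or.inl rfl⟩
    · have e : (sig a b r r' q).2 = b r' := by simp [sig, h2]
      rw [e]; exact ⟨hc2.resolve_left h2, Or.inr rfl⟩

lemma cross_ne {r r' : I12} (hnm : ¬ ∃ w, mm a b w r ∧ mm a b w r')
    {w w' : V} (hw : w = a r ∨ w = b r) (hw' : w' = a r' ∨ w' = b r') : w ≠ w' := by
  rintro rfl
  exact hnm ⟨w, hw, hw'⟩

lemma cross_inj (hab : ∀ u, a u ≠ b u)
    (hinj : ∀ u v, (a u = a v ∧ b u = b v) ∨ (a u = b v ∧ b u = a v) → u = v)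
    {r r' : I12} (hnm : ¬ ∃ w, mm a b w r ∧ mm a b w r') {Q0 : Finset I12}
    (hcross : ∀ q ∈ Q0, (mm a b (a r) q ∨ mm a b (b r) q) ∧
      (mm a b (a r') q ∨ mm a b (b r') q))
    {q1 q2 : I12} (h1 : q1 ∈ Q0) (h2 : q2 ∈ Q0) (heq : sig a b r r' q1 = sig a b r r' q2) :
    q1 = q2 := by
  obtain ⟨⟨m1, s1⟩, ⟨m2, s2⟩⟩ := sig_spec a b hcross h1
  obtain ⟨⟨m1', _⟩, ⟨m2', _⟩⟩ := sig_spec a b hcross h2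
  have hne : (sig a b r r' q1).1 ≠ (sig a b r r' q1).2 := cross_ne a b hnm s1 s2
  rw [heq] at m1 m2
  rw [heq] at hne
  exact (two_mem a b hab hinj hne m1' m2' m1 m2).symm

lemma cross_card (hab : ∀ u, a u ≠ b u)
    (hinj : ∀ u v, (a u = a v ∧ b u = b v) ∨ (a u = b v ∧ b u = a v) → u = v)
    {r r' : I12} (hnm : ¬ ∃ w, mm a b w r ∧ mm a b w r') {Q0 : Finset I12}
    (hcross : ∀ q ∈ Q0, (mm a b (a r) q ∨ mm a b (b r) q) ∧
      (mm a b (a r') q ∨ mm a b (b r') q)) : Q0.card ≤ 4 := by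
  classical
  have hmaps : ∀ q ∈ Q0, sig a b r r' q ∈
      ({a r, b r} ×ˢ {a r', b r'} : Finset (V × V)) := by
    intro q hq
    obtain ⟨⟨-, s1⟩, ⟨-, s2⟩⟩ := sig_spec a b hcross hq
    simp only [Finset.mem_product, Finset.mem_insert, Finset.mem_singleton]
    exact ⟨s1, s2⟩
  have := Finset.card_le_card_of_injOn _ hmaps
    (fun q1 h1 q2 h2 heq => cross_inj a b hab hinj hnm hcross h1 h2 heq)
  refine this.trans ?_
  rw [Finset.card_product]
  have l1 : ({a r, b r} : Finset V).card ≤ 2 :=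
    (Finset.card_insert_le _ _).trans (by simp)
  have l2 : ({a r', b r'} : Finset V).card ≤ 2 :=
    (Finset.card_insert_le _ _).trans (by simp)
  nlinarith

lemma cross_surj (hab : ∀ u, a u ≠ b u)
    (hinj : ∀ u v, (a u = a v ∧ b u = b v) ∨ (a u = b v ∧ b u = a v) → u = v)
    {r r' : I12} (hnm : ¬ ∃ w, mm a b w r ∧ mm a b w r') {Q0 : Finset I12}
    (hcross : ∀ q ∈ Q0, (mm a b (a r) q ∨ mm a b (b r) q) ∧
      (mm a b (a r') q ∨ mm a b (b r') q))
    (h4 : 4 ≤ Q0.card) {w w' : V} (hw : w = a r ∨ w = b r) (hw' : w' = a r' ∨ w' = b r') :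
    ∃ q ∈ Q0, mm a b w q ∧ mm a b w' q := by
  classical
  have hmaps : ∀ q (hq : q ∈ Q0), sig a b r r' q ∈
      ({a r, b r} ×ˢ {a r', b r'} : Finset (V × V)) := by
    intro q hq
    obtain ⟨⟨-, s1⟩, ⟨-, s2⟩⟩ := sig_spec a b hcross hq
    simp only [Finset.mem_product, Finset.mem_insert, Finset.mem_singleton]
    exact ⟨s1, s2⟩
  have hcardle : ({a r, b r} ×ˢ {a r', b r'} : Finset (V × V)).card ≤ Q0.card := by
    refine le_trans ?_ h4
    rw [Finset.card_product]
    have l1 : ({a r, b r} : Finset V).card ≤ 2 :=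
      (Finset.card_insert_le _ _).trans (by simp)
    have l2 : ({a r', b r'} : Finset V).card ≤ 2 :=
      (Finset.card_insert_le _ _).trans (by simp)
    nlinarith
  have hsurj := Finset.surj_on_of_inj_on_of_card_le (fun q _ => sig a b r r' q) hmaps
    (fun q1 q2 h1 h2 heq => cross_inj a b hab hinj hnm hcross h1 h2 heq) hcardle
  obtain ⟨q, hq, hbq⟩ := hsurj (w, w') (by
    simp only [Finset.mem_product, Finset.mem_insert, Finset.mem_singleton]
    exact ⟨hw, hw'⟩)
  obtain ⟨⟨m1, -⟩, ⟨m2, -⟩⟩ := sig_spec a b hcross hq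
  have hbq' : (w, w') = sig a b r r' q := hbq
  refine ⟨q, hq, ?_, ?_⟩
  · have e1 : (sig a b r r' q).1 = w := by rw [← hbq']
    rwa [e1] at m1
  · have e2 : (sig a b r r' q).2 = w' := by rw [← hbq']
    rwa [e2] at m2
end

section
variable {V C : Type*} (a b : I12 → V) (c : I12 → C)

lemma cls_le3
    (hab : ∀ u, a u ≠ b u)
    (hinj : ∀ u v, (a u = a v ∧ b u = b v) ∨ (a u = b v ∧ b u = a v) → u = v)
    (hdisj : ∀ u w, mm a b w u → mm a b w (sw u) → False)
    (hcol : ∀ u, c u ≠ c (sw u))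
    (hadj : ∀ u v, u ≠ v → v ≠ sw u →
      (∃ w, mm a b w u ∧ mm a b w v) ∨ c u = c v) (γ : C) :
    (cls c γ).card ≤ 3 := by
  classical
  by_contra hlt
  push_neg at hlt
  have h4 : 4 ≤ (cls c γ).card := hlt
  set Q := cls c γ with hQdef
  have hQ6 : Q.card ≤ 6 := cls_le6 c hcol γ
  have hmemQ : ∀ u, u ∈ Q ↔ c u = γ := fun u => mem_cls c
  have hQpr : Set.InjOn pr Q := by
    intro u hu v hv hpq
    rcases pr_eq hpq with h | h
    · exact h
    · subst h
      exact absurd (((hmemQ u).1 hu).trans ((hmemQ (sw u)).1 hv).symm) (hcol u)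
  -- cross structure for any missing pair index
  have hmiss : ∀ i : Fin 6, i ∉ Q.image pr → ∀ q ∈ Q,
      (mm a b (a (Sum.inl i)) q ∨ mm a b (b (Sum.inl i)) q) ∧
      (mm a b (a (Sum.inr i)) q ∨ mm a b (b (Sum.inr i)) q) := by
    intro i hi q hq
    have key : ∀ r : I12, pr r = i → (mm a b (a r) q ∨ mm a b (b r) q) := by
      intro r hpr
      have hrQ : r ∉ Q := fun h => hi (Finset.mem_image.2 ⟨r, h, hpr⟩)
      have hqr : q ≠ r := fun h => hrQ (h ▸ hq)
      have hrsw : r ≠ sw q := by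
        intro h
        exact hi (Finset.mem_image.2 ⟨q, hq, by rw [← pr_sw q, ← h, hpr]⟩)
      have hcq : c q ≠ c r := by
        intro h
        exact hrQ ((hmemQ r).2 (h ▸ (hmemQ q).1 hq))
      rcases hadj q r hqr hrsw with ⟨w, hwq, hwr⟩ | h
      · rcases hwr with h | h
        · exact Or.inl (h ▸ hwq)
        · exact Or.inr (h ▸ hwq)
      · exact absurd h hcq
    exact ⟨key (Sum.inl i) rfl, key (Sum.inr i) rfl⟩
  have hnmi : ∀ i : Fin 6, ¬ ∃ w, mm a b w (Sum.inl i) ∧ mm a b w (Sum.inr i) := by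
    rintro i ⟨w, h1, h2⟩
    exact hdisj (Sum.inl i) w h1 h2
  by_cases h5 : Q.card ≤ 5
  · -- at most 5: find a missing index
    have himg5 : (Q.image pr).card ≤ 5 := (Finset.card_image_le).trans h5
    have hmiss1 : ((Finset.univ : Finset (Fin 6)) \ Q.image pr).Nonempty := by
      rw [← Finset.card_pos, Finset.card_sdiff_of_subset (Finset.subset_univ _)]
      simp only [Finset.card_univ, Fintype.card_fin]
      omega
    obtain ⟨i0, hi0⟩ := hmiss1
    have hi0' : i0 ∉ Q.image pr := (Finset.mem_sdiff.1 hi0).2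
    have hQ4 : Q.card ≤ 4 :=
      cross_card a b hab hinj (hnmi i0) (hmiss i0 hi0')
    have hQeq4 : Q.card = 4 := le_antisymm hQ4 h4
    -- two missing indices
    have h2m : 1 < ((Finset.univ : Finset (Fin 6)) \ Q.image pr).card := by
      rw [Finset.card_sdiff_of_subset (Finset.subset_univ _)]
      have : (Q.image pr).card ≤ 4 := Finset.card_image_le.trans hQ4
      simp only [Finset.card_univ, Fintype.card_fin]
      omega
    obtain ⟨i, hi, j, hj, hij⟩ := Finset.one_lt_card.1 h2m
    have hiQ : i ∉ Q.image pr := (Finset.mem_sdiff.1 hi).2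
    have hjQ : j ∉ Q.image pr := (Finset.mem_sdiff.1 hj).2
    set r : I12 := Sum.inl i
    set r' : I12 := Sum.inr i
    set e : I12 := Sum.inl j
    have heQ : e ∉ Q := fun h => hjQ (Finset.mem_image.2 ⟨e, h, rfl⟩)
    have hnm : ¬ ∃ w, mm a b w r ∧ mm a b w r' := hnmi i
    have hcr := hmiss i hiQ
    have hce := hmiss j hjQ
    have surj := fun {w w'} hw hw' => cross_surj a b hab hinj hnm hcr h4 (w := w) (w' := w') hw hw'
    -- the four cross distinctness facts
    have dAA : a r ≠ a r' := cross_ne a b hnm (Or.inl rfl) (Or.inl rfl)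
    have dAB : a r ≠ b r' := cross_ne a b hnm (Or.inl rfl) (Or.inr rfl)
    have dBA : b r ≠ a r' := cross_ne a b hnm (Or.inr rfl) (Or.inl rfl)
    have dBB : b r ≠ b r' := cross_ne a b hnm (Or.inr rfl) (Or.inr rfl)
    obtain ⟨q11, hq11, m11a, m11b⟩ := surj (Or.inl rfl) (Or.inl rfl)
    obtain ⟨q22, hq22, m22a, m22b⟩ := surj (Or.inr rfl) (Or.inr rfl)
    -- endpoints of e
    have hw1 : ∃ w, (w = a r ∨ w = a r') ∧ mm a b w e := by
      rcases (hce q11 hq11).1 with h | h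
      · exact ⟨a e, mm_resolve a b dAA m11a m11b h, Or.inl rfl⟩
      · exact ⟨b e, mm_resolve a b dAA m11a m11b h, Or.inr rfl⟩
    have hw2 : ∃ w, (w = b r ∨ w = b r') ∧ mm a b w e := by
      rcases (hce q22 hq22).1 with h | h
      · exact ⟨a e, mm_resolve a b dBB m22a m22b h, Or.inl rfl⟩
      · exact ⟨b e, mm_resolve a b dBB m22a m22b h, Or.inr rfl⟩
    obtain ⟨w1, hw1d, hw1m⟩ := hw1
    obtain ⟨w2, hw2d, hw2m⟩ := hw2
    rcases hw1d with rfl | rfl <;> rcases hw2d with rfl | rfl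
    · -- (a r, b r) : e = r
      have he : e = r := two_mem a b hab hinj (hab r) hw1m hw2m (Or.inl rfl) (Or.inr rfl)
      exact hij ((congrArg pr he).symm : pr r = pr e)
    · -- (a r, b r') : e = q12 ∈ Q
      obtain ⟨q12, hq12, m1, m2⟩ := surj (Or.inl rfl) (Or.inr rfl)
      have he : e = q12 := two_mem a b hab hinj dAB hw1m hw2m m1 m2
      exact heQ (he ▸ hq12)
    · -- (a r', b r) : e = q21 ∈ Q
      obtain ⟨q21, hq21, m1, m2⟩ := surj (Or.inr rfl) (Or.inl rfl)
      have he : e = q21 := two_mem a b hab hinj dBA.symm hw1m hw2m m2 m1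
      exact heQ (he ▸ hq21)
    · -- (a r', b r') : e = r'
      have he : e = r' := two_mem a b hab hinj (hab r') hw1m hw2m (Or.inl rfl) (Or.inr rfl)
      exact hij ((congrArg pr he).symm : pr r' = pr e)
  · -- Q.card = 6
    have hQeq6 : Q.card = 6 := le_antisymm hQ6 (by omega)
    have himg : Q.image pr = Finset.univ := by
      apply Finset.eq_univ_of_card
      rw [Finset.card_image_of_injOn hQpr, hQeq6]
      simp
    have hQsw : ∀ u, u ∉ Q → sw u ∈ Q := by
      intro u hu
      have : pr u ∈ Q.image pr := by rw [himg]; exact Finset.mem_univ _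
      obtain ⟨q, hq, hpq⟩ := Finset.mem_image.1 this
      rcases pr_eq hpq with h | h
      · exact absurd (h ▸ hq) hu
      · rwa [h, sw_sw]
    set R : Finset I12 := Finset.univ \ Q with hRdef
    have hmemR : ∀ u, u ∈ R ↔ u ∉ Q := by
      intro u; simp [hRdef]
    have hRcard : R.card = 6 := by
      rw [hRdef, Finset.card_sdiff_of_subset (Finset.subset_univ _), hQeq6]
      simp [card_I12]
    have hswR : ∀ u ∈ Q, sw u ∈ R := by
      intro u hu
      refine (hmemR _).2 fun h => hcol u ?_
      exact (((hmemQ u).1 hu).trans ((hmemQ (sw u)).1 h).symm)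
    have hswQ : ∀ u ∈ R, sw u ∈ Q := fun u hu => hQsw u ((hmemR u).1 hu)
    have hmeet : ∀ s q, s ∈ R → q ∈ Q → q ≠ sw s → ∃ w, mm a b w s ∧ mm a b w q := by
      intro s q hs hq hqsw
      have hsq : s ≠ q := fun h => ((hmemR s).1 hs) (h ▸ hq)
      have hcs : c s ≠ c q := by
        intro h
        exact ((hmemR s).1 hs) ((hmemQ s).2 (h.trans ((hmemQ q).1 hq)))
      exact (hadj s q hsq hqsw).resolve_right hcs
    by_cases hpair : ∃ r ∈ R, ∃ r' ∈ R, r ≠ r' ∧ ¬ ∃ w, mm a b w r ∧ mm a b w r'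
    · -- case (b): two disjoint edges in R
      obtain ⟨r, hr, r', hr', hrr, hnm⟩ := hpair
      have hswr : sw r ∈ Q := hswQ r hr
      have hswr' : sw r' ∈ Q := hswQ r' hr'
      have hcβ : c r = c r' := by
        have h1 : r' ≠ sw r := fun h => ((hmemR r').1 hr') (h ▸ hswr)
        exact (hadj r r' hrr h1).resolve_left hnm
      set Q' : Finset I12 := (Q.erase (sw r)).erase (sw r') with hQ'def
      have hswne : sw r ≠ sw r' := fun h => hrr (by rw [← sw_sw r, h, sw_sw])
      have hQ'card : Q'.card = 4 := by
        rw [hQ'def, Finset.card_erase_of_mem, Finset.card_erase_of_mem hswr, hQeq6]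
        exact Finset.mem_erase.2 ⟨hswne.symm, hswr'⟩
      have hQ'sub : Q' ⊆ Q := (Finset.erase_subset _ _).trans (Finset.erase_subset _ _)
      have hQ'mem : ∀ q, q ∈ Q' ↔ q ∈ Q ∧ q ≠ sw r ∧ q ≠ sw r' := by
        intro q
        simp only [hQ'def, Finset.mem_erase]
        tauto
      have hcrossQ' : ∀ q ∈ Q', (mm a b (a r) q ∨ mm a b (b r) q) ∧
          (mm a b (a r') q ∨ mm a b (b r') q) := by
        intro q hq
        obtain ⟨hqQ, hq1, hq2⟩ := (hQ'mem q).1 hq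
        constructor
        · obtain ⟨w, hws, hwq⟩ := hmeet r q hr hqQ hq1
          rcases hws with h | h
          · exact Or.inl (h ▸ hwq)
          · exact Or.inr (h ▸ hwq)
        · obtain ⟨w, hws, hwq⟩ := hmeet r' q hr' hqQ hq2
          rcases hws with h | h
          · exact Or.inl (h ▸ hwq)
          · exact Or.inr (h ▸ hwq)
      have surj := fun {w w'} hw hw' => cross_surj a b hab hinj hnm hcrossQ'
        (by omega : 4 ≤ Q'.card) (w := w) (w' := w') hw hw'
      have dAA : a r ≠ a r' := cross_ne a b hnm (Or.inl rfl) (Or.inl rfl)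
      have dAB : a r ≠ b r' := cross_ne a b hnm (Or.inl rfl) (Or.inr rfl)
      have dBA : b r ≠ a r' := cross_ne a b hnm (Or.inr rfl) (Or.inl rfl)
      have dBB : b r ≠ b r' := cross_ne a b hnm (Or.inr rfl) (Or.inr rfl)
      obtain ⟨qa, hqa, ma1, ma2⟩ := surj (Or.inl rfl) (Or.inl rfl)
      obtain ⟨qd, hqd, md1, md2⟩ := surj (Or.inr rfl) (Or.inr rfl)
      -- every edge of R has color c r
      have hRcol : ∀ s ∈ R, c s = c r := by
        intro s hs
        by_cases h1 : s = r
        · rw [h1]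
        by_cases h2 : s = r'
        · rw [h2, hcβ]
        by_contra hcs
        have hswsQ' : sw s ∈ Q' := by
          refine (hQ'mem _).2 ⟨hswQ s hs, ?_, ?_⟩
          · exact fun h => h1 (by rw [← sw_sw s, h, sw_sw])
          · exact fun h => h2 (by rw [← sw_sw s, h, sw_sw])
        obtain ⟨hcs1, hcs2⟩ := hcrossQ' (sw s) hswsQ'
        -- s meets r
        have hmr : ∃ w, mm a b w s ∧ mm a b w r := by
          have hrns : r ≠ sw s := fun h => ((hmemR r).1 hr) (h ▸ hswQ s hs)
          have hsr : s ≠ r := h1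
          rcases hadj s r hsr hrns with h | h
          · exact h
          · exact absurd (h.trans hcβ ▸ h) (fun _ => hcs h)
        obtain ⟨w1, hw1s, hw1r⟩ := hmr
        -- s meets r'
        have hmr' : ∃ w, mm a b w s ∧ mm a b w r' := by
          have hrns : r' ≠ sw s := fun h => ((hmemR r').1 hr') (h ▸ hswQ s hs)
          rcases hadj s r' h2 hrns with h | h
          · exact h
          · exact absurd (h.trans hcβ.symm) hcs
        obtain ⟨w2, hw2s, hw2r'⟩ := hmr'
        -- w1 avoids the endpoint of sw s on the r side
        have hw1' : w1 = a r ∨ w1 = b r := hw1r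
        have hw2' : w2 = a r' ∨ w2 = b r' := hw2r'
        have hnot : ∀ w, mm a b w s → ¬ mm a b w (sw s) := fun w h h' => hdisj s w h h'
        -- conclude s equals an element of Q'
        obtain ⟨q3, hq3, n1, n2⟩ := surj hw1' hw2'
        have : s = q3 := two_mem a b hab hinj (cross_ne a b hnm hw1' hw2')
          hw1s hw2s n1 n2
        exact ((hmemR s).1 hs) (this ▸ hQ'sub hq3)
      -- qa and qd are disjoint
      have hnmad : ¬ ∃ w, mm a b w qa ∧ mm a b w qd := by
        rintro ⟨w, hwa, hwd⟩
        rcases mm_resolve a b dAA ma1 ma2 hwa with rfl | rfl <;>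
          rcases mm_resolve a b dBB md1 md2 hwd with h | h
        · exact hab r h
        · exact dAB h
        · exact dBA h.symm
        · exact hab r' h
      -- pick s1 in R away from r, r', sw qa, sw qd
      have hs1ex : (R \ {r, r', sw qa, sw qd}).Nonempty := by
        rw [← Finset.card_pos]
        have h1 := Finset.le_card_sdiff ({r, r', sw qa, sw qd} : Finset I12) R
        have h2 : ({r, r', sw qa, sw qd} : Finset I12).card ≤ 4 := by
          apply (Finset.card_insert_le _ _).trans
          apply Nat.succ_le_succ
          apply (Finset.card_insert_le _ _).trans
          apply Nat.succ_le_succ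
          apply (Finset.card_insert_le _ _).trans
          simp
        omega
      obtain ⟨s1, hs1⟩ := hs1ex
      obtain ⟨hs1R, hs1n⟩ := Finset.mem_sdiff.1 hs1
      have hs1r : s1 ≠ r := fun h => hs1n (by simp [h])
      have hs1r' : s1 ≠ r' := fun h => hs1n (by simp [h])
      have hs1a : s1 ≠ sw qa := fun h => hs1n (by simp [h])
      have hs1d : s1 ≠ sw qd := fun h => hs1n (by simp [h])
      -- s1 meets qa
      obtain ⟨w1, hw1s, hw1a⟩ := hmeet s1 qa hs1R (hQ'sub hqa)
        (fun h => hs1a (by rw [← sw_sw s1, h]))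
      obtain ⟨w2, hw2s, hw2d⟩ := hmeet s1 qd hs1R (hQ'sub hqd)
        (fun h => hs1d (by rw [← sw_sw s1, h]))
      have hw1' : w1 = a r ∨ w1 = a r' := mm_resolve a b dAA ma1 ma2 hw1a
      have hw2' : w2 = b r ∨ w2 = b r' := mm_resolve a b dBB md1 md2 hw2d
      rcases hw1' with rfl | rfl <;> rcases hw2' with rfl | rfl
      · -- (a r, b r) : s1 = r
        exact hs1r (two_mem a b hab hinj (hab r) hw1s hw2s (Or.inl rfl) (Or.inr rfl))
      · -- (a r, b r') : s1 = q' ∈ Q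
        obtain ⟨q', hq', n1, n2⟩ := surj (Or.inl rfl) (Or.inr rfl)
        have : s1 = q' := two_mem a b hab hinj dAB hw1s hw2s n1 n2
        exact ((hmemR s1).1 hs1R) (this ▸ hQ'sub hq')
      · -- (a r', b r) : s1 = q'' ∈ Q
        obtain ⟨q'', hq'', n1, n2⟩ := surj (Or.inr rfl) (Or.inl rfl)
        have : s1 = q'' := two_mem a b hab hinj dBA.symm hw1s hw2s n2 n1
        exact ((hmemR s1).1 hs1R) (this ▸ hQ'sub hq'')
      · -- (a r', b r') : s1 = r'
        exact hs1r' (two_mem a b hab hinj (hab r') hw1s hw2s (Or.inl rfl) (Or.inr rfl))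
    · -- case (a): R pairwise intersecting
      push_neg at hpair
      have hmeetR : ∀ r ∈ R, ∀ r' ∈ R, r ≠ r' → ∃ w, mm a b w r ∧ mm a b w r' := hpair
      obtain ⟨r0, hr0⟩ := Finset.card_pos.1 (by omega : 0 < R.card)
      have hcomm : ∃ wc, ∀ s ∈ R, mm a b wc s := by
        by_contra hno
        push_neg at hno
        obtain ⟨r1, hr1R, hn1⟩ := hno (a r0)
        obtain ⟨r2, hr2R, hn2⟩ := hno (b r0)
        have hr10 : r1 ≠ r0 := fun h => hn1 (h ▸ Or.inl rfl)
        have hr20 : r2 ≠ r0 := fun h => hn2 (h ▸ Or.inr rfl)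
        have m1 : mm a b (b r0) r1 := by
          obtain ⟨w, hw0, hw1⟩ := hmeetR r0 hr0 r1 hr1R hr10.symm
          rcases hw0 with rfl | rfl
          · exact absurd hw1 hn1
          · exact hw1
        have m2 : mm a b (a r0) r2 := by
          obtain ⟨w, hw0, hw2⟩ := hmeetR r0 hr0 r2 hr2R hr20.symm
          rcases hw0 with rfl | rfl
          · exact hw2
          · exact absurd hw2 hn2
        have hr12 : r1 ≠ r2 := fun h => hn2 (h ▸ m1)
        obtain ⟨d, hd1, hd2⟩ := hmeetR r1 hr1R r2 hr2R hr12
        have hda : d ≠ a r0 := fun h => hn1 (h ▸ hd1)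
        have hdb : d ≠ b r0 := fun h => hn2 (h ▸ hd2)
        have hr3ex : (R \ {r0, r1, r2}).Nonempty := by
          rw [← Finset.card_pos]
          have h1 := Finset.le_card_sdiff ({r0, r1, r2} : Finset I12) R
          have h2 : ({r0, r1, r2} : Finset I12).card ≤ 3 := by
            apply (Finset.card_insert_le _ _).trans
            apply Nat.succ_le_succ
            apply (Finset.card_insert_le _ _).trans
            simp
          omega
        obtain ⟨r3, hr3⟩ := hr3ex
        obtain ⟨hr3R, hr3n⟩ := Finset.mem_sdiff.1 hr3
        have hr30 : r3 ≠ r0 := fun h => hr3n (by simp [h])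
        have hr31 : r3 ≠ r1 := fun h => hr3n (by simp [h])
        have hr32 : r3 ≠ r2 := fun h => hr3n (by simp [h])
        obtain ⟨w, hw0, hw3⟩ := hmeetR r0 hr0 r3 hr3R hr30.symm
        rcases hw0 with rfl | rfl
        · -- a r0 ∈ r3
          obtain ⟨t, ht1, ht3⟩ := hmeetR r1 hr1R r3 hr3R hr31.symm
          rcases mm_resolve a b (Ne.symm hdb) m1 hd1 ht1 with rfl | rfl
          · exact hr30 (two_mem a b hab hinj (hab r0) hw3 ht3 (Or.inl rfl) (Or.inr rfl))
          · exact hr32 (two_mem a b hab hinj hda.symm hw3 ht3 m2 hd2)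
        · -- b r0 ∈ r3
          obtain ⟨t, ht2, ht3⟩ := hmeetR r2 hr2R r3 hr3R hr32.symm
          rcases mm_resolve a b (Ne.symm hda) m2 hd2 ht2 with rfl | rfl
          · exact hr30 (two_mem a b hab hinj (hab r0).symm hw3 ht3 (Or.inr rfl) (Or.inl rfl))
          · exact hr31 (two_mem a b hab hinj hdb.symm hw3 ht3 m1 hd1)
      obtain ⟨wc, hwc⟩ := hcomm
      -- pick u0 ∈ Q and derive 5 ≤ 2
      obtain ⟨u0, hu0⟩ := Finset.card_pos.1 (by omega : 0 < Q.card)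
      have hnotu0 : ¬ mm a b wc u0 := fun h => hdisj u0 wc h (hwc (sw u0) (hswR u0 hu0))
      set R' : Finset I12 := R.erase (sw u0) with hR'def
      have hR'card : R'.card = 5 := by
        rw [hR'def, Finset.card_erase_of_mem (hswR u0 hu0), hRcard]
      have hF2 : ∀ s ∈ R', ∃ w, mm a b w s ∧ mm a b w u0 := by
        intro s hs
        obtain ⟨hsn, hsR⟩ := Finset.mem_erase.1 hs
        exact hmeet s u0 hsR hu0 (fun h => hsn (by rw [← sw_sw s, h]))
      have hcard := Finset.card_le_card_of_injOn
        (fun s => if mm a b (a u0) s then a u0 else b u0)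
        (fun s _ => by
          by_cases h : mm a b (a u0) s <;> simp [h])
        (s := R') (t := ({a u0, b u0} : Finset V)) ?_
      · rw [hR'card] at hcard
        have : ({a u0, b u0} : Finset V).card ≤ 2 :=
          (Finset.card_insert_le _ _).trans (by simp)
        omega
      · intro s1 hs1 s2 hs2 heq
        have key : ∀ s ∈ R', mm a b (if mm a b (a u0) s then a u0 else b u0) s ∧
            mm a b (if mm a b (a u0) s then a u0 else b u0) u0 := by
          intro s hs
          by_cases h : mm a b (a u0) s
          · rw [if_pos h]; exact ⟨h, Or.inl rfl⟩
          · rw [if_neg h]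
            obtain ⟨w, hws, hwu⟩ := hF2 s hs
            rcases hwu with rfl | rfl
            · exact absurd hws h
            · exact ⟨hws, Or.inr rfl⟩
        obtain ⟨k1s, k1u⟩ := key s1 hs1
        obtain ⟨k2s, k2u⟩ := key s2 hs2
        have heq' : (if mm a b (a u0) s1 then a u0 else b u0) =
            (if mm a b (a u0) s2 then a u0 else b u0) := heq
        rw [heq'] at k1s
        have hR'R : ∀ s ∈ R', s ∈ R := fun s hs => (Finset.mem_erase.1 hs).2
        have hne : (if mm a b (a u0) s2 then a u0 else b u0) ≠ wc := by
          intro h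
          rw [h] at k2u
          exact hnotu0 k2u
        exact two_mem a b hab hinj hne k1s (hwc s1 (hR'R s1 hs1)) k2s (hwc s2 (hR'R s2 hs2))
end

theorem core_false {V C : Type*} (a b : I12 → V) (c : I12 → C)
    (hab : ∀ u, a u ≠ b u)
    (hinj : ∀ u v, (a u = a v ∧ b u = b v) ∨ (a u = b v ∧ b u = a v) → u = v)
    (hdisj : ∀ u w, mm a b w u → mm a b w (sw u) → False)
    (hcol : ∀ u, c u ≠ c (sw u))
    (hadj : ∀ u v, u ≠ v → v ≠ sw u →
      (∃ w, mm a b w u ∧ mm a b w v) ∨ c u = c v) : False := by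
  classical
  have hdeg : ∀ u, 10 ≤ (vstar a b (a u)).card + (vstar a b (b u)).card := by
    intro u
    have h13 := edge_deg a b c hdisj hadj u
    have h3 := cls_le3 a b c hab hinj hdisj hcol hadj (c u)
    omega
  have hstar6 : ∀ w, (vstar a b w).card ≤ 6 := star_le6 a b hdisj
  have hdeg4 : ∀ u, 4 ≤ (vstar a b (a u)).card ∧ 4 ≤ (vstar a b (b u)).card := by
    intro u
    have h1 := hstar6 (a u)
    have h2 := hstar6 (b u)
    have h3 := hdeg u
    omega
  set W : Finset V := (Finset.univ.image a) ∪ (Finset.univ.image b) with hWdef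
  have hWmem4 : ∀ w ∈ W, 4 ≤ (vstar a b w).card := by
    intro w hw
    rcases Finset.mem_union.1 hw with h | h
    · obtain ⟨u, -, rfl⟩ := Finset.mem_image.1 h
      exact (hdeg4 u).1
    · obtain ⟨u, -, rfl⟩ := Finset.mem_image.1 h
      exact (hdeg4 u).2
  have hWsub : ∀ u : I12, ({a u, b u} : Finset V) ⊆ W := by
    intro u w hw
    rcases Finset.mem_insert.1 hw with rfl | hw
    · exact Finset.mem_union_left _ (Finset.mem_image.2 ⟨u, Finset.mem_univ u, rfl⟩)
    · rw [Finset.mem_singleton.1 hw]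
      exact Finset.mem_union_right _ (Finset.mem_image.2 ⟨u, Finset.mem_univ u, rfl⟩)
  have hsum : ∑ w ∈ W, (vstar a b w).card = 24 := by
    have hcf : ∀ w : V, (vstar a b w).card = ∑ u : I12, if mm a b w u then 1 else 0 := by
      intro w
      unfold vstar
      rw [Finset.card_filter]
    rw [Finset.sum_congr rfl (fun w _ => hcf w), Finset.sum_comm]
    have inner : ∀ u : I12, (∑ w ∈ W, if mm a b w u then 1 else 0) = 2 := by
      intro u
      rw [← Finset.card_filter]
      have hfil : W.filter (fun w => mm a b w u) = {a u, b u} := by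
        ext w
        simp only [Finset.mem_filter, Finset.mem_insert, Finset.mem_singleton]
        constructor
        · rintro ⟨-, h⟩
          exact h
        · rintro (rfl | rfl)
          · exact ⟨hWsub u (Finset.mem_insert_self _ _), Or.inl rfl⟩
          · exact ⟨hWsub u (by simp), Or.inr rfl⟩
      rw [hfil]
      exact Finset.card_pair (hab u)
    rw [Finset.sum_congr rfl (fun u _ => inner u), Finset.sum_const, Finset.card_univ, card_I12]
    norm_num
  have hW6 : W.card ≤ 6 := by
    have h := Finset.card_nsmul_le_sum W (fun w => (vstar a b w).card) 4 hWmem4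
    rw [hsum] at h
    have h' : W.card * 4 ≤ 24 := by simpa [smul_eq_mul] using h
    omega
  have hchoose : 12 ≤ W.card.choose 2 := by
    have hmaps : ∀ u : I12, u ∈ Finset.univ → ({a u, b u} : Finset V) ∈ Finset.powersetCard 2 W :=
      fun u _ => Finset.mem_powersetCard.2 ⟨hWsub u, Finset.card_pair (hab u)⟩
    have hinj2 : Set.InjOn (fun u : I12 => ({a u, b u} : Finset V)) ↑(Finset.univ : Finset I12) := by
      intro u _ v _ heq
      simp only at heq
      have h1 : a u ∈ ({a v, b v} : Finset V) := by rw [← heq]; simp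
      have h2 : b u ∈ ({a v, b v} : Finset V) := by rw [← heq]; simp
      simp only [Finset.mem_insert, Finset.mem_singleton] at h1 h2
      exact two_mem a b hab hinj (hab u) (Or.inl rfl) (Or.inr rfl) h1 h2
    have h := Finset.card_le_card_of_injOn _ hmaps hinj2
    rwa [Finset.card_univ, card_I12, Finset.card_powersetCard] at h
  have hW6' : 6 ≤ W.card := by
    by_contra hcon
    push_neg at hcon
    have h5 : W.card ≤ 5 := by omega
    have hm : W.card.choose 2 ≤ Nat.choose 5 2 := Nat.choose_mono 2 h5
    have h10 : Nat.choose 5 2 = 10 := by decide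
    omega
  have hsplit : (∑ w ∈ W \ ({a (Sum.inl 0), b (Sum.inl 0)} : Finset V), (vstar a b w).card) +
      ∑ w ∈ ({a (Sum.inl 0), b (Sum.inl 0)} : Finset V), (vstar a b w).card =
      ∑ w ∈ W, (vstar a b w).card := Finset.sum_sdiff (hWsub (Sum.inl 0))
  have hpairsum : ∑ w ∈ ({a (Sum.inl 0), b (Sum.inl 0)} : Finset V), (vstar a b w).card
      = (vstar a b (a (Sum.inl 0))).card + (vstar a b (b (Sum.inl 0))).card :=
    Finset.sum_pair (hab (Sum.inl 0))
  have hsd : (W \ ({a (Sum.inl 0), b (Sum.inl 0)} : Finset V)).card * 4 ≤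
      ∑ w ∈ W \ ({a (Sum.inl 0), b (Sum.inl 0)} : Finset V), (vstar a b w).card := by
    have h := Finset.card_nsmul_le_sum (W \ ({a (Sum.inl 0), b (Sum.inl 0)} : Finset V))
      (fun w => (vstar a b w).card) 4
      (fun w hw => hWmem4 w (Finset.mem_sdiff.1 hw).1)
    simpa [smul_eq_mul] using h
  have hcardsd : (W \ ({a (Sum.inl 0), b (Sum.inl 0)} : Finset V)).card = W.card - 2 := by
    rw [Finset.card_sdiff_of_subset (hWsub (Sum.inl 0)), Finset.card_pair (hab (Sum.inl 0))]
  have hd0 := hdeg (Sum.inl 0)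
  rw [hpairsum, hsum] at hsplit
  rw [hcardsd] at hsd
  omega

end AuxiliaryCLProof

/-- The complement of `6K₂` is not a color-line graph. -/
theorem compl_sixK2_not_colorLine : ¬ IsColorLineGraph sixK2ᶜ := by
  rintro ⟨V, C, _, H, φ, ⟨iso⟩⟩
  classical
  have hex : ∀ z : Sym2 V, ∃ x y, z = s(x, y) :=
    fun z => Sym2.inductionOn z (fun x y => ⟨x, y, rfl⟩)
  choose f g hfg using fun u : I12 => hex ((iso u : H.edgeSet) : Sym2 V)
  have hK : ∀ u v : I12, sixK2.Adj u v ↔ v = sw u := by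
    intro u v
    constructor
    · rintro ⟨i, ⟨rfl, rfl⟩ | ⟨rfl, rfl⟩⟩ <;> rfl
    · rintro rfl
      rcases u with i | i
      · exact ⟨i, Or.inl ⟨rfl, rfl⟩⟩
      · exact ⟨i, Or.inr ⟨rfl, rfl⟩⟩
  have hmap : ∀ u v : I12, sixK2ᶜ.Adj u v ↔ (colorLineGraph H φ).Adj (iso u) (iso v) :=
    fun u v => (iso.map_adj_iff).symm
  have hmem : ∀ (u : I12) (w : V), w ∈ ((iso u : H.edgeSet) : Sym2 V) ↔ mm f g w u := by
    intro u w
    rw [hfg u]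
    exact Sym2.mem_iff
  have hab : ∀ u, f u ≠ g u := by
    intro u h
    have hd := H.not_isDiag_of_mem_edgeSet (iso u).2
    rw [hfg u] at hd
    exact hd (Sym2.mk_isDiag_iff.2 h)
  have hinj : ∀ u v, (f u = f v ∧ g u = g v) ∨ (f u = g v ∧ g u = f v) → u = v := by
    intro u v h
    have h1 : ((iso u : H.edgeSet) : Sym2 V) = ((iso v : H.edgeSet) : Sym2 V) := by
      rw [hfg u, hfg v]
      exact Sym2.eq_iff.2 h
    exact iso.toEquiv.injective (Subtype.coe_injective h1)
  set c : I12 → C := fun u => φ (iso u) with hc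
  have hnadj : ∀ u : I12, ¬ (colorLineGraph H φ).Adj (iso u) (iso (sw u)) := by
    intro u h
    have h2 := (hmap u (sw u)).2 h
    rw [SimpleGraph.compl_adj] at h2
    exact h2.2 ((hK u (sw u)).2 rfl)
  have hisone : ∀ u : I12, iso u ≠ iso (sw u) :=
    fun u h => (sw_ne u).symm (iso.toEquiv.injective h)
  have hdisj : ∀ u w, mm f g w u → mm f g w (sw u) → False := by
    intro u w h1 h2
    exact hnadj u ⟨hisone u, Or.inl ⟨w, (hmem u w).2 h1, (hmem (sw u) w).2 h2⟩⟩
  have hcol : ∀ u, c u ≠ c (sw u) := by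
    intro u h
    exact hnadj u ⟨hisone u, Or.inr h⟩
  have hadj : ∀ u v, u ≠ v → v ≠ sw u →
      (∃ w, mm f g w u ∧ mm f g w v) ∨ c u = c v := by
    intro u v hne hnsw
    have h1 : sixK2ᶜ.Adj u v :=
      (SimpleGraph.compl_adj _ _ _).2 ⟨hne, fun h => hnsw ((hK u v).1 h)⟩
    obtain ⟨-, h2⟩ := (hmap u v).1 h1
    rcases h2 with ⟨w, hw1, hw2⟩ | h
    · exact Or.inl ⟨w, (hmem u w).1 hw1, (hmem v w).1 hw2⟩
    · exact Or.inr h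
  exact core_false f g c hab hinj hdisj hcol hadj
end

section
/- For every integer k ≥ 1 and every finite simple graph G: G is a k-color-line graph if and only if the graph G + K1, obtained from G by adding one new isolated vertex, is a (k+1)-color-line graph. -/
open SimpleGraph

/-! ### Auxiliary constructions for the forward direction -/

section Forward

variable {V : Type} (H : SimpleGraph V)

/-- The new edge joining the two added vertices. -/
def newE (V : Type) : Sym2 (V ⊕ Bool) := s(Sum.inr false, Sum.inr true)

/-- `H` plus one new disjoint edge. -/
def bigH : SimpleGraph (V ⊕ Bool) where
  Adj x y := match x, y with
    | .inl a, .inl b => H.Adj a b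
    | .inr a, .inr b => a ≠ b
    | _, _ => False
  symm := by
    constructor
    rintro (a|a) (b|b) h
    · exact h.symm
    · exact h.elim
    · exact h.elim
    · exact fun h' => h h'.symm
  loopless := by
    constructor
    rintro (a|a) h
    · exact H.loopless.irrefl a h
    · exact h rfl

lemma mem_bigH_edgeSet {e : Sym2 (V ⊕ Bool)} :
    e ∈ (bigH H).edgeSet ↔ (∃ s ∈ H.edgeSet, Sym2.map Sum.inl s = e) ∨ e = newE V := by
  refine Sym2.ind (fun x y => ?_) e
  constructor
  · intro h
    rw [SimpleGraph.mem_edgeSet] at h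
    match x, y with
    | .inl a, .inl b =>
        exact Or.inl ⟨s(a, b), h, rfl⟩
    | .inr a, .inr b =>
        right
        have hab : a ≠ b := h
        unfold newE
        match a, b with
        | false, true => rfl
        | true, false => exact Sym2.eq_swap
        | false, false => exact absurd rfl hab
        | true, true => exact absurd rfl hab
  · rintro (⟨s, hs, hmap⟩ | h)
    · refine Sym2.ind (fun a b hab hm => ?_) s hs hmap
      simp only [Sym2.map_pair_eq] at hm
      rw [← hm]
      exact hab
    · rw [SimpleGraph.mem_edgeSet]
      have : s(x, y) = s(Sum.inr false, Sum.inr true) := h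
      rw [Sym2.eq_iff] at this
      rcases this with ⟨hx, hy⟩ | ⟨hx, hy⟩ <;> subst hx <;> subst hy <;> simp [bigH]

lemma newE_not_mem_inl {v : V} : (Sum.inl v : V ⊕ Bool) ∉ newE V := by
  intro h
  rcases Sym2.mem_iff.mp h with h | h <;> exact Sum.inl_ne_inr h

lemma map_inl_ne_newE (s : Sym2 V) : Sym2.map Sum.inl s ≠ newE V := by
  intro h
  refine Sym2.ind (fun a b h => ?_) s h
  rw [Sym2.map_pair_eq] at h
  have : (Sum.inl a : V ⊕ Bool) ∈ newE V := by rw [← h]; exact Sym2.mem_mk_left _ _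
  exact newE_not_mem_inl this

lemma mem_bigH_of_mem (s : Sym2 V) (hs : s ∈ H.edgeSet) :
    Sym2.map Sum.inl s ∈ (bigH H).edgeSet :=
  (mem_bigH_edgeSet H).mpr (Or.inl ⟨s, hs, rfl⟩)

lemma newE_mem : newE V ∈ (bigH H).edgeSet := (mem_bigH_edgeSet H).mpr (Or.inr rfl)

variable {k : ℕ} (φ : H.edgeSet → Fin k)

open Classical in
noncomputable def bigφ : (bigH H).edgeSet → Fin (k + 1) := fun e =>
  if h : ∃ s ∈ H.edgeSet, Sym2.map Sum.inl s = (e : Sym2 (V ⊕ Bool)) then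
    Fin.castSucc (φ ⟨h.choose, h.choose_spec.1⟩)
  else Fin.last k

lemma bigφ_map (s : H.edgeSet) (hm : Sym2.map Sum.inl (s : Sym2 V) ∈ (bigH H).edgeSet) :
    bigφ H φ ⟨Sym2.map Sum.inl (s : Sym2 V), hm⟩ = Fin.castSucc (φ s) := by
  have h : ∃ t ∈ H.edgeSet,
      (Sym2.map Sum.inl t : Sym2 (V ⊕ Bool)) = Sym2.map Sum.inl (s : Sym2 V) :=
    ⟨s, s.2, rfl⟩
  unfold bigφ
  rw [dif_pos h]
  have heq : (⟨h.choose, h.choose_spec.1⟩ : H.edgeSet) = s :=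
    Subtype.ext (Sym2.map.injective Sum.inl_injective h.choose_spec.2)
  rw [heq]

lemma bigφ_newE (hm : newE V ∈ (bigH H).edgeSet) : bigφ H φ ⟨newE V, hm⟩ = Fin.last k := by
  unfold bigφ
  rw [dif_neg]
  rintro ⟨s, -, hs⟩
  exact map_inl_ne_newE s hs

end Forward

/-! ### Auxiliary constructions for the backward direction -/

section Backward

variable {V : Type} (H : SimpleGraph V) {k : ℕ} (φ : H.edgeSet → Fin (k + 1)) (e0 : H.edgeSet)

/-- `H` with the edge `e0` deleted. -/
def smallH : SimpleGraph V := H.deleteEdges {(e0 : Sym2 V)}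

lemma mem_smallH_edgeSet {e : Sym2 V} :
    e ∈ (smallH H e0).edgeSet ↔ e ∈ H.edgeSet ∧ e ≠ (e0 : Sym2 V) := by
  rw [smallH, SimpleGraph.edgeSet_deleteEdges]
  simp [Set.mem_diff]

/-- Lift an edge of `smallH` back to an edge of `H`. -/
def liftE (f : (smallH H e0).edgeSet) : H.edgeSet :=
  ⟨(f : Sym2 V), ((mem_smallH_edgeSet H e0).mp f.2).1⟩

lemma liftE_ne (f : (smallH H e0).edgeSet) : liftE H e0 f ≠ e0 := by
  intro h
  exact ((mem_smallH_edgeSet H e0).mp f.2).2 (congrArg Subtype.val h)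

variable (hiso : ∀ f : H.edgeSet, f ≠ e0 → ¬ (colorLineGraph H φ).Adj e0 f)

include hiso in
lemma color_ne (f : H.edgeSet) (hf : f ≠ e0) : φ f ≠ φ e0 := by
  intro h
  exact hiso f hf ⟨hf.symm, Or.inr h.symm⟩

include hiso in
lemma isSome_aux (f : (smallH H e0).edgeSet) :
    (finSuccEquiv' (φ e0) (φ (liftE H e0 f))).isSome := by
  rcases ho : finSuccEquiv' (φ e0) (φ (liftE H e0 f)) with _ | x
  · exfalso
    have : φ (liftE H e0 f) = φ e0 := by
      apply (finSuccEquiv' (φ e0)).injective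
      rw [ho, finSuccEquiv'_at]
    exact color_ne H φ e0 hiso _ (liftE_ne H e0 f) this
  · rfl

noncomputable def smallφ : (smallH H e0).edgeSet → Fin k := fun f =>
  (finSuccEquiv' (φ e0) (φ (liftE H e0 f))).get (isSome_aux H φ e0 hiso f)

lemma smallφ_eq_iff (f g : (smallH H e0).edgeSet) :
    smallφ H φ e0 hiso f = smallφ H φ e0 hiso g ↔ φ (liftE H e0 f) = φ (liftE H e0 g) := by
  constructor
  · intro h
    apply (finSuccEquiv' (φ e0)).injective
    rw [← Option.some_get (isSome_aux H φ e0 hiso f), ← Option.some_get (isSome_aux H φ e0 hiso g)]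
    exact congrArg some h
  · intro h
    apply Option.some_injective
    simp only [smallφ]
    rw [Option.some_get, Option.some_get, h]

end Backward

/-- `G` is a `k`-color-line graph iff `G + K₁` (adding one isolated vertex)
is a `(k+1)`-color-line graph. -/
theorem kColorLine_iff_addIsolated {α : Type} [Fintype α] (k : ℕ) (hk : 1 ≤ k)
    (G : SimpleGraph α) :
    IsKColorLineGraph k G ↔
      IsKColorLineGraph (k + 1) (G.map (Function.Embedding.some : α ↪ Option α)) := by
  constructor
  · rintro ⟨V, instV, H, φ, ⟨θ⟩⟩
    refine ⟨V ⊕ Bool, inferInstance, bigH H, bigφ H φ, ⟨?_⟩⟩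
    -- vertex bijection
    have hf : ∀ a : α, Sym2.map Sum.inl ((θ a : H.edgeSet) : Sym2 V) ∈ (bigH H).edgeSet :=
      fun a => mem_bigH_of_mem H _ (θ a).2
    let f : Option α → (bigH H).edgeSet := fun x =>
      match x with
      | none => ⟨newE V, newE_mem H⟩
      | some a => ⟨Sym2.map Sum.inl ((θ a : H.edgeSet) : Sym2 V), hf a⟩
    have hinj : Function.Injective f := by
      rintro (_ | a) (_ | b) h
      · rfl
      · exact absurd (congrArg Subtype.val h).symm (map_inl_ne_newE _)
      · exact absurd (congrArg Subtype.val h) (map_inl_ne_newE _)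
      · have h1 : ((θ a : H.edgeSet) : Sym2 V) = ((θ b : H.edgeSet) : Sym2 V) :=
          Sym2.map.injective Sum.inl_injective (congrArg Subtype.val h)
        have : θ a = θ b := Subtype.ext h1
        exact congrArg _ (θ.toEquiv.injective this)
    have hsurj : Function.Surjective f := by
      rintro ⟨e, he⟩
      rcases (mem_bigH_edgeSet H).mp he with ⟨s, hs, hmap⟩ | rfl
      · refine ⟨some (θ.symm ⟨s, hs⟩), ?_⟩
        apply Subtype.ext
        show Sym2.map Sum.inl ((θ (θ.symm ⟨s, hs⟩) : H.edgeSet) : Sym2 V) = e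
        rw [RelIso.apply_symm_apply]
        exact hmap
      · exact ⟨none, rfl⟩
    refine ⟨Equiv.ofBijective f ⟨hinj, hsurj⟩, ?_⟩
    intro x y
    rw [show (Equiv.ofBijective f ⟨hinj, hsurj⟩) x = f x from rfl,
      show (Equiv.ofBijective f ⟨hinj, hsurj⟩) y = f y from rfl]
    have hfn : f none = ⟨newE V, newE_mem H⟩ := rfl
    have hfs : ∀ c : α,
        f (some c) = ⟨Sym2.map Sum.inl ((θ c : H.edgeSet) : Sym2 V), hf c⟩ := fun _ => rfl
    cases x with
    | none =>
      cases y with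
      | none =>
        rw [hfn]
        constructor
        · rintro ⟨h, -⟩
          exact absurd rfl h
        · intro h
          rw [SimpleGraph.map_adj] at h
          obtain ⟨a', b', -, ha, -⟩ := h
          exact absurd ha (by simp)
      | some b =>
        rw [hfn, hfs]
        constructor
        · rintro ⟨-, h | h⟩
          · exfalso
            rcases h with ⟨v, hv1, hv2⟩
            rcases Sym2.mem_map.mp hv2 with ⟨w, -, rfl⟩
            exact newE_not_mem_inl hv1
          · exfalso
            rw [bigφ_map, bigφ_newE] at h
            exact absurd h (Fin.castSucc_lt_last _).ne'
        · intro h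
          rw [SimpleGraph.map_adj] at h
          obtain ⟨a', b', -, ha, -⟩ := h
          exact absurd ha (by simp)
    | some a =>
      cases y with
      | none =>
        rw [hfn, hfs]
        constructor
        · rintro ⟨-, h | h⟩
          · exfalso
            rcases h with ⟨v, hv1, hv2⟩
            rcases Sym2.mem_map.mp hv1 with ⟨w, -, rfl⟩
            exact newE_not_mem_inl hv2
          · exfalso
            rw [bigφ_map, bigφ_newE] at h
            exact absurd h.symm (Fin.castSucc_lt_last _).ne'
        · intro h
          rw [SimpleGraph.map_adj] at h
          obtain ⟨a', b', -, -, hb⟩ := h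
          exact absurd hb (by simp)
      | some b =>
        rw [hfs, hfs]
        have hGadj : (G.map (Function.Embedding.some : α ↪ Option α)).Adj (some a) (some b)
            ↔ G.Adj a b := by
          rw [SimpleGraph.map_adj]
          constructor
          · rintro ⟨a', b', h, ha, hb⟩
            have ha' : a' = a := Option.some_injective _ ha
            have hb' : b' = b := Option.some_injective _ hb
            subst ha'; subst hb'
            exact h
          · exact fun h => ⟨a, b, h, rfl, rfl⟩
        rw [hGadj, ← θ.map_rel_iff]
        show ((colorLineGraph (bigH H) (bigφ H φ)).Adj _ _) ↔ (colorLineGraph H φ).Adj (θ a) (θ b)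
        constructor
        · rintro ⟨hne, h | h⟩
          · refine ⟨fun he => hne (by
              apply Subtype.ext
              have h1 := congrArg (fun t : H.edgeSet => (Sym2.map Sum.inl (t : Sym2 V) : Sym2 (V ⊕ Bool))) he
              exact h1), Or.inl ?_⟩
            rcases h with ⟨v, hv1, hv2⟩
            rcases Sym2.mem_map.mp hv1 with ⟨w, hw, hvw⟩
            rcases Sym2.mem_map.mp hv2 with ⟨w', hw', hvw'⟩
            refine ⟨w, hw, ?_⟩
            have hww : w' = w := Sum.inl_injective (hvw'.trans hvw.symm)
            exact hww ▸ hw'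
          · refine ⟨fun he => hne (by
              apply Subtype.ext
              have h1 := congrArg (fun t : H.edgeSet => (Sym2.map Sum.inl (t : Sym2 V) : Sym2 (V ⊕ Bool))) he
              exact h1), Or.inr ?_⟩
            rw [bigφ_map, bigφ_map] at h
            exact Fin.castSucc_inj.mp h
        · rintro ⟨hne, h | h⟩
          · refine ⟨?_, Or.inl ?_⟩
            · intro he
              apply hne
              apply Subtype.ext
              exact Sym2.map.injective Sum.inl_injective (congrArg Subtype.val he)
            · rcases h with ⟨v, hv1, hv2⟩
              exact ⟨Sum.inl v, Sym2.mem_map.mpr ⟨v, hv1, rfl⟩, Sym2.mem_map.mpr ⟨v, hv2, rfl⟩⟩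
          · refine ⟨?_, Or.inr ?_⟩
            · intro he
              apply hne
              apply Subtype.ext
              exact Sym2.map.injective Sum.inl_injective (congrArg Subtype.val he)
            · rw [bigφ_map, bigφ_map]
              exact congrArg Fin.castSucc h
  · rintro ⟨V, instV, H, φ, ⟨θ⟩⟩
    -- `θ none` is an isolated vertex in the color-line graph
    set e0 : H.edgeSet := θ none with he0
    have hiso : ∀ f : H.edgeSet, f ≠ e0 → ¬ (colorLineGraph H φ).Adj e0 f := by
      intro f hf hadj
      have : (colorLineGraph H φ).Adj (θ none) (θ (θ.symm f)) := by
        rwa [RelIso.apply_symm_apply]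
      rw [θ.map_rel_iff] at this
      rw [SimpleGraph.map_adj] at this
      obtain ⟨a, b, -, ha, -⟩ := this
      exact Option.some_ne_none a ha
    refine ⟨V, instV, smallH H e0, smallφ H φ e0 hiso, ⟨?_⟩⟩
    have hmem : ∀ a : α, ((θ (some a) : H.edgeSet) : Sym2 V) ∈ (smallH H e0).edgeSet := by
      intro a
      rw [mem_smallH_edgeSet]
      refine ⟨(θ (some a)).2, fun h => ?_⟩
      have : θ (some a) = e0 := Subtype.ext h
      rw [he0] at this
      exact Option.some_ne_none a (θ.toEquiv.injective this)
    let f : α → (smallH H e0).edgeSet := fun a => ⟨((θ (some a) : H.edgeSet) : Sym2 V), hmem a⟩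
    have hinj : Function.Injective f := by
      intro a b h
      have h1 := congrArg Subtype.val h
      exact Option.some_injective _ (θ.toEquiv.injective (Subtype.ext h1))
    have hsurj : Function.Surjective f := by
      rintro g
      have hne : liftE H e0 g ≠ e0 := liftE_ne H e0 g
      rcases ho : θ.symm (liftE H e0 g) with _ | a
      · exfalso
        apply hne
        have h2 := congrArg θ ho
        rw [RelIso.apply_symm_apply] at h2
        exact h2.trans he0.symm
      · refine ⟨a, ?_⟩
        apply Subtype.ext
        have h2 := congrArg θ ho
        rw [RelIso.apply_symm_apply] at h2
        show ((θ (some a) : H.edgeSet) : Sym2 V) = (g : Sym2 V)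
        rw [← h2]
        rfl
    refine ⟨Equiv.ofBijective f ⟨hinj, hsurj⟩, ?_⟩
    intro a b
    rw [show (Equiv.ofBijective f ⟨hinj, hsurj⟩) a = f a from rfl,
      show (Equiv.ofBijective f ⟨hinj, hsurj⟩) b = f b from rfl]
    have hf' : ∀ c : α, f c = ⟨((θ (some c) : H.edgeSet) : Sym2 V), hmem c⟩ := fun _ => rfl
    rw [hf' a, hf' b]
    have hGadj : (G.map (Function.Embedding.some : α ↪ Option α)).Adj (some a) (some b)
        ↔ G.Adj a b := by
      rw [SimpleGraph.map_adj]
      constructor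
      · rintro ⟨a', b', h, ha, hb⟩
        have ha' : a' = a := Option.some_injective _ ha
        have hb' : b' = b := Option.some_injective _ hb
        subst ha'; subst hb'
        exact h
      · exact fun h => ⟨a, b, h, rfl, rfl⟩
    rw [show G.Adj a b ↔ _ from hGadj.symm, ← θ.map_rel_iff]
    have hlift : ∀ c : α, ∀ hm : ((θ (some c) : H.edgeSet) : Sym2 V) ∈ (smallH H e0).edgeSet,
        liftE H e0 ⟨((θ (some c) : H.edgeSet) : Sym2 V), hm⟩ = θ (some c) :=
      fun _ _ => Subtype.ext rfl
    show (colorLineGraph (smallH H e0) (smallφ H φ e0 hiso)).Adj _ _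
      ↔ (colorLineGraph H φ).Adj (θ (some a)) (θ (some b))
    constructor
    · rintro ⟨hne, h | h⟩
      · refine ⟨?_, Or.inl h⟩
        intro he
        apply hne
        apply Subtype.ext
        have h1 := congrArg Subtype.val he
        exact h1
      · refine ⟨?_, Or.inr ?_⟩
        · intro he
          apply hne
          apply Subtype.ext
          have h1 := congrArg Subtype.val he
          exact h1
        · rw [smallφ_eq_iff, hlift, hlift] at h
          exact h
    · rintro ⟨hne, h | h⟩
      · refine ⟨?_, Or.inl h⟩
        intro he
        apply hne
        apply Subtype.ext
        have h1 := congrArg Subtype.val he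
        exact h1
      · refine ⟨?_, Or.inr ?_⟩
        · intro he
          apply hne
          apply Subtype.ext
          have h1 := congrArg Subtype.val he
          exact h1
        · rw [smallφ_eq_iff, hlift, hlift]
          exact h
end

section
/- For every integer k ≥ 1, a finite simple graph G is a proper k-color-line graph if and only if the vertex set of G admits a partition into at most k cliques, V(G) = Q1 ∪ … ∪ Qk, such that the graph obtained from G by deleting, for each i, all edges with both endpoints in Qi is a line graph. -/
open SimpleGraph

lemma colorLineGraph_adj {V C : Type*} (H : SimpleGraph V) (φ : H.edgeSet → C)
    (e f : H.edgeSet) :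
    (colorLineGraph H φ).Adj e f ↔ e ≠ f ∧
      ((∃ v, v ∈ (e : Sym2 V) ∧ v ∈ (f : Sym2 V)) ∨ φ e = φ f) := Iff.rfl

/-- `G` is a proper `k`-color-line graph iff `V(G)` has a partition into at most `k`
cliques such that deleting all edges inside the parts leaves a line graph. -/
theorem properKColorLine_iff_cliquePartition {α : Type} [Fintype α] (k : ℕ) (hk : 1 ≤ k)
    (G : SimpleGraph α) :
    IsProperKColorLineGraph k G ↔
      ∃ Q : Fin k → Set α,
        (∀ i, G.IsClique (Q i)) ∧
        (∀ v : α, ∃! i, v ∈ Q i) ∧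
        IsLineGraph (G.deleteEdges {e : Sym2 α | ∃ i, ∀ x ∈ e, x ∈ Q i}) := by
  constructor
  · rintro ⟨V, instV, H, φ, hφ, ⟨σ⟩⟩
    refine ⟨fun i => {v | φ (σ v) = i}, ?_, ?_, ?_⟩
    · intro i u hu v hv huv
      refine σ.map_adj_iff.mp ?_
      exact ⟨fun h => huv (σ.injective h), Or.inr (hu.trans hv.symm)⟩
    · exact fun v => ⟨φ (σ v), rfl, fun y hy => hy.symm⟩
    · refine ⟨V, instV, H, ⟨⟨σ.toEquiv, ?_⟩⟩⟩
      intro u v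
      simp only [RelIso.coe_fn_toEquiv]
      rw [lineGraph_adj_iff_exists, deleteEdges_adj]
      constructor
      · rintro ⟨hne, hsh⟩
        refine ⟨σ.map_adj_iff.mp ⟨hne, Or.inl hsh⟩, ?_⟩
        rintro ⟨i, hall⟩
        rw [Sym2.ball] at hall
        exact hφ (σ u) (σ v) hne hsh (hall.1.trans hall.2.symm)
      · rintro ⟨hadj, hnS⟩
        obtain ⟨hne, hor⟩ := σ.map_adj_iff.mpr hadj
        refine ⟨hne, ?_⟩
        rcases hor with hsh | hc
        · exact hsh
        · exact absurd ⟨φ (σ u), Sym2.ball.mpr ⟨rfl, hc.symm⟩⟩ hnS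
  · rintro ⟨Q, hclique, hpart, V, instV, H, ⟨τ⟩⟩
    classical
    set part : α → Fin k := fun v => (hpart v).choose with hpartdef
    have hmem : ∀ v, v ∈ Q (part v) := fun v => (hpart v).choose_spec.1
    have huniq : ∀ v i, v ∈ Q i → part v = i :=
      fun v i h => ((hpart v).choose_spec.2 i h).symm
    have sameS : ∀ u v : α,
        s(u, v) ∈ {e : Sym2 α | ∃ i, ∀ x ∈ e, x ∈ Q i} ↔ part u = part v := by
      intro u v
      constructor
      · rintro ⟨i, hall⟩
        rw [Sym2.ball] at hall
        exact (huniq u i hall.1).trans (huniq v i hall.2).symm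
      · intro h
        exact ⟨part u, Sym2.ball.mpr ⟨hmem u, h ▸ hmem v⟩⟩
    refine ⟨V, instV, H, fun e => part (τ.symm e), ?_, ?_⟩
    · intro e f hef hsh
      have hadj := τ.symm.map_adj_iff.mpr (lineGraph_adj_iff_exists.mpr ⟨hef, hsh⟩)
      rw [deleteEdges_adj] at hadj
      intro hc
      exact hadj.2 ((sameS _ _).mpr hc)
    · refine ⟨⟨τ.toEquiv, ?_⟩⟩
      intro u v
      simp only [RelIso.coe_fn_toEquiv]
      rw [colorLineGraph_adj]
      have hφu : part (τ.symm (τ u)) = part u := by rw [RelIso.symm_apply_apply]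
      have hφv : part (τ.symm (τ v)) = part v := by rw [RelIso.symm_apply_apply]
      constructor
      · rintro ⟨hne, hor⟩
        rcases hor with hsh | hc
        · exact (deleteEdges_adj.mp (τ.map_adj_iff.mp
            (lineGraph_adj_iff_exists.mpr ⟨hne, hsh⟩))).1
        · rw [hφu, hφv] at hc
          have huv : u ≠ v := fun h => hne (by rw [h])
          exact hclique (part u) (hmem u) (hc ▸ hmem v) huv
      · intro hadj
        have hne : τ u ≠ τ v := fun h => hadj.ne (τ.injective h)
        by_cases hp : part u = part v
        · exact ⟨hne, Or.inr (by rw [hφu, hφv, hp])⟩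
        · have hnS : s(u, v) ∉ {e : Sym2 α | ∃ i, ∀ x ∈ e, x ∈ Q i} :=
            fun h => hp ((sameS u v).mp h)
          have := lineGraph_adj_iff_exists.mp (τ.map_adj_iff.mpr
            (deleteEdges_adj.mpr ⟨hadj, hnS⟩))
          exact ⟨hne, Or.inl this.2⟩
end

section
/- Let k ≥ 1 be an integer, let G be a proper k-color-line graph, and let Q be a maximal clique of G with at least k + 4 vertices. Then the induced subgraph G − Q, obtained by deleting the vertices of Q, is a proper (k−1)-color-line graph. -/
open SimpleGraph

section Key
variable {V : Type} {k : ℕ} {H : SimpleGraph V} {φ : H.edgeSet → Fin k}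

/-- In a clique, two distinct edges of distinct colors share an endpoint. -/
lemma clique_share (hp : IsProperEdgeColoring H φ) {S : Finset H.edgeSet}
    (hcl : ∀ e ∈ S, ∀ f ∈ S, e ≠ f → (colorLineGraph H φ).Adj e f)
    {e f : H.edgeSet} (he : e ∈ S) (hf : f ∈ S) (hne : e ≠ f) (hc : φ e ≠ φ f) :
    ∃ v, v ∈ (e : Sym2 V) ∧ v ∈ (f : Sym2 V) := by
  rcases (hcl e he f hf hne).2 with h | h
  · exact h
  · exact absurd h hc

/-- In a clique, two distinct edges of the same color are disjoint. -/
lemma clique_disj (hp : IsProperEdgeColoring H φ) {S : Finset H.edgeSet}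
    (hcl : ∀ e ∈ S, ∀ f ∈ S, e ≠ f → (colorLineGraph H φ).Adj e f)
    {e f : H.edgeSet} (he : e ∈ S) (hf : f ∈ S) (hne : e ≠ f) (hc : φ e = φ f) :
    ¬ ∃ v, v ∈ (e : Sym2 V) ∧ v ∈ (f : Sym2 V) := by
  intro hsh
  exact hp e f hne hsh hc

lemma key_mono (hp : IsProperEdgeColoring H φ) (S : Finset H.edgeSet)
    (hcl : ∀ e ∈ S, ∀ f ∈ S, e ≠ f → (colorLineGraph H φ).Adj e f)
    (hcard : k + 4 ≤ S.card) : ∃ c, ∀ e ∈ S, φ e = c := by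
  classical
  -- Step 1: some color appears at least 3 times
  have step1 : ∃ c, 3 ≤ (S.filter (fun e => φ e = c)).card := by
    by_contra hno
    push_neg at hno
    have hfib : ∀ c, (S.filter (fun e => φ e = c)).card ≤ 2 := fun c => by
      have := hno c; omega
    -- a repeated color exists
    have hsum : S.card = ∑ c : Fin k, (S.filter (fun e => φ e = c)).card :=
      Finset.card_eq_sum_card_fiberwise (fun e _ => Finset.mem_univ (φ e))
    have hrep : ∃ c0, 2 ≤ (S.filter (fun e => φ e = c0)).card := by
      by_contra hnr
      push_neg at hnr
      have h1 : ∑ c : Fin k, (S.filter (fun e => φ e = c)).card ≤ ∑ _c : Fin k, 1 :=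
        Finset.sum_le_sum (fun c _ => by have := hnr c; omega)
      have h2 : ∑ _c : Fin k, (1:ℕ) = k := by simp
      omega
    obtain ⟨c0, hc0⟩ := hrep
    have hc0' : 1 < (S.filter (fun e => φ e = c0)).card := by omega
    obtain ⟨e1, he1, e2, he2, hne12⟩ := Finset.one_lt_card.mp hc0'
    simp only [Finset.mem_filter] at he1 he2
    -- e1, e2 disjoint, same color c0
    have hdisj := clique_disj hp hcl he1.1 he2.1 hne12 (he1.2.trans he2.2.symm)
    obtain ⟨a, b, hab⟩ : ∃ a b, (e1 : Sym2 V) = s(a, b) := ⟨_, _, (e1 : Sym2 V).exists_rep.choose_spec.symm⟩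
    obtain ⟨u, v, huv⟩ : ∃ u v, (e2 : Sym2 V) = s(u, v) := ⟨_, _, (e2 : Sym2 V).exists_rep.choose_spec.symm⟩
    have hab' : a ≠ b := by
      have h := e1.2; rw [hab, SimpleGraph.mem_edgeSet] at h; exact h.ne
    have huv' : u ≠ v := by
      have h := e2.2; rw [huv, SimpleGraph.mem_edgeSet] at h; exact h.ne
    have hau : a ≠ u := fun h => hdisj ⟨a, by simp [hab], by simp [huv, h]⟩
    have hav : a ≠ v := fun h => hdisj ⟨a, by simp [hab], by simp [huv, h]⟩
    have hbu : b ≠ u := fun h => hdisj ⟨b, by simp [hab], by simp [huv, h]⟩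
    have hbv : b ≠ v := fun h => hdisj ⟨b, by simp [hab], by simp [huv, h]⟩
    -- the fiber of c0 is exactly {e1, e2}
    have hfib0 : ∀ f ∈ S, φ f = c0 → f = e1 ∨ f = e2 := by
      intro f hf hfc
      by_contra hcon
      push_neg at hcon
      have hsub : ({e1, e2, f} : Finset H.edgeSet) ⊆ S.filter (fun e => φ e = c0) := by
        intro x hx
        simp only [Finset.mem_insert, Finset.mem_singleton] at hx
        rcases hx with rfl | rfl | rfl <;>
          simp [Finset.mem_filter, he1.1, he1.2, he2.1, he2.2, hf, hfc]
      have hcard3 : ({e1, e2, f} : Finset H.edgeSet).card = 3 := by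
        rw [Finset.card_insert_of_notMem (by simp [hne12, Ne.symm hcon.1]),
            Finset.card_insert_of_notMem (by simp [Ne.symm hcon.2]), Finset.card_singleton]
      have := Finset.card_le_card hsub
      have := hfib c0
      omega
    -- any other edge of S is a "cross" edge
    have hcross : ∀ f ∈ S, f ≠ e1 → f ≠ e2 →
        (f : Sym2 V) = s(a,u) ∨ (f : Sym2 V) = s(a,v) ∨
        (f : Sym2 V) = s(b,u) ∨ (f : Sym2 V) = s(b,v) := by
      intro f hf hf1 hf2
      have hfc : φ f ≠ c0 := fun h => (hfib0 f hf h).elim hf1 hf2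
      obtain ⟨w1, hw11, hw12⟩ := clique_share hp hcl hf he1.1 hf1 (by rw [he1.2]; exact hfc)
      obtain ⟨w2, hw21, hw22⟩ := clique_share hp hcl hf he2.1 hf2 (by rw [he2.2]; exact hfc)
      obtain ⟨x, y, hxy⟩ : ∃ x y, (f : Sym2 V) = s(x, y) :=
        ⟨_, _, (f : Sym2 V).exists_rep.choose_spec.symm⟩
      rw [hxy, Sym2.mem_iff] at hw11 hw21
      rw [hab, Sym2.mem_iff] at hw12
      rw [huv, Sym2.mem_iff] at hw22
      rw [hxy]
      rcases hw11 with rfl | rfl <;> rcases hw21 with rfl | rfl <;>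
        rcases hw12 with rfl | rfl <;> rcases hw22 with h | h <;>
        simp_all [Sym2.eq_swap]
    set T := S.filter (fun (f : H.edgeSet) => (f : Sym2 V) = s(a,u) ∨ (f : Sym2 V) = s(a,v) ∨
        (f : Sym2 V) = s(b,u) ∨ (f : Sym2 V) = s(b,v)) with hT
    have hScover : S ⊆ insert e1 (insert e2 T) := by
      intro f hf
      simp only [Finset.mem_insert]
      by_cases h1 : f = e1
      · exact Or.inl h1
      by_cases h2 : f = e2
      · exact Or.inr (Or.inl h2)
      exact Or.inr (Or.inr (Finset.mem_filter.mpr ⟨hf, hcross f hf h1 h2⟩))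
    have hTcard4 : T.card ≤ 4 := by
      have hsub : T.image Subtype.val ⊆ {s(a,u), s(a,v), s(b,u), s(b,v)} := by
        intro x hx
        simp only [Finset.mem_image] at hx
        obtain ⟨f, hf, rfl⟩ := hx
        have h := (Finset.mem_filter.mp hf).2
        simpa [Finset.mem_insert, Finset.mem_singleton] using h
      have h1 : T.card = (T.image Subtype.val).card :=
        (Finset.card_image_of_injective _ Subtype.val_injective).symm
      have h2 := Finset.card_le_card hsub
      have h3 : ({s(a,u), s(a,v), s(b,u), s(b,v)} : Finset (Sym2 V)).card ≤ 4 := by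
        have i1 := Finset.card_insert_le s(a,u) ({s(a,v), s(b,u), s(b,v)} : Finset (Sym2 V))
        have i2 := Finset.card_insert_le s(a,v) ({s(b,u), s(b,v)} : Finset (Sym2 V))
        have i3 := Finset.card_insert_le s(b,u) ({s(b,v)} : Finset (Sym2 V))
        have i4 : ({s(b,v)} : Finset (Sym2 V)).card = 1 := Finset.card_singleton _
        omega
      omega
    have hTc0 : ∀ f ∈ T, φ f ≠ c0 := by
      intro f hf
      obtain ⟨hfS, hcr⟩ := Finset.mem_filter.mp hf
      have hfne1 : f ≠ e1 := by
        intro h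
        rw [h, hab] at hcr
        rcases hcr with h' | h' | h' | h' <;> rw [Sym2.eq_iff] at h' <;> tauto
      have hsh : ∃ w, w ∈ (f : Sym2 V) ∧ w ∈ (e1 : Sym2 V) := by
        rcases hcr with h | h | h | h
        · exact ⟨a, by rw [h]; simp, by rw [hab]; simp⟩
        · exact ⟨a, by rw [h]; simp, by rw [hab]; simp⟩
        · exact ⟨b, by rw [h]; simp, by rw [hab]; simp⟩
        · exact ⟨b, by rw [h]; simp, by rw [hab]; simp⟩
      intro hc
      exact hp f e1 hfne1 hsh (by rw [hc, he1.2])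
    have hTsum : T.card = ∑ c : Fin k, (T.filter (fun e => φ e = c)).card :=
      Finset.card_eq_sum_card_fiberwise (fun e _ => Finset.mem_univ (φ e))
    have hfib0T : (T.filter (fun e => φ e = c0)).card = 0 := by
      rw [Finset.card_eq_zero, Finset.filter_eq_empty_iff]
      intro f hf
      exact hTc0 f hf
    have hkey : ∑ c : Fin k, (T.filter (fun e => φ e = c)).card ≤ 2 * (k - 1) := by
      rw [← Finset.add_sum_erase _ _ (Finset.mem_univ c0), hfib0T, zero_add]
      have hb : ∀ c ∈ Finset.univ.erase c0, (T.filter (fun e => φ e = c)).card ≤ 2 := by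
        intro c _
        have h1 : (T.filter (fun e => φ e = c)).card ≤ (S.filter (fun e => φ e = c)).card :=
          Finset.card_le_card (Finset.filter_subset_filter _ (Finset.filter_subset _ _))
        have := hfib c
        omega
      have := Finset.sum_le_card_nsmul (Finset.univ.erase c0) _ 2 hb
      rw [Finset.card_erase_of_mem (Finset.mem_univ c0)] at this
      simp only [smul_eq_mul, Finset.card_univ, Fintype.card_fin] at this
      omega
    have hScard : S.card ≤ T.card + 2 := by
      have h := Finset.card_le_card hScover
      have i1 := Finset.card_insert_le e1 (insert e2 T)
      have i2 := Finset.card_insert_le e2 T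
      omega
    have hk2 : 1 ≤ k := by
      by_contra h
      have : k = 0 := by omega
      subst this
      exact (Nat.not_lt_zero _ (φ e1).2).elim
    omega
  -- Step 2: all edges of S have the same color
  obtain ⟨c0, hc0⟩ := step1
  refine ⟨c0, ?_⟩
  have hc0' : 1 < (S.filter (fun e => φ e = c0)).card := by omega
  obtain ⟨e1, he1, e2, he2, hne12⟩ := Finset.one_lt_card.mp hc0'
  have hne : (((S.filter (fun e => φ e = c0)).erase e1).erase e2).Nonempty := by
    rw [← Finset.card_pos, Finset.card_erase_of_mem, Finset.card_erase_of_mem he1]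
    · omega
    · exact Finset.mem_erase.mpr ⟨hne12.symm, he2⟩
  obtain ⟨e3, he3'⟩ := hne
  obtain ⟨hne32, he3''⟩ := Finset.mem_erase.mp he3'
  obtain ⟨hne31, he3⟩ := Finset.mem_erase.mp he3''
  simp only [Finset.mem_filter] at he1 he2 he3
  have hd12 := clique_disj hp hcl he1.1 he2.1 hne12 (he1.2.trans he2.2.symm)
  have hd13 := clique_disj hp hcl he1.1 he3.1 (Ne.symm hne31) (he1.2.trans he3.2.symm)
  have hd23 := clique_disj hp hcl he2.1 he3.1 (Ne.symm hne32) (he2.2.trans he3.2.symm)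
  intro f hf
  by_contra hfc
  have hf1 : f ≠ e1 := fun h => hfc (h ▸ he1.2)
  have hf2 : f ≠ e2 := fun h => hfc (h ▸ he2.2)
  have hf3 : f ≠ e3 := fun h => hfc (h ▸ he3.2)
  obtain ⟨w1, hw1f, hw1e⟩ := clique_share hp hcl hf he1.1 hf1 (by rw [he1.2]; exact hfc)
  obtain ⟨w2, hw2f, hw2e⟩ := clique_share hp hcl hf he2.1 hf2 (by rw [he2.2]; exact hfc)
  obtain ⟨w3, hw3f, hw3e⟩ := clique_share hp hcl hf he3.1 hf3 (by rw [he3.2]; exact hfc)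
  obtain ⟨x, y, hxy⟩ : ∃ x y, (f : Sym2 V) = s(x, y) :=
    ⟨_, _, (f : Sym2 V).exists_rep.choose_spec.symm⟩
  rw [hxy, Sym2.mem_iff] at hw1f hw2f hw3f
  rcases hw1f with rfl | rfl <;> rcases hw2f with h2 | h2 <;> rcases hw3f with h3 | h3 <;>
    first
      | exact hd12 ⟨_, hw1e, h2 ▸ hw2e⟩
      | exact hd13 ⟨_, hw1e, h3 ▸ hw3e⟩
      | exact hd23 ⟨_, h2 ▸ hw2e, h3 ▸ hw3e⟩

end Key

/-- If `G` is a proper `k`-color-line graph and `Q` is a maximal clique of `G` with at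
least `k + 4` vertices, then `G − Q` is a proper `(k−1)`-color-line graph. -/
theorem removal_of_big_maximal_clique {α : Type} [Fintype α] (k : ℕ) (hk : 1 ≤ k)
    (G : SimpleGraph α) (hG : IsProperKColorLineGraph k G)
    (Q : Finset α) (hclique : G.IsClique (Q : Set α))
    (hmax : ∀ R : Finset α, G.IsClique (R : Set α) → Q ⊆ R → R = Q)
    (hcard : k + 4 ≤ Q.card) :
    IsProperKColorLineGraph (k - 1) (G.induce ((Q : Set α)ᶜ)) := by
  classical
  obtain ⟨V, instV, H, φ, hp, ⟨ψ⟩⟩ := hG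
  -- transfer Q to a clique of edges
  set S : Finset H.edgeSet := Q.map ψ.toEquiv.toEmbedding with hS
  have hScl : ∀ e ∈ S, ∀ f ∈ S, e ≠ f → (colorLineGraph H φ).Adj e f := by
    intro e he f hf hef
    rw [hS] at he hf
    obtain ⟨x, hx, rfl⟩ := Finset.mem_map.mp he
    obtain ⟨y, hy, rfl⟩ := Finset.mem_map.mp hf
    exact ψ.map_adj_iff.mpr
      (hclique (Finset.mem_coe.mpr hx) (Finset.mem_coe.mpr hy)
        (fun h => hef (by rw [h])))
  have hScard : k + 4 ≤ S.card := by rw [hS, Finset.card_map]; exact hcard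
  obtain ⟨c0, hmono⟩ := key_mono hp S hScl hScard
  have hmemS : ∀ x ∈ Q, (ψ x : H.edgeSet) ∈ S := by
    intro x hx
    rw [hS]
    exact Finset.mem_map_of_mem _ hx
  -- maximality: Q is exactly the fiber of c0
  set R : Finset α := Finset.univ.filter (fun x => φ (ψ x) = c0) with hR
  have hRcl : G.IsClique (R : Set α) := by
    intro x hx y hy hne
    rw [Finset.mem_coe, hR, Finset.mem_filter] at hx hy
    apply ψ.map_adj_iff.mp
    exact ⟨fun h => hne (ψ.toEquiv.injective h), Or.inr (hx.2.trans hy.2.symm)⟩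
  have hQR : Q ⊆ R := by
    intro x hx
    rw [hR, Finset.mem_filter]
    exact ⟨Finset.mem_univ x, hmono _ (hmemS x hx)⟩
  have hRQ : R = Q := hmax R hRcl hQR
  have hQiff : ∀ x : α, x ∈ Q ↔ φ (ψ x) = c0 := by
    intro x
    constructor
    · exact fun hx => hmono _ (hmemS x hx)
    · intro h
      rw [← hRQ, hR, Finset.mem_filter]
      exact ⟨Finset.mem_univ x, h⟩
  -- the new graph: delete the edges of color c0
  set D : Set (Sym2 V) := {x | ∃ h : x ∈ H.edgeSet, φ ⟨x, h⟩ = c0} with hD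
  set H' : SimpleGraph V := H.deleteEdges D with hH'
  have hedge : ∀ x : Sym2 V, x ∈ H'.edgeSet ↔ ∃ h : x ∈ H.edgeSet, φ ⟨x, h⟩ ≠ c0 := by
    intro x
    rw [hH', edgeSet_deleteEdges]
    constructor
    · rintro ⟨hx, hnd⟩
      exact ⟨hx, fun hc => hnd ⟨hx, hc⟩⟩
    · rintro ⟨hx, hc⟩
      refine ⟨hx, ?_⟩
      rintro ⟨hx', hc'⟩
      exact hc hc'
  let toOrig : H'.edgeSet → H.edgeSet := fun e => ⟨e.1, ((hedge e.1).mp e.2).choose⟩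
  have htoOrig_val : ∀ e : H'.edgeSet, ((toOrig e : H.edgeSet) : Sym2 V) = (e : Sym2 V) :=
    fun e => rfl
  have hφne : ∀ e : H'.edgeSet, φ (toOrig e) ≠ c0 := fun e => ((hedge e.1).mp e.2).choose_spec
  let φ' : H'.edgeSet → Fin (k - 1) := fun e =>
    if h : (φ (toOrig e) : ℕ) < (c0 : ℕ) then
      ⟨φ (toOrig e), by have := c0.isLt; omega⟩
    else
      ⟨(φ (toOrig e) : ℕ) - 1, by
        have h1 := (φ (toOrig e)).isLt
        have h2 := c0.isLt
        have hne : (φ (toOrig e) : ℕ) ≠ (c0 : ℕ) := fun hh => hφne e (Fin.ext hh)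
        omega⟩
  have hφ'iff : ∀ e f : H'.edgeSet, φ' e = φ' f ↔ φ (toOrig e) = φ (toOrig f) := by
    intro e f
    constructor
    · intro h
      have hv := congrArg Fin.val h
      simp only [φ'] at hv
      have hne1 : (φ (toOrig e) : ℕ) ≠ (c0 : ℕ) := fun hh => hφne e (Fin.ext hh)
      have hne2 : (φ (toOrig f) : ℕ) ≠ (c0 : ℕ) := fun hh => hφne f (Fin.ext hh)
      split_ifs at hv <;> simp only [] at hv <;> exact Fin.ext (by omega)
    · intro h
      simp only [φ', h]
  -- properness of the new coloring
  have hp' : IsProperEdgeColoring H' φ' := by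
    intro e f hne hsh hcc
    have h1 : φ (toOrig e) = φ (toOrig f) := (hφ'iff e f).mp hcc
    have h2 : toOrig e ≠ toOrig f := by
      intro h
      apply hne
      apply Subtype.ext
      rw [← htoOrig_val e, ← htoOrig_val f, h]
    exact hp (toOrig e) (toOrig f) h2 (by
      obtain ⟨v, hv1, hv2⟩ := hsh
      exact ⟨v, by rw [htoOrig_val]; exact hv1, by rw [htoOrig_val]; exact hv2⟩) h1
  -- the isomorphism
  let E1 : {x : α // x ∈ ((Q : Set α)ᶜ)} ≃ {e : H.edgeSet // φ e ≠ c0} :=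
    ψ.toEquiv.subtypeEquiv (fun x => by
      simp only [Set.mem_compl_iff, Finset.mem_coe]
      exact not_congr (hQiff x))
  let E2 : {e : H.edgeSet // φ e ≠ c0} ≃ H'.edgeSet :=
    { toFun := fun e => ⟨e.1.1, (hedge e.1.1).mpr ⟨e.1.2, e.2⟩⟩
      invFun := fun e => ⟨toOrig e, hφne e⟩
      left_inv := fun e => Subtype.ext (Subtype.ext rfl)
      right_inv := fun e => Subtype.ext rfl }
  refine ⟨V, instV, H', φ', hp', ⟨?_⟩⟩
  refine ⟨E1.trans E2, ?_⟩
  intro a b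
  have hvalE : ∀ x : {x : α // x ∈ ((Q : Set α)ᶜ)},
      (((E1.trans E2) x : H'.edgeSet) : Sym2 V) = ((ψ x.1 : H.edgeSet) : Sym2 V) := fun x => rfl
  have htoE : ∀ x : {x : α // x ∈ ((Q : Set α)ᶜ)},
      toOrig ((E1.trans E2) x) = ψ x.1 := fun x => Subtype.ext rfl
  constructor
  · rintro ⟨hne, h⟩
    show (G.induce ((Q : Set α)ᶜ)).Adj a b
    have hGadj : G.Adj a.1 b.1 := by
      apply ψ.map_adj_iff.mp
      refine ⟨?_, ?_⟩
      · intro hh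
        apply hne
        apply Subtype.ext
        rw [hvalE, hvalE, hh]
      · rcases h with ⟨v, hv1, hv2⟩ | h
        · exact Or.inl ⟨v, by rw [← hvalE a]; exact hv1, by rw [← hvalE b]; exact hv2⟩
        · right
          have := (hφ'iff _ _).mp h
          rwa [htoE, htoE] at this
    exact hGadj
  · intro hadj
    have hGadj : G.Adj a.1 b.1 := hadj
    have hCL : (colorLineGraph H φ).Adj (ψ a.1) (ψ b.1) := ψ.map_adj_iff.mpr hGadj
    obtain ⟨hne, h⟩ := hCL
    refine ⟨?_, ?_⟩
    · intro hh
      apply hne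
      apply Subtype.ext
      have hvv := Subtype.ext_iff.mp hh
      rwa [hvalE, hvalE] at hvv
    · rcases h with ⟨v, hv1, hv2⟩ | h
      · exact Or.inl ⟨v, by rw [hvalE a]; exact hv1, by rw [hvalE b]; exact hv2⟩
      · right
        rw [hφ'iff, htoE, htoE]
        exact h
end
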